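/- arXiv:2207.11371 — 5 statements merged into one kernel-verified Lean document; each statement's English description precedes it below -/
import Mathlib

section
/- Let G = (ℝ^d, ·) be a group with polynomial multiplication and inversion and identity 0, and let (φ_t)_{t>0} be straight dilations forming an approximate group dilation structure for G, with limit law ∙ and with x∙⁻¹ := lim_{t→∞} φ_{1/t}((φ_t(x))⁻¹). Then (ℝ^d, ∙) is a group with identity element 0 whose inversion map is x ↦ x∙⁻¹ (that is, x∙⁻¹ ∙ x = x ∙ x∙⁻¹ = 0 for all x, and ∙ is associative with x∙0 = 0∙x = x); moreover for every t > 0 and all x,y ∈ ℝ^d one has φ_t(x∙y) = φ_t(x) ∙ φ_t(y), and lim_{t→∞} φ_{1/t}(φ_t(x)⁻¹ · φ_t(y)) = x∙⁻¹ ∙ y. -/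
open Filter Topology MeasureTheory

noncomputable section

/-- Straight dilation with exponents `a`: `(dil a t u) i = t ^ (a i) * u i`. -/
def dil {d : ℕ} (a : Fin d → ℝ) (t : ℝ) (u : Fin d → ℝ) : Fin d → ℝ :=
  fun i => t ^ a i * u i

/-- A group structure on `ℝ^d` with identity `0` whose multiplication and inversion are
given coordinatewise by real polynomial functions of the coordinates. -/
structure PolyGroup (d : ℕ) where
  mul : (Fin d → ℝ) → (Fin d → ℝ) → (Fin d → ℝ)
  inv : (Fin d → ℝ) → (Fin d → ℝ)
  mul_assoc' : ∀ x y z, mul (mul x y) z = mul x (mul y z)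
  mul_zero' : ∀ x, mul x 0 = x
  zero_mul' : ∀ x, mul 0 x = x
  mul_inv' : ∀ x, mul x (inv x) = 0
  inv_mul' : ∀ x, mul (inv x) x = 0
  poly_mul : ∀ i, ∃ p : MvPolynomial (Fin d ⊕ Fin d) ℝ,
    ∀ x y, mul x y i = MvPolynomial.eval (Sum.elim x y) p
  poly_inv : ∀ i, ∃ p : MvPolynomial (Fin d) ℝ,
    ∀ x, inv x i = MvPolynomial.eval x p

/-- Euclidean norm on `ℝ^d`. -/
def eucNorm {d : ℕ} (x : Fin d → ℝ) : ℝ := Real.sqrt (∑ i, x i ^ 2)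

/-- A straight approximate group dilation structure for `G`, with the limit law `bullet`
and limit inverse `bulletInv`. -/
structure ApproxDil (d : ℕ) (G : PolyGroup d) where
  a : Fin d → ℝ
  a_pos : ∀ i, 0 < a i
  bulletInv : (Fin d → ℝ) → (Fin d → ℝ)
  bullet : (Fin d → ℝ) → (Fin d → ℝ) → (Fin d → ℝ)
  tendsto_inv : ∀ x,
    Tendsto (fun t : ℝ => dil a t⁻¹ (G.inv (dil a t x))) atTop (𝓝 (bulletInv x))
  tendsto_mul : ∀ x y,
    Tendsto (fun t : ℝ => dil a t⁻¹ (G.mul (dil a t x) (dil a t y))) atTop (𝓝 (bullet x y))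

namespace StmtAux

open scoped Classical

/-! ### Basic facts about dilations -/

lemma dil_zero {d : ℕ} (a : Fin d → ℝ) (t : ℝ) : dil a t 0 = 0 := by
  funext i; simp [dil]

lemma dil_one {d : ℕ} (a : Fin d → ℝ) (u : Fin d → ℝ) : dil a 1 u = u := by
  funext i; simp [dil, Real.one_rpow]

lemma dil_dil {d : ℕ} (a : Fin d → ℝ) {t s : ℝ} (ht : 0 < t) (hs : 0 < s) (x : Fin d → ℝ) :
    dil a t (dil a s x) = dil a (t * s) x := by
  funext i
  simp only [dil, Real.mul_rpow ht.le hs.le]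
  ring

lemma dil_cancel {d : ℕ} (a : Fin d → ℝ) {t : ℝ} (ht : 0 < t) (x : Fin d → ℝ) :
    dil a t (dil a t⁻¹ x) = x := by
  rw [dil_dil a ht (inv_pos.mpr ht), mul_inv_cancel₀ ht.ne', dil_one]

lemma dil_cancel' {d : ℕ} (a : Fin d → ℝ) {t : ℝ} (ht : 0 < t) (x : Fin d → ℝ) :
    dil a t⁻¹ (dil a t x) = x := by
  rw [dil_dil a (inv_pos.mpr ht) ht, inv_mul_cancel₀ ht.ne', dil_one]

lemma continuous_dil {d : ℕ} (a : Fin d → ℝ) (s : ℝ) : Continuous (dil a s) :=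
  continuous_pi fun i => (continuous_const.mul (continuous_apply i))

/-! ### Sums of real powers -/

lemma rpow_sum_eq {t : ℝ} (ht : 0 < t) {ι : Type*} (s : Finset ι) (f : ι → ℝ) :
    t ^ (∑ j ∈ s, f j) = ∏ j ∈ s, t ^ f j := by
  induction s using Finset.induction with
  | empty => simp
  | insert _ _ h ih => rw [Finset.sum_insert h, Finset.prod_insert h, Real.rpow_add ht, ih]

lemma sum_rpow_coeff_eq_zero {ι : Type*} :
    ∀ (n : ℕ) (s : Finset ι), s.card ≤ n → ∀ (e b : ι → ℝ) (L : ℝ),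
      Tendsto (fun t : ℝ => ∑ k ∈ s, b k * t ^ e k) atTop (𝓝 L) →
      ∀ r : ℝ, 0 < r → ∑ k ∈ s.filter (fun k => e k = r), b k = 0 := by
  intro n
  induction n with
  | zero =>
    intro s hs e b L _ r _
    rw [Finset.card_eq_zero.mp (Nat.le_zero.mp hs)]
    simp
  | succ n ih =>
    intro s hs e b L hL r hr
    rcases s.eq_empty_or_nonempty with rfl | hne
    · simp
    set R := s.sup' hne e with hR
    by_cases hRpos : 0 < R
    · -- first: coefficient sum at level R vanishes
      have hmax : ∀ k ∈ s, e k ≤ R := fun k hk => Finset.le_sup' e hk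
      have h0 : Tendsto (fun t : ℝ => (∑ k ∈ s, b k * t ^ e k) * t ^ (-R)) atTop (𝓝 (L * 0)) :=
        hL.mul (tendsto_rpow_neg_atTop hRpos)
      have hcong : (fun t : ℝ => ∑ k ∈ s, b k * t ^ (e k - R)) =ᶠ[atTop]
          (fun t : ℝ => (∑ k ∈ s, b k * t ^ e k) * t ^ (-R)) := by
        filter_upwards [eventually_gt_atTop (0:ℝ)] with t ht
        rw [Finset.sum_mul]
        refine Finset.sum_congr rfl fun k _ => ?_
        rw [mul_assoc, ← Real.rpow_add ht]
        ring_nf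
      have h1 : Tendsto (fun t : ℝ => ∑ k ∈ s, b k * t ^ (e k - R)) atTop
          (𝓝 (∑ k ∈ s, if e k = R then b k else 0)) := by
        refine tendsto_finset_sum s fun k hk => ?_
        by_cases hek : e k = R
        · simp only [hek, sub_self, if_pos]
          simp [Real.rpow_zero]
        · have hlt : e k - R < 0 := sub_neg.mpr (lt_of_le_of_ne (hmax k hk) hek)
          simp only [hek, if_neg, not_false_iff]
          have : Tendsto (fun t : ℝ => t ^ (e k - R)) atTop (𝓝 0) := by
            have := tendsto_rpow_neg_atTop (y := R - e k) (by linarith)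
            convert this using 2 with t
            ring_nf
          simpa using (tendsto_const_nhds (x := b k)).mul this
      have hRzero : ∑ k ∈ s.filter (fun k => e k = R), b k = 0 := by
        have := tendsto_nhds_unique (h1.congr' hcong) h0
        rw [mul_zero] at this
        rw [Finset.sum_filter]
        exact this
      -- now strip off the R-level
      have hsplit : ∀ t : ℝ, ∑ k ∈ s, b k * t ^ e k
          = ∑ k ∈ s.filter (fun k => ¬ e k = R), b k * t ^ e k := by
        intro t
        rw [← Finset.sum_filter_add_sum_filter_not s (fun k => e k = R)]
        have : ∑ k ∈ s.filter (fun k => e k = R), b k * t ^ e k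
            = (∑ k ∈ s.filter (fun k => e k = R), b k) * t ^ R := by
          rw [Finset.sum_mul]
          refine Finset.sum_congr rfl fun k hk => ?_
          rw [(Finset.mem_filter.mp hk).2]
        rw [this, hRzero, zero_mul, zero_add]
      obtain ⟨k0, hk0, hk0R⟩ := Finset.exists_mem_eq_sup' hne e
      have hcard : (s.filter (fun k => ¬ e k = R)).card ≤ n := by
        have hlt : (s.filter (fun k => ¬ e k = R)).card < s.card := by
          refine Finset.card_lt_card ?_
          refine ⟨Finset.filter_subset _ _, fun hsub => ?_⟩
          have := hsub hk0
          rw [Finset.mem_filter] at this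
          exact this.2 hk0R.symm
        omega
      have hL' : Tendsto (fun t : ℝ => ∑ k ∈ s.filter (fun k => ¬ e k = R), b k * t ^ e k)
          atTop (𝓝 L) := hL.congr fun t => hsplit t
      have hres := ih (s.filter (fun k => ¬ e k = R)) hcard e b L hL' r hr
      by_cases hrR : r = R
      · rw [hrR]; exact hRzero
      · rw [Finset.filter_filter] at hres
        have : s.filter (fun k => ¬ e k = R ∧ e k = r) = s.filter (fun k => e k = r) := by
          refine Finset.filter_congr fun k _ => ?_
          constructor
          · exact fun h => h.2
          · exact fun h => ⟨fun hh => hrR (h ▸ hh), h⟩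
        rw [this] at hres
        exact hres
    · -- all exponents ≤ R ≤ 0 < r : filter empty
      have : s.filter (fun k => e k = r) = ∅ := by
        refine Finset.filter_eq_empty_iff.mpr fun k hk => ?_
        have := Finset.le_sup' e hk
        push_neg at hRpos
        intro h; rw [h] at this; linarith
      simp [this]

/-! ### Expansion of the rescaled multiplication -/

/-- weight of a monomial -/
def wt {d : ℕ} (a : Fin d → ℝ) (m : (Fin d ⊕ Fin d) →₀ ℕ) : ℝ :=
  ∑ j ∈ m.support, Sum.elim a a j * m j

lemma elim_dil {d : ℕ} (a : Fin d → ℝ) (t : ℝ) (x y : Fin d → ℝ) :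
    Sum.elim (dil a t x) (dil a t y) = fun j => t ^ Sum.elim a a j * Sum.elim x y j := by
  funext j; cases j <;> rfl

lemma expand {d : ℕ} (a : Fin d → ℝ) (p : MvPolynomial (Fin d ⊕ Fin d) ℝ) (i : Fin d)
    {t : ℝ} (ht : 0 < t) (x y : Fin d → ℝ) :
    t⁻¹ ^ a i * MvPolynomial.eval (Sum.elim (dil a t x) (dil a t y)) p
      = ∑ m ∈ p.support,
          (MvPolynomial.coeff m p * ∏ j ∈ m.support, Sum.elim x y j ^ m j)
            * t ^ (wt a m - a i) := by
  rw [MvPolynomial.eval_eq, elim_dil, Finset.mul_sum]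
  refine Finset.sum_congr rfl fun m _ => ?_
  have hprod : ∏ j ∈ m.support, (t ^ Sum.elim a a j * Sum.elim x y j) ^ m j
      = t ^ wt a m * ∏ j ∈ m.support, Sum.elim x y j ^ m j := by
    rw [wt, rpow_sum_eq ht, ← Finset.prod_mul_distrib]
    refine Finset.prod_congr rfl fun j _ => ?_
    rw [mul_pow, ← Real.rpow_natCast (t ^ Sum.elim a a j) (m j), ← Real.rpow_mul ht.le]
  rw [hprod]
  have h1 : t⁻¹ ^ a i = t ^ (-a i) := by
    rw [Real.rpow_neg ht.le, Real.inv_rpow ht.le]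
  have h2 : t ^ (wt a m - a i) = t ^ (-a i) * t ^ wt a m := by
    rw [← Real.rpow_add ht]; ring_nf
  rw [h1, h2]; ring

/-! ### No positive exponents can occur -/

lemma no_pos_exponent {d : ℕ} (a : Fin d → ℝ) (i : Fin d)
    (p : MvPolynomial (Fin d ⊕ Fin d) ℝ)
    (hconv : ∀ x y : Fin d → ℝ, ∃ L : ℝ,
      Tendsto (fun t : ℝ => t⁻¹ ^ a i * MvPolynomial.eval (Sum.elim (dil a t x) (dil a t y)) p)
        atTop (𝓝 L)) :
    ∀ m ∈ p.support, wt a m ≤ a i := by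
  by_contra hcon
  push_neg at hcon
  obtain ⟨m0, hm0, hm0gt⟩ := hcon
  set r : ℝ := wt a m0 - a i with hrdef
  have hr : 0 < r := by simp [hrdef]; linarith
  have key : ∀ x y : Fin d → ℝ,
      ∑ m ∈ p.support.filter (fun m => wt a m - a i = r),
        MvPolynomial.coeff m p * ∏ j ∈ m.support, Sum.elim x y j ^ m j = 0 := by
    intro x y
    obtain ⟨L, hL⟩ := hconv x y
    have hL' : Tendsto (fun t : ℝ =>
        ∑ m ∈ p.support,
          (MvPolynomial.coeff m p * ∏ j ∈ m.support, Sum.elim x y j ^ m j)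
            * t ^ (wt a m - a i)) atTop (𝓝 L) := by
      refine hL.congr' ?_
      filter_upwards [eventually_gt_atTop (0:ℝ)] with t ht
      exact expand a p i ht x y
    exact sum_rpow_coeff_eq_zero p.support.card p.support le_rfl _ _ L hL' r hr
  set q : MvPolynomial (Fin d ⊕ Fin d) ℝ :=
    ∑ m ∈ p.support.filter (fun m => wt a m - a i = r),
      MvPolynomial.monomial m (MvPolynomial.coeff m p) with hq
  have hqz : q = 0 := by
    apply MvPolynomial.funext
    intro z
    have hz : Sum.elim (fun j => z (Sum.inl j)) (fun j => z (Sum.inr j)) = z := by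
      funext j; cases j <;> rfl
    rw [map_sum, map_zero]
    have := key (fun j => z (Sum.inl j)) (fun j => z (Sum.inr j))
    rw [hz] at this
    rw [← this]
    refine Finset.sum_congr rfl fun m _ => ?_
    rw [MvPolynomial.eval_monomial]
    rw [Finsupp.prod]
  have : MvPolynomial.coeff m0 q = MvPolynomial.coeff m0 p := by
    rw [hq, MvPolynomial.coeff_sum]
    rw [Finset.sum_eq_single m0]
    · rw [MvPolynomial.coeff_monomial, if_pos rfl]
    · intro m hm hne
      rw [MvPolynomial.coeff_monomial, if_neg hne]
    · intro hnot
      exfalso; exact hnot (Finset.mem_filter.mpr ⟨hm0, rfl⟩)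
  rw [hqz, MvPolynomial.coeff_zero] at this
  exact (MvPolynomial.mem_support_iff.mp hm0) this.symm

/-! ### Core convergence with moving arguments -/

lemma coreTendsto {d : ℕ} (a : Fin d → ℝ) (i : Fin d)
    (p : MvPolynomial (Fin d ⊕ Fin d) ℝ)
    (he : ∀ m ∈ p.support, wt a m ≤ a i)
    {u v : ℝ → Fin d → ℝ} {x y : Fin d → ℝ}
    (hu : Tendsto u atTop (𝓝 x)) (hv : Tendsto v atTop (𝓝 y)) :
    Tendsto (fun t : ℝ =>
        t⁻¹ ^ a i * MvPolynomial.eval (Sum.elim (dil a t (u t)) (dil a t (v t))) p)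
      atTop (𝓝 (∑ m ∈ p.support, if wt a m = a i then
        MvPolynomial.coeff m p * ∏ j ∈ m.support, Sum.elim x y j ^ m j else 0)) := by
  have hz : Tendsto (fun t => Sum.elim (u t) (v t)) atTop (𝓝 (Sum.elim x y)) := by
    rw [tendsto_pi_nhds]
    intro j
    cases j with
    | inl j => exact (tendsto_pi_nhds.mp hu) j
    | inr j => exact (tendsto_pi_nhds.mp hv) j
  have hsum : Tendsto (fun t : ℝ => ∑ m ∈ p.support,
      (MvPolynomial.coeff m p * ∏ j ∈ m.support, Sum.elim (u t) (v t) j ^ m j)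
        * t ^ (wt a m - a i)) atTop
      (𝓝 (∑ m ∈ p.support, if wt a m = a i then
        MvPolynomial.coeff m p * ∏ j ∈ m.support, Sum.elim x y j ^ m j else 0)) := by
    refine tendsto_finset_sum _ fun m hm => ?_
    have hc : Tendsto (fun t : ℝ =>
        MvPolynomial.coeff m p * ∏ j ∈ m.support, Sum.elim (u t) (v t) j ^ m j) atTop
        (𝓝 (MvPolynomial.coeff m p * ∏ j ∈ m.support, Sum.elim x y j ^ m j)) := by
      refine tendsto_const_nhds.mul ?_
      refine tendsto_finset_prod _ fun j _ => ?_
      exact ((tendsto_pi_nhds.mp hz) j).pow (m j)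
    by_cases hw : wt a m = a i
    · rw [if_pos hw]
      refine hc.congr fun t => ?_
      rw [hw, sub_self, Real.rpow_zero, mul_one]
    · rw [if_neg hw]
      have hlt : wt a m - a i < 0 := sub_neg.mpr (lt_of_le_of_ne (he m hm) hw)
      have ht0 : Tendsto (fun t : ℝ => t ^ (wt a m - a i)) atTop (𝓝 0) := by
        have := tendsto_rpow_neg_atTop (y := a i - wt a m) (by linarith)
        convert this using 2 with t
        ring_nf
      simpa using hc.mul ht0
  refine hsum.congr' ?_
  filter_upwards [eventually_gt_atTop (0:ℝ)] with t ht
  exact (expand a p i ht (u t) (v t)).symm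

/-! ### The master lemma -/

lemma master {d : ℕ} (G : PolyGroup d) (D : ApproxDil d G)
    {u v : ℝ → Fin d → ℝ} {x y : Fin d → ℝ}
    (hu : Tendsto u atTop (𝓝 x)) (hv : Tendsto v atTop (𝓝 y)) :
    Tendsto (fun t : ℝ => dil D.a t⁻¹ (G.mul (dil D.a t (u t)) (dil D.a t (v t))))
      atTop (𝓝 (D.bullet x y)) := by
  rw [tendsto_pi_nhds]
  intro i
  obtain ⟨p, hp⟩ := G.poly_mul i
  have hcoord : ∀ (w z : ℝ → Fin d → ℝ) (t : ℝ),
      dil D.a t⁻¹ (G.mul (dil D.a t (w t)) (dil D.a t (z t))) i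
        = t⁻¹ ^ D.a i * MvPolynomial.eval (Sum.elim (dil D.a t (w t)) (dil D.a t (z t))) p := by
    intro w z t
    simp only [dil, hp]
  have he : ∀ m ∈ p.support, wt D.a m ≤ D.a i := by
    refine no_pos_exponent D.a i p fun x' y' => ⟨D.bullet x' y' i, ?_⟩
    have := (tendsto_pi_nhds.mp (D.tendsto_mul x' y')) i
    refine this.congr fun t => hcoord (fun _ => x') (fun _ => y') t
  have hconst := coreTendsto D.a i p he
      (u := fun _ => x) (v := fun _ => y) tendsto_const_nhds tendsto_const_nhds
  have hbul : Tendsto (fun t : ℝ =>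
      t⁻¹ ^ D.a i * MvPolynomial.eval (Sum.elim (dil D.a t x) (dil D.a t y)) p)
      atTop (𝓝 (D.bullet x y i)) := by
    have := (tendsto_pi_nhds.mp (D.tendsto_mul x y)) i
    refine this.congr fun t => hcoord (fun _ => x) (fun _ => y) t
  have hval : D.bullet x y i = ∑ m ∈ p.support, if wt D.a m = D.a i then
      MvPolynomial.coeff m p * ∏ j ∈ m.support, Sum.elim x y j ^ m j else 0 :=
    tendsto_nhds_unique hbul hconst
  rw [hval]
  have := coreTendsto D.a i p he hu hv
  refine this.congr fun t => (hcoord u v t).symm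

end StmtAux

open StmtAux in
theorem stmt_1 (d : ℕ) (G : PolyGroup d) (D : ApproxDil d G) :
    (∀ x y z, D.bullet (D.bullet x y) z = D.bullet x (D.bullet y z)) ∧
    (∀ x, D.bullet x 0 = x) ∧ (∀ x, D.bullet 0 x = x) ∧
    (∀ x, D.bullet (D.bulletInv x) x = 0) ∧ (∀ x, D.bullet x (D.bulletInv x) = 0) ∧
    (∀ t : ℝ, 0 < t → ∀ x y,
      dil D.a t (D.bullet x y) = D.bullet (dil D.a t x) (dil D.a t y)) ∧
    (∀ x y, Tendsto (fun t : ℝ => dil D.a t⁻¹ (G.mul (G.inv (dil D.a t x)) (dil D.a t y)))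
      atTop (𝓝 (D.bullet (D.bulletInv x) y))) := by
  set a := D.a with ha
  refine ⟨?_, ?_, ?_, ?_, ?_, ?_, ?_⟩
  · -- associativity
    intro x y z
    have hM : Tendsto (fun t : ℝ => dil a t⁻¹ (G.mul (dil a t x) (dil a t y))) atTop
        (𝓝 (D.bullet x y)) := D.tendsto_mul x y
    have hN : Tendsto (fun t : ℝ => dil a t⁻¹ (G.mul (dil a t y) (dil a t z))) atTop
        (𝓝 (D.bullet y z)) := D.tendsto_mul y z
    have h1 := master G D hM (tendsto_const_nhds (x := z))
    have h2 := master G D (tendsto_const_nhds (x := x)) hN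
    have h1' : Tendsto (fun t : ℝ =>
        dil a t⁻¹ (G.mul (G.mul (dil a t x) (dil a t y)) (dil a t z))) atTop
        (𝓝 (D.bullet (D.bullet x y) z)) := by
      refine h1.congr' ?_
      filter_upwards [eventually_gt_atTop (0:ℝ)] with t ht
      rw [dil_cancel a ht]
    have h2' : Tendsto (fun t : ℝ =>
        dil a t⁻¹ (G.mul (G.mul (dil a t x) (dil a t y)) (dil a t z))) atTop
        (𝓝 (D.bullet x (D.bullet y z))) := by
      refine h2.congr' ?_
      filter_upwards [eventually_gt_atTop (0:ℝ)] with t ht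
      rw [dil_cancel a ht, G.mul_assoc']
    exact tendsto_nhds_unique h1' h2'
  · -- x ∙ 0 = x
    intro x
    have h1 : Tendsto (fun t : ℝ => dil a t⁻¹ (G.mul (dil a t x) (dil a t 0))) atTop (𝓝 x) := by
      refine Tendsto.congr' ?_ (tendsto_const_nhds (x := x))
      filter_upwards [eventually_gt_atTop (0:ℝ)] with t ht
      rw [dil_zero, G.mul_zero', dil_cancel' a ht]
    exact tendsto_nhds_unique (D.tendsto_mul x 0) h1
  · -- 0 ∙ x = x
    intro x
    have h1 : Tendsto (fun t : ℝ => dil a t⁻¹ (G.mul (dil a t 0) (dil a t x))) atTop (𝓝 x) := by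
      refine Tendsto.congr' ?_ (tendsto_const_nhds (x := x))
      filter_upwards [eventually_gt_atTop (0:ℝ)] with t ht
      rw [dil_zero, G.zero_mul', dil_cancel' a ht]
    exact tendsto_nhds_unique (D.tendsto_mul 0 x) h1
  · -- left inverse
    intro x
    have h := master G D (D.tendsto_inv x) (tendsto_const_nhds (x := x))
    have h0 : Tendsto (fun t : ℝ =>
        dil a t⁻¹ (G.mul (dil a t (dil a t⁻¹ (G.inv (dil a t x)))) (dil a t x))) atTop
        (𝓝 (0 : Fin d → ℝ)) := by
      refine Tendsto.congr' ?_ (tendsto_const_nhds (x := (0 : Fin d → ℝ)))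
      filter_upwards [eventually_gt_atTop (0:ℝ)] with t ht
      rw [dil_cancel a ht, G.inv_mul', dil_zero]
    exact tendsto_nhds_unique h h0
  · -- right inverse
    intro x
    have h := master G D (tendsto_const_nhds (x := x)) (D.tendsto_inv x)
    have h0 : Tendsto (fun t : ℝ =>
        dil a t⁻¹ (G.mul (dil a t x) (dil a t (dil a t⁻¹ (G.inv (dil a t x)))))) atTop
        (𝓝 (0 : Fin d → ℝ)) := by
      refine Tendsto.congr' ?_ (tendsto_const_nhds (x := (0 : Fin d → ℝ)))
      filter_upwards [eventually_gt_atTop (0:ℝ)] with t ht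
      rw [dil_cancel a ht, G.mul_inv', dil_zero]
    exact tendsto_nhds_unique h h0
  · -- equivariance
    intro s hs x y
    have hcomp : Tendsto (fun t : ℝ => t * s) atTop atTop :=
      Tendsto.atTop_mul_const hs tendsto_id
    have h0 : Tendsto (fun t : ℝ =>
        dil a (t * s)⁻¹ (G.mul (dil a (t * s) x) (dil a (t * s) y))) atTop
        (𝓝 (D.bullet x y)) := (D.tendsto_mul x y).comp hcomp
    have h1 : Tendsto (fun t : ℝ =>
        dil a s (dil a (t * s)⁻¹ (G.mul (dil a (t * s) x) (dil a (t * s) y)))) atTop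
        (𝓝 (dil a s (D.bullet x y))) := ((continuous_dil a s).tendsto _).comp h0
    have h2 : Tendsto (fun t : ℝ =>
        dil a t⁻¹ (G.mul (dil a t (dil a s x)) (dil a t (dil a s y)))) atTop
        (𝓝 (dil a s (D.bullet x y))) := by
      refine h1.congr' ?_
      filter_upwards [eventually_gt_atTop (0:ℝ)] with t ht
      have hts : 0 < t * s := mul_pos ht hs
      rw [dil_dil a ht hs x, dil_dil a ht hs y, dil_dil a hs (inv_pos.mpr hts)]
      have hst : s * (t * s)⁻¹ = t⁻¹ := by
        field_simp
      rw [hst]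
    exact tendsto_nhds_unique h2 (D.tendsto_mul (dil a s x) (dil a s y))
  · -- last limit
    intro x y
    have h := master G D (D.tendsto_inv x) (tendsto_const_nhds (x := y))
    refine h.congr' ?_
    filter_upwards [eventually_gt_atTop (0:ℝ)] with t ht
    rw [dil_cancel a ht]
end
end

section
/- Let G = (ℝ^d, ·) be a group with polynomial multiplication and inversion and identity 0, and let (φ_t)_{t>0} be a straight approximate group dilation structure for G with limit law ∙ and limit inverse x∙⁻¹. Then for every compact set K ⊆ ℝ^d there is a constant C_K such that for all x, y ∈ K and all t ≥ 1: ‖φ_{1/t}(φ_t(x)⁻¹ · φ_t(y))‖₂ ≤ C_K ‖y − x‖₂ and ‖φ_{1/t}(φ_t(x)⁻¹ · φ_t(y))‖₂ ≤ C_K ‖x∙⁻¹ ∙ y‖₂. -/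
open Filter Topology MeasureTheory

noncomputable section
open Metric

lemma tendsto_sum_rpow (Γ : Finset ℝ) (e c : ℝ → ℝ)
    (h : ∀ γ ∈ Γ, 0 < e γ → c γ = 0) :
    Tendsto (fun t : ℝ => ∑ γ ∈ Γ, t ^ e γ * c γ) atTop
      (𝓝 (∑ γ ∈ Γ, if e γ = 0 then c γ else 0)) := by
  apply tendsto_finset_sum
  intro γ hγ
  rcases lt_trichotomy (e γ) 0 with hlt | heq | hgt
  · simp only [if_neg hlt.ne]
    have := (tendsto_rpow_neg_atTop (y := -(e γ)) (by linarith)).mul_const (c γ)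
    simpa using this
  · have : (fun t : ℝ => t ^ e γ * c γ) = fun _ => c γ := by
      funext t; rw [heq, Real.rpow_zero, one_mul]
    rw [this, if_pos heq]
    exact tendsto_const_nhds
  · simp only [if_neg hgt.ne', h γ hγ hgt, mul_zero]
    exact tendsto_const_nhds

/-- If a finite combination of real powers tends to a limit at infinity, the coefficients of
positive powers vanish. -/
lemma pos_coeff_eq_zero : ∀ (Γ : Finset ℝ) (c : ℝ → ℝ) (L : ℝ),
    Tendsto (fun t : ℝ => ∑ γ ∈ Γ, t ^ γ * c γ) atTop (𝓝 L) →
    ∀ γ ∈ Γ, 0 < γ → c γ = 0 := by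
  intro Γ
  induction Γ using Finset.strongInductionOn with
  | _ Γ ih =>
    intro c L hL γ hγ hγpos
    have hne : Γ.Nonempty := ⟨γ, hγ⟩
    set μ := Γ.max' hne with hμ
    have hμmem : μ ∈ Γ := Γ.max'_mem hne
    have hle : ∀ δ ∈ Γ, δ ≤ μ := fun δ hδ => Γ.le_max' δ hδ
    -- first show c μ = 0 when μ > 0, by dividing by t^μ
    have hcμ : 0 < μ → c μ = 0 := by
      intro hμpos
      have h1 : Tendsto (fun t : ℝ => (∑ δ ∈ Γ, t ^ δ * c δ) * t ^ (-μ)) atTop (𝓝 (L * 0)) :=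
        hL.mul (tendsto_rpow_neg_atTop hμpos)
      have h2 : (fun t : ℝ => (∑ δ ∈ Γ, t ^ δ * c δ) * t ^ (-μ)) =ᶠ[atTop]
          (fun t : ℝ => ∑ δ ∈ Γ, t ^ (δ - μ) * c δ) := by
        filter_upwards [eventually_gt_atTop (0:ℝ)] with t ht
        rw [Finset.sum_mul]
        refine Finset.sum_congr rfl fun δ hδ => ?_
        rw [mul_right_comm, ← Real.rpow_add ht, sub_eq_add_neg]
      have h3 : Tendsto (fun t : ℝ => ∑ δ ∈ Γ, t ^ (δ - μ) * c δ) atTop (𝓝 (L * 0)) :=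
        h1.congr' h2
      have h4 := tendsto_sum_rpow Γ (fun δ => δ - μ) c
        (fun δ hδ hpos => by
          have h6 : 0 < δ - μ := hpos
          exact absurd (hle δ hδ) (by linarith))
      have h5 : (∑ δ ∈ Γ, if δ - μ = 0 then c δ else 0) = c μ := by
        have hcg : ∀ δ ∈ Γ, (if δ - μ = 0 then c δ else 0) = (if δ = μ then c δ else 0) :=
          fun δ _ => by by_cases hh : δ = μ <;> simp [hh, sub_eq_zero]
        rw [Finset.sum_congr rfl hcg, Finset.sum_ite_eq' Γ μ c, if_pos hμmem]
      rw [h5] at h4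
      have := tendsto_nhds_unique h3 h4
      rw [mul_zero] at this
      exact this.symm
    rcases eq_or_ne γ μ with rfl | hγμ
    · exact hcμ hγpos
    -- else remove μ and recurse
    have hμpos : 0 < μ := lt_of_lt_of_le hγpos (hle γ hγ)
    have hcμ0 := hcμ hμpos
    have hsum : ∀ t : ℝ, (∑ δ ∈ Γ, t ^ δ * c δ) = ∑ δ ∈ Γ.erase μ, t ^ δ * c δ := by
      intro t
      rw [← Finset.sum_erase_add Γ _ hμmem, hcμ0, mul_zero, add_zero]
    have hL' : Tendsto (fun t : ℝ => ∑ δ ∈ Γ.erase μ, t ^ δ * c δ) atTop (𝓝 L) := by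
      refine hL.congr fun t => hsum t
    exact ih (Γ.erase μ) (Finset.erase_ssubset hμmem) c L hL' γ
      (Finset.mem_erase.2 ⟨hγμ, hγ⟩) hγpos

/-- If a finite combination of real powers vanishes for all `t ≥ 1`, all coefficients vanish. -/
lemma all_coeff_eq_zero : ∀ (Γ : Finset ℝ) (c : ℝ → ℝ),
    (∀ t : ℝ, 1 ≤ t → (∑ γ ∈ Γ, t ^ γ * c γ) = 0) →
    ∀ γ ∈ Γ, c γ = 0 := by
  intro Γ
  induction Γ using Finset.strongInductionOn with
  | _ Γ ih =>
    intro c h γ hγ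
    have hne : Γ.Nonempty := ⟨γ, hγ⟩
    set μ := Γ.max' hne with hμ
    have hμmem : μ ∈ Γ := Γ.max'_mem hne
    have hle : ∀ δ ∈ Γ, δ ≤ μ := fun δ hδ => Γ.le_max' δ hδ
    have hcμ : c μ = 0 := by
      have h3 : Tendsto (fun t : ℝ => ∑ δ ∈ Γ, t ^ (δ - μ) * c δ) atTop (𝓝 0) := by
        have h2 : (fun t : ℝ => ∑ δ ∈ Γ, t ^ (δ - μ) * c δ) =ᶠ[atTop] (fun _ => 0) := by
          filter_upwards [eventually_ge_atTop (1:ℝ)] with t ht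
          have ht0 : (0:ℝ) < t := lt_of_lt_of_le one_pos ht
          have : (∑ δ ∈ Γ, t ^ (δ - μ) * c δ) = (∑ δ ∈ Γ, t ^ δ * c δ) * t ^ (-μ) := by
            rw [Finset.sum_mul]
            refine Finset.sum_congr rfl fun δ hδ => ?_
            rw [mul_right_comm, ← Real.rpow_add ht0, sub_eq_add_neg]
          rw [this, h t ht, zero_mul]
        exact Tendsto.congr' h2.symm tendsto_const_nhds
      have h4 := tendsto_sum_rpow Γ (fun δ => δ - μ) c
        (fun δ hδ hpos => by
          have h6 : 0 < δ - μ := hpos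
          exact absurd (hle δ hδ) (by linarith))
      have h5 : (∑ δ ∈ Γ, if δ - μ = 0 then c δ else 0) = c μ := by
        have hcg : ∀ δ ∈ Γ, (if δ - μ = 0 then c δ else 0) = (if δ = μ then c δ else 0) :=
          fun δ _ => by by_cases hh : δ = μ <;> simp [hh, sub_eq_zero]
        rw [Finset.sum_congr rfl hcg, Finset.sum_ite_eq' Γ μ c, if_pos hμmem]
      rw [h5] at h4
      exact (tendsto_nhds_unique h3 h4).symm
    rcases eq_or_ne γ μ with rfl | hγμ
    · exact hcμ
    have h' : ∀ t : ℝ, 1 ≤ t → (∑ δ ∈ Γ.erase μ, t ^ δ * c δ) = 0 := by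
      intro t ht
      rw [← h t ht, ← Finset.sum_erase_add Γ _ hμmem, hcμ, mul_zero, add_zero]
    exact ih (Γ.erase μ) (Finset.erase_ssubset hμmem) c h' γ (Finset.mem_erase.2 ⟨hγμ, hγ⟩)


lemma eucNorm_nonneg {d : ℕ} (x : Fin d → ℝ) : 0 ≤ eucNorm x := Real.sqrt_nonneg _

lemma pi_norm_le_eucNorm {d : ℕ} (x : Fin d → ℝ) : ‖x‖ ≤ eucNorm x := by
  rw [pi_norm_le_iff_of_nonneg (eucNorm_nonneg x)]
  intro i
  have h1 : x i ^ 2 ≤ ∑ j, x j ^ 2 :=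
    Finset.single_le_sum (fun j _ => sq_nonneg (x j)) (Finset.mem_univ i)
  calc ‖x i‖ = Real.sqrt (x i ^ 2) := by rw [Real.sqrt_sq_eq_abs]; rfl
  _ ≤ eucNorm x := Real.sqrt_le_sqrt h1

lemma eucNorm_le_sqrt_mul {d : ℕ} (x : Fin d → ℝ) :
    eucNorm x ≤ Real.sqrt d * ‖x‖ := by
  have h1 : ∀ i, x i ^ 2 ≤ ‖x‖ ^ 2 := by
    intro i
    have := norm_le_pi_norm x i
    have h0 : |x i| ≤ ‖x‖ := this
    calc x i ^ 2 = |x i| ^ 2 := (sq_abs _).symm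
    _ ≤ ‖x‖ ^ 2 := by
        have := abs_nonneg (x i)
        nlinarith
  calc eucNorm x ≤ Real.sqrt (∑ _i : Fin d, ‖x‖ ^ 2) :=
        Real.sqrt_le_sqrt (Finset.sum_le_sum fun i _ => h1 i)
  _ = Real.sqrt (d * ‖x‖ ^ 2) := by rw [Finset.sum_const, Finset.card_univ, Fintype.card_fin,
        nsmul_eq_mul]
  _ = Real.sqrt d * ‖x‖ := by
        rw [Real.sqrt_mul (Nat.cast_nonneg d), Real.sqrt_sq (norm_nonneg x)]

/-- Uniform Lipschitz bound in the second variable, on closed balls, for a C¹ function. -/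
lemma lip_snd {E : Type*} [NormedAddCommGroup E] [NormedSpace ℝ E]
    (f : E × E → ℝ) (hf : ContDiff ℝ 1 f) [ProperSpace E] (R : ℝ) :
    ∃ M : ℝ, 0 ≤ M ∧ ∀ x ∈ closedBall (0:E) R, ∀ z ∈ closedBall (0:E) R,
      ∀ z' ∈ closedBall (0:E) R, |f (x, z) - f (x, z')| ≤ M * ‖z - z'‖ := by
  have hc : Continuous (fderiv ℝ f) := hf.continuous_fderiv one_ne_zero
  have hcomp : IsCompact (closedBall (0:E) R ×ˢ closedBall (0:E) R) :=
    (isCompact_closedBall 0 R).prod (isCompact_closedBall 0 R)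
  obtain ⟨C, hC⟩ := hcomp.exists_bound_of_continuousOn (hc.continuousOn)
  refine ⟨max C 0, le_max_right _ _, ?_⟩
  intro x hx z hz z' hz'
  set g : E → ℝ := fun w => f (x, w) with hg
  have hdiff : ∀ w : E, HasFDerivAt g ((fderiv ℝ f (x, w)).comp
      (ContinuousLinearMap.inr ℝ E E)) w := by
    intro w
    exact ((hf.differentiable one_ne_zero (x, w)).hasFDerivAt).comp w
      (hasFDerivAt_prodMk_right x w)
  have hb : ∀ w ∈ closedBall (0:E) R,
      ‖(fderiv ℝ f (x, w)).comp (ContinuousLinearMap.inr ℝ E E)‖ ≤ max C 0 := by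
    intro w hw
    have h1 : ‖fderiv ℝ f (x, w)‖ ≤ C := hC (x, w) (Set.mk_mem_prod hx hw)
    have h2 : ‖(ContinuousLinearMap.inr ℝ E E : E →L[ℝ] E × E)‖ ≤ 1 := by
      refine ContinuousLinearMap.opNorm_le_bound _ zero_le_one fun v => ?_
      simp [Prod.norm_def]
    calc ‖(fderiv ℝ f (x, w)).comp (ContinuousLinearMap.inr ℝ E E)‖
        ≤ ‖fderiv ℝ f (x, w)‖ * ‖(ContinuousLinearMap.inr ℝ E E : E →L[ℝ] E × E)‖ :=
          ContinuousLinearMap.opNorm_comp_le _ _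
      _ ≤ max C 0 * 1 := by
          apply mul_le_mul (le_trans h1 (le_max_left _ _)) h2 (norm_nonneg _)
            (le_max_right _ _)
      _ = max C 0 := mul_one _
  have := Convex.norm_image_sub_le_of_norm_hasFDerivWithin_le
    (f := g) (C := max C 0) (s := closedBall (0:E) R)
    (fun w hw => (hdiff w).hasFDerivWithinAt) hb (convex_closedBall _ _) hz' hz
  simpa [hg, Real.norm_eq_abs] using this



lemma contDiff_finset_prod' {E : Type*} [NormedAddCommGroup E] [NormedSpace ℝ E]
    {ι : Type*} (s : Finset ι) (f : ι → E → ℝ) (hf : ∀ i ∈ s, ContDiff ℝ 1 (f i)) :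
    ContDiff ℝ 1 (fun x => ∏ i ∈ s, f i x) := by
  classical
  induction s using Finset.cons_induction with
  | empty => simpa using contDiff_const
  | cons i s his ih =>
    simp only [Finset.prod_cons]
    exact (hf i (Finset.mem_cons_self i s)).mul
      (ih fun j hj => hf j (Finset.mem_cons_of_mem hj))

/-- Master representation lemma: `t ^ b * p(δ_t x, δ_t y)` is a finite combination of
real powers of `t` with smooth coefficients. -/
lemma master {d : ℕ} (a : Fin d → ℝ) (p : MvPolynomial (Fin d ⊕ Fin d) ℝ) (b : ℝ) :
    ∃ Γ : Finset ℝ, ∃ q : ℝ → (Fin d → ℝ) → (Fin d → ℝ) → ℝ,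
      (∀ γ, ContDiff ℝ 1 (fun xy : (Fin d → ℝ) × (Fin d → ℝ) => q γ xy.1 xy.2)) ∧
      ∀ t : ℝ, 0 < t → ∀ x y, t ^ b * MvPolynomial.eval (Sum.elim (dil a t x) (dil a t y)) p
        = ∑ γ ∈ Γ, t ^ γ * q γ x y := by
  classical
  set A : Fin d ⊕ Fin d → ℝ := Sum.elim a a with hA
  set Ex : (Fin d ⊕ Fin d →₀ ℕ) → ℝ := fun m => ∑ s ∈ m.support, (m s : ℝ) * A s with hEx
  set mono : (Fin d ⊕ Fin d →₀ ℕ) → (Fin d → ℝ) → (Fin d → ℝ) → ℝ :=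
    fun m x y => ∏ s ∈ m.support, (Sum.elim x y s) ^ (m s) with hmono
  refine ⟨p.support.image (fun m => Ex m + b),
    fun γ x y => ∑ m ∈ p.support.filter (fun m => Ex m + b = γ),
      MvPolynomial.coeff m p * mono m x y, ?_, ?_⟩
  · intro γ
    apply ContDiff.sum
    intro m _
    apply ContDiff.mul contDiff_const
    apply contDiff_finset_prod'
    intro s _
    cases s with
    | inl j => exact ((contDiff_apply ℝ ℝ j).comp contDiff_fst).pow _
    | inr j => exact ((contDiff_apply ℝ ℝ j).comp contDiff_snd).pow _
  · intro t ht x y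
    rw [MvPolynomial.eval_eq]
    have key : ∀ m : Fin d ⊕ Fin d →₀ ℕ,
        (∏ s ∈ m.support, (Sum.elim (dil a t x) (dil a t y) s) ^ (m s))
          = t ^ Ex m * mono m x y := by
      intro m
      have h1 : ∀ s, Sum.elim (dil a t x) (dil a t y) s = t ^ A s * Sum.elim x y s := by
        intro s; cases s <;> rfl
      calc (∏ s ∈ m.support, (Sum.elim (dil a t x) (dil a t y) s) ^ (m s))
          = ∏ s ∈ m.support, (t ^ ((m s : ℝ) * A s) * (Sum.elim x y s) ^ (m s)) := by
            refine Finset.prod_congr rfl fun s _ => ?_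
            rw [h1 s, mul_pow, ← Real.rpow_natCast (t ^ A s) (m s), ← Real.rpow_mul ht.le,
              mul_comm (A s)]
        _ = t ^ Ex m * mono m x y := by
            rw [Finset.prod_mul_distrib, hEx, Real.rpow_sum_of_pos ht, hmono]
    -- rewrite LHS as sum over support with exponents Ex m + b
    have lhs_eq : t ^ b * (∑ m ∈ p.support, MvPolynomial.coeff m p *
        ∏ s ∈ m.support, (Sum.elim (dil a t x) (dil a t y) s) ^ (m s))
        = ∑ m ∈ p.support, t ^ (Ex m + b) * (MvPolynomial.coeff m p * mono m x y) := by
      rw [Finset.mul_sum]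
      refine Finset.sum_congr rfl fun m _ => ?_
      rw [key m, Real.rpow_add ht]
      ring
    rw [lhs_eq]
    rw [← Finset.sum_fiberwise_of_maps_to (g := fun m => Ex m + b)
      (fun m hm => Finset.mem_image_of_mem _ hm)
      (fun m => t ^ (Ex m + b) * (MvPolynomial.coeff m p * mono m x y))]
    refine Finset.sum_congr rfl fun γ _ => ?_
    rw [Finset.mul_sum]
    refine Finset.sum_congr rfl fun m hm => ?_
    rw [(Finset.mem_filter.1 hm).2]



lemma dil_zero {d : ℕ} (a : Fin d → ℝ) (t : ℝ) : dil a t 0 = 0 := by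
  funext i; simp [dil]

lemma dil_dil_inv {d : ℕ} (a : Fin d → ℝ) {t : ℝ} (ht : 0 < t) (w : Fin d → ℝ) :
    dil a t (dil a t⁻¹ w) = w := by
  funext i
  simp only [dil]
  rw [Real.inv_rpow ht.le, ← mul_assoc, mul_inv_cancel₀ (Real.rpow_pos_of_pos ht _).ne', one_mul]

lemma dil_inv_dil {d : ℕ} (a : Fin d → ℝ) {t : ℝ} (ht : 0 < t) (w : Fin d → ℝ) :
    dil a t⁻¹ (dil a t w) = w := by
  funext i
  simp only [dil]
  rw [Real.inv_rpow ht.le, ← mul_assoc, inv_mul_cancel₀ (Real.rpow_pos_of_pos ht _).ne', one_mul]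

lemma dil_inv_apply {d : ℕ} (a : Fin d → ℝ) {t : ℝ} (ht : 0 < t) (w : Fin d → ℝ) (i : Fin d) :
    dil a t⁻¹ w i = t ^ (-(a i)) * w i := by
  show t⁻¹ ^ a i * w i = _
  rw [Real.inv_rpow ht.le, Real.rpow_neg ht.le]

lemma rep_of_poly {d : ℕ} (a : Fin d → ℝ) (f : (Fin d → ℝ) → (Fin d → ℝ) → (Fin d → ℝ))
    (hf : ∀ i, ∃ p : MvPolynomial (Fin d ⊕ Fin d) ℝ,
      ∀ x y, f x y i = MvPolynomial.eval (Sum.elim x y) p) (i : Fin d) :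
    ∃ (Γ : Finset ℝ) (q : ℝ → (Fin d → ℝ) → (Fin d → ℝ) → ℝ),
      (∀ γ, ContDiff ℝ 1 fun xy : (Fin d → ℝ) × (Fin d → ℝ) => q γ xy.1 xy.2) ∧
      ∀ t : ℝ, 0 < t → ∀ x y, dil a t⁻¹ (f (dil a t x) (dil a t y)) i
        = ∑ γ ∈ Γ, t ^ γ * q γ x y := by
  obtain ⟨p, hp⟩ := hf i
  obtain ⟨Γ, q, hq, hrep⟩ := master a p (-(a i))
  refine ⟨Γ, q, hq, fun t ht x y => ?_⟩
  rw [dil_inv_apply a ht, hp]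
  exact hrep t ht x y





open MvPolynomial in
/-- composite polynomial for `(u, w) ↦ mul (inv u) w` -/
lemma poly_comp {d : ℕ} (mul : (Fin d → ℝ) → (Fin d → ℝ) → (Fin d → ℝ)) (inv : (Fin d → ℝ) → (Fin d → ℝ))
    (pm : MvPolynomial (Fin d ⊕ Fin d) ℝ) (i : Fin d)
    (hpm : ∀ x y, mul x y i = eval (Sum.elim x y) pm)
    (pv : Fin d → MvPolynomial (Fin d) ℝ)
    (hpv : ∀ j x, inv x j = eval x (pv j)) :
    ∃ Q : MvPolynomial (Fin d ⊕ Fin d) ℝ, ∀ u w,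
      mul (inv u) w i = eval (Sum.elim u w) Q := by
  classical
  refine ⟨bind₁ (Sum.elim (fun j => rename Sum.inl (pv j)) (fun j => X (Sum.inr j))) pm, ?_⟩
  intro u w
  have he : ∀ (f : (Fin d ⊕ Fin d) → ℝ) (q : MvPolynomial (Fin d ⊕ Fin d) ℝ), aeval f q = eval f q := by
    intro f q; rw [aeval_def, eval]; rfl
  rw [← he, aeval_bind₁]
  have hfun : (fun s => aeval (Sum.elim u w)
      (Sum.elim (fun j => rename Sum.inl (pv j)) (fun j => X (Sum.inr j)) s))
      = Sum.elim (inv u) w := by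
    funext s
    cases s with
    | inl j =>
      simp only [Sum.elim_inl]
      rw [he, eval_rename, hpv]
      congr 1
    | inr j => simp
  rw [hfun, he]
  exact hpm _ _


theorem stmt_2 (d : ℕ) (G : PolyGroup d) (D : ApproxDil d G)
    (K : Set (Fin d → ℝ)) (hK : IsCompact K) :
    ∃ C : ℝ, ∀ x ∈ K, ∀ y ∈ K, ∀ t : ℝ, 1 ≤ t →
      eucNorm (dil D.a t⁻¹ (G.mul (G.inv (dil D.a t x)) (dil D.a t y))) ≤
        C * eucNorm (y - x) ∧
      eucNorm (dil D.a t⁻¹ (G.mul (G.inv (dil D.a t x)) (dil D.a t y))) ≤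
        C * eucNorm (D.bullet (D.bulletInv x) y) := by
  classical
  obtain ⟨r₁, hr₁⟩ := hK.isBounded.subset_closedBall 0
  choose ΓM qM hqM hrM using fun i => rep_of_poly D.a G.mul G.poly_mul i
  choose ΓH qH hqH hrH using fun i => rep_of_poly D.a (fun u w => G.mul (G.inv u) w)
    (fun i => by
      obtain ⟨pm, hpm⟩ := G.poly_mul i
      choose pv hpv using G.poly_inv
      exact poly_comp G.mul G.inv pm i hpm pv (fun j x => hpv j x)) i
  -- coordinatewise limits for the rescaled multiplication
  have hMlim : ∀ (x y : Fin d → ℝ) (i : Fin d),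
      Tendsto (fun t : ℝ => ∑ γ ∈ ΓM i, t ^ γ * qM i γ x y) atTop (𝓝 (D.bullet x y i)) := by
    intro x y i
    refine Tendsto.congr' ?_ (((continuous_apply i).tendsto _).comp (D.tendsto_mul x y))
    filter_upwards [eventually_gt_atTop (0:ℝ)] with t ht
    exact hrM i t ht x y
  have hposM : ∀ i x y, ∀ γ ∈ ΓM i, 0 < γ → qM i γ x y = 0 := fun i x y =>
    pos_coeff_eq_zero (ΓM i) (fun γ => qM i γ x y) (D.bullet x y i) (hMlim x y i)
  have hbM : ∀ i x y, D.bullet x y i = ∑ γ ∈ ΓM i, if γ = 0 then qM i γ x y else 0 :=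
    fun i x y => tendsto_nhds_unique (hMlim x y i)
      (tendsto_sum_rpow (ΓM i) (fun γ => γ) (fun γ => qM i γ x y) (hposM i x y))
  -- joint limit lemma for the rescaled multiplication with moving arguments
  have jointM : ∀ (u w : ℝ → (Fin d → ℝ)) (u0 w0 : Fin d → ℝ),
      Tendsto u atTop (𝓝 u0) → Tendsto w atTop (𝓝 w0) →
      Tendsto (fun t : ℝ => dil D.a t⁻¹ (G.mul (dil D.a t (u t)) (dil D.a t (w t))))
        atTop (𝓝 (D.bullet u0 w0)) := by
    intro u w u0 w0 hu hw
    rw [tendsto_pi_nhds]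
    intro i
    have hterm : ∀ γ ∈ ΓM i,
        Tendsto (fun t : ℝ => t ^ γ * qM i γ (u t) (w t)) atTop
          (𝓝 (if γ = 0 then qM i γ u0 w0 else 0)) := by
      intro γ hγ
      have hq2 : Tendsto (fun t : ℝ => qM i γ (u t) (w t)) atTop (𝓝 (qM i γ u0 w0)) :=
        (((hqM i γ).continuous).tendsto _).comp (hu.prodMk_nhds hw)
      rcases lt_trichotomy γ 0 with hlt | rfl | hgt
      · rw [if_neg hlt.ne]
        simpa using (tendsto_rpow_neg_atTop (y := -γ) (by linarith)).mul hq2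
      · rw [if_pos rfl]
        have heq : (fun t : ℝ => t ^ (0:ℝ) * qM i 0 (u t) (w t))
            = fun t => qM i 0 (u t) (w t) := by
          funext t; rw [Real.rpow_zero, one_mul]
        rw [heq]; exact hq2
      · rw [if_neg hgt.ne']
        have heq : (fun t : ℝ => t ^ γ * qM i γ (u t) (w t)) = fun _ => (0:ℝ) := by
          funext t; rw [hposM i (u t) (w t) γ hγ hgt, mul_zero]
        rw [heq]; exact tendsto_const_nhds
    have hsum := tendsto_finset_sum (ΓM i) hterm
    rw [← hbM i u0 w0] at hsum
    refine Tendsto.congr' ?_ hsum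
    filter_upwards [eventually_gt_atTop (0:ℝ)] with t ht
    exact (hrM i t ht (u t) (w t)).symm
  -- `bullet x 0 = x`
  have hx0 : ∀ x, D.bullet x 0 = x := by
    intro x
    have h1 : (fun t : ℝ => dil D.a t⁻¹ (G.mul (dil D.a t x) (dil D.a t 0))) =ᶠ[atTop]
        (fun _ => x) := by
      filter_upwards [eventually_gt_atTop (0:ℝ)] with t ht
      rw [dil_zero, G.mul_zero', dil_inv_dil D.a ht]
    exact tendsto_nhds_unique (D.tendsto_mul x 0) (Tendsto.congr' h1.symm tendsto_const_nhds)
  -- limit of the full rescaled expression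
  have hHlim : ∀ x y, Tendsto (fun t : ℝ =>
      dil D.a t⁻¹ (G.mul (G.inv (dil D.a t x)) (dil D.a t y))) atTop
      (𝓝 (D.bullet (D.bulletInv x) y)) := by
    intro x y
    have h2 := jointM (fun t => dil D.a t⁻¹ (G.inv (dil D.a t x))) (fun _ => y)
      (D.bulletInv x) y (D.tendsto_inv x) tendsto_const_nhds
    refine Tendsto.congr' ?_ h2
    filter_upwards [eventually_gt_atTop (0:ℝ)] with t ht
    rw [dil_dil_inv D.a ht]
  have hHlimi : ∀ (x y : Fin d → ℝ) (i : Fin d),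
      Tendsto (fun t : ℝ => ∑ γ ∈ ΓH i, t ^ γ * qH i γ x y) atTop
        (𝓝 (D.bullet (D.bulletInv x) y i)) := by
    intro x y i
    refine Tendsto.congr' ?_ (((continuous_apply i).tendsto _).comp (hHlim x y))
    filter_upwards [eventually_gt_atTop (0:ℝ)] with t ht
    exact hrH i t ht x y
  have hposH : ∀ i x y, ∀ γ ∈ ΓH i, 0 < γ → qH i γ x y = 0 := fun i x y =>
    pos_coeff_eq_zero (ΓH i) (fun γ => qH i γ x y) _ (hHlimi x y i)
  have hbH : ∀ i x y, D.bullet (D.bulletInv x) y i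
      = ∑ γ ∈ ΓH i, if γ = 0 then qH i γ x y else 0 := fun i x y =>
    tendsto_nhds_unique (hHlimi x y i)
      (tendsto_sum_rpow (ΓH i) (fun γ => γ) (fun γ => qH i γ x y) (hposH i x y))
  have hdiagH : ∀ i x, ∀ γ ∈ ΓH i, qH i γ x x = 0 := by
    intro i x
    apply all_coeff_eq_zero (ΓH i) (fun γ => qH i γ x x)
    intro t ht
    have ht0 : (0:ℝ) < t := lt_of_lt_of_le one_pos ht
    rw [← hrH i t ht0 x x, G.inv_mul', dil_zero]
    simp
  -- limit group identity
  have hgrp : ∀ x y, D.bullet x (D.bullet (D.bulletInv x) y) = y := by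
    intro x y
    have h2 := jointM (fun _ => x)
      (fun t => dil D.a t⁻¹ (G.mul (G.inv (dil D.a t x)) (dil D.a t y)))
      x (D.bullet (D.bulletInv x) y) tendsto_const_nhds (hHlim x y)
    have h1 : (fun t : ℝ => dil D.a t⁻¹ (G.mul (dil D.a t x)
        (dil D.a t (dil D.a t⁻¹ (G.mul (G.inv (dil D.a t x)) (dil D.a t y)))))) =ᶠ[atTop]
        (fun _ => y) := by
      filter_upwards [eventually_gt_atTop (0:ℝ)] with t ht
      rw [dil_dil_inv D.a ht, ← G.mul_assoc', G.mul_inv', G.zero_mul', dil_inv_dil D.a ht]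
    exact tendsto_nhds_unique h2 (Tendsto.congr' h1.symm tendsto_const_nhds)
  -- continuity of `(x, y) ↦ bullet (bulletInv x) y`
  have hbcont : Continuous (fun xy : (Fin d → ℝ) × (Fin d → ℝ) =>
      D.bullet (D.bulletInv xy.1) xy.2) := by
    rw [continuous_pi_iff]
    intro i
    have heq : (fun xy : (Fin d → ℝ) × (Fin d → ℝ) => D.bullet (D.bulletInv xy.1) xy.2 i)
        = fun xy => ∑ γ ∈ ΓH i, if γ = 0 then qH i γ xy.1 xy.2 else 0 := by
      funext xy; exact hbH i xy.1 xy.2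
    rw [heq]
    apply continuous_finset_sum
    intro γ _
    by_cases hγ : γ = 0
    · simp only [if_pos hγ]; exact (hqH i γ).continuous
    · simp only [if_neg hγ]; exact continuous_const
  obtain ⟨r₂, hr₂⟩ := (((hK.prod hK).image hbcont).isBounded).subset_closedBall 0
  set R := max (max r₁ r₂) 0 with hR
  have hR0 : (0:ℝ) ≤ R := le_max_right _ _
  have hKR : ∀ x ∈ K, x ∈ Metric.closedBall (0 : Fin d → ℝ) R := fun x hx =>
    Metric.closedBall_subset_closedBall (le_trans (le_max_left r₁ r₂) (le_max_left _ _)) (hr₁ hx)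
  have hbR : ∀ x ∈ K, ∀ y ∈ K,
      D.bullet (D.bulletInv x) y ∈ Metric.closedBall (0 : Fin d → ℝ) R := by
    intro x hx y hy
    refine Metric.closedBall_subset_closedBall
      (le_trans (le_max_right r₁ r₂) (le_max_left _ _)) ?_
    exact hr₂ ⟨(x, y), Set.mk_mem_prod hx hy, rfl⟩
  have h0R : (0 : Fin d → ℝ) ∈ Metric.closedBall (0 : Fin d → ℝ) R :=
    Metric.mem_closedBall_self hR0
  -- coordinatewise quantitative bound
  have hCi : ∀ i, ∃ Ci : ℝ, 0 ≤ Ci ∧ ∀ x ∈ Metric.closedBall (0 : Fin d → ℝ) R,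
      ∀ y ∈ Metric.closedBall (0 : Fin d → ℝ) R, ∀ t : ℝ, 1 ≤ t →
      |dil D.a t⁻¹ (G.mul (G.inv (dil D.a t x)) (dil D.a t y)) i| ≤ Ci * ‖y - x‖ := by
    intro i
    choose Mv hMv0 hMv using fun γ : ℝ => lip_snd _ (hqH i γ) R
    refine ⟨∑ γ ∈ ΓH i, Mv γ, Finset.sum_nonneg fun γ _ => hMv0 γ, ?_⟩
    intro x hx y hy t ht
    have ht0 : (0:ℝ) < t := lt_of_lt_of_le one_pos ht
    rw [hrH i t ht0 x y]
    calc |∑ γ ∈ ΓH i, t ^ γ * qH i γ x y| ≤ ∑ γ ∈ ΓH i, |t ^ γ * qH i γ x y| :=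
        Finset.abs_sum_le_sum_abs _ _
    _ ≤ ∑ γ ∈ ΓH i, Mv γ * ‖y - x‖ := by
        refine Finset.sum_le_sum fun γ hγ => ?_
        rcases le_or_gt γ 0 with hle | hgt
        · have h1 : |qH i γ x y - qH i γ x x| ≤ Mv γ * ‖y - x‖ := hMv γ x hx y hy x hx
          rw [hdiagH i x γ hγ, sub_zero] at h1
          have h2 : |t ^ γ| ≤ 1 := by
            rw [abs_of_nonneg (Real.rpow_nonneg ht0.le _)]
            exact Real.rpow_le_one_of_one_le_of_nonpos ht hle
          calc |t ^ γ * qH i γ x y| = |t ^ γ| * |qH i γ x y| := abs_mul _ _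
          _ ≤ 1 * (Mv γ * ‖y - x‖) := mul_le_mul h2 h1 (abs_nonneg _) zero_le_one
          _ = Mv γ * ‖y - x‖ := one_mul _
        · rw [hposH i x y γ hγ hgt, mul_zero, abs_zero]
          exact mul_nonneg (hMv0 γ) (norm_nonneg _)
    _ = (∑ γ ∈ ΓH i, Mv γ) * ‖y - x‖ := (Finset.sum_mul _ _ _).symm
  choose Ci hCi0 hCihyp using hCi
  set C₁ := ∑ i, Ci i with hC₁
  have hC₁0 : 0 ≤ C₁ := Finset.sum_nonneg fun i _ => hCi0 i
  have hC₁i : ∀ i, Ci i ≤ C₁ := fun i =>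
    Finset.single_le_sum (fun j _ => hCi0 j) (Finset.mem_univ i)
  have hH1 : ∀ x ∈ K, ∀ y ∈ K, ∀ t : ℝ, 1 ≤ t →
      ‖dil D.a t⁻¹ (G.mul (G.inv (dil D.a t x)) (dil D.a t y))‖ ≤ C₁ * ‖y - x‖ := by
    intro x hx y hy t ht
    rw [pi_norm_le_iff_of_nonneg (mul_nonneg hC₁0 (norm_nonneg _))]
    intro i
    calc ‖dil D.a t⁻¹ (G.mul (G.inv (dil D.a t x)) (dil D.a t y)) i‖
        ≤ Ci i * ‖y - x‖ := by
          rw [Real.norm_eq_abs]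
          exact hCihyp i x (hKR x hx) y (hKR y hy) t ht
      _ ≤ C₁ * ‖y - x‖ := mul_le_mul_of_nonneg_right (hC₁i i) (norm_nonneg _)
  -- Lipschitz comparison of ‖y - x‖ with ‖bullet (bulletInv x) y‖
  have hLi : ∀ i : Fin d, ∃ Li : ℝ, 0 ≤ Li ∧ ∀ x ∈ K, ∀ y ∈ K,
      |y i - x i| ≤ Li * ‖D.bullet (D.bulletInv x) y‖ := by
    intro i
    have hsm : ContDiff ℝ 1 (fun xz : (Fin d → ℝ) × (Fin d → ℝ) =>
        ∑ γ ∈ ΓM i, if γ = 0 then qM i γ xz.1 xz.2 else 0) := by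
      apply ContDiff.sum
      intro γ _
      by_cases hγ : γ = 0
      · simp only [if_pos hγ]; exact hqM i γ
      · simp only [if_neg hγ]; exact contDiff_const
    obtain ⟨Li, hLi0, hLib⟩ := lip_snd _ hsm R
    refine ⟨Li, hLi0, ?_⟩
    intro x hx y hy
    have hz := hbR x hx y hy
    have e1 : (∑ γ ∈ ΓM i, if γ = 0 then qM i γ x (D.bullet (D.bulletInv x) y) else 0)
        = y i := by
      rw [← hbM i x (D.bullet (D.bulletInv x) y), hgrp x y]
    have e2 : (∑ γ ∈ ΓM i, if γ = 0 then qM i γ x 0 else 0) = x i := by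
      rw [← hbM i x 0, hx0 x]
    have h3 : |(∑ γ ∈ ΓM i, if γ = 0 then qM i γ x (D.bullet (D.bulletInv x) y) else 0)
        - (∑ γ ∈ ΓM i, if γ = 0 then qM i γ x 0 else 0)|
        ≤ Li * ‖D.bullet (D.bulletInv x) y - 0‖ :=
      hLib x (hKR x hx) (D.bullet (D.bulletInv x) y) hz 0 h0R
    rw [e1, e2, sub_zero] at h3
    exact h3
  choose Li hLi0 hLib using hLi
  set LL := ∑ i, Li i with hLL
  have hLL0 : 0 ≤ LL := Finset.sum_nonneg fun i _ => hLi0 i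
  have hLLi : ∀ i, Li i ≤ LL := fun i =>
    Finset.single_le_sum (fun j _ => hLi0 j) (Finset.mem_univ i)
  have hL : ∀ x ∈ K, ∀ y ∈ K, ‖y - x‖ ≤ LL * ‖D.bullet (D.bulletInv x) y‖ := by
    intro x hx y hy
    rw [pi_norm_le_iff_of_nonneg (mul_nonneg hLL0 (norm_nonneg _))]
    intro i
    rw [Pi.sub_apply, Real.norm_eq_abs]
    exact le_trans (hLib i x hx y hy)
      (mul_le_mul_of_nonneg_right (hLLi i) (norm_nonneg _))
  -- conclusion
  refine ⟨Real.sqrt d * C₁ * (1 + LL), ?_⟩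
  intro x hx y hy t ht
  have hsd : (0:ℝ) ≤ Real.sqrt d := Real.sqrt_nonneg _
  have hsc : (0:ℝ) ≤ Real.sqrt d * C₁ := mul_nonneg hsd hC₁0
  have key : eucNorm (dil D.a t⁻¹ (G.mul (G.inv (dil D.a t x)) (dil D.a t y)))
      ≤ Real.sqrt d * C₁ * ‖y - x‖ := by
    calc eucNorm (dil D.a t⁻¹ (G.mul (G.inv (dil D.a t x)) (dil D.a t y)))
        ≤ Real.sqrt d * ‖dil D.a t⁻¹ (G.mul (G.inv (dil D.a t x)) (dil D.a t y))‖ :=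
          eucNorm_le_sqrt_mul _
      _ ≤ Real.sqrt d * (C₁ * ‖y - x‖) :=
          mul_le_mul_of_nonneg_left (hH1 x hx y hy t ht) hsd
      _ = Real.sqrt d * C₁ * ‖y - x‖ := (mul_assoc _ _ _).symm
  constructor
  · calc eucNorm (dil D.a t⁻¹ (G.mul (G.inv (dil D.a t x)) (dil D.a t y)))
        ≤ Real.sqrt d * C₁ * ‖y - x‖ := key
      _ ≤ Real.sqrt d * C₁ * eucNorm (y - x) :=
          mul_le_mul_of_nonneg_left (pi_norm_le_eucNorm _) hsc
      _ ≤ Real.sqrt d * C₁ * (1 + LL) * eucNorm (y - x) := by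
          have h1 : Real.sqrt d * C₁ ≤ Real.sqrt d * C₁ * (1 + LL) := by nlinarith
          exact mul_le_mul_of_nonneg_right h1 (eucNorm_nonneg _)
  · calc eucNorm (dil D.a t⁻¹ (G.mul (G.inv (dil D.a t x)) (dil D.a t y)))
        ≤ Real.sqrt d * C₁ * ‖y - x‖ := key
      _ ≤ Real.sqrt d * C₁ * (LL * ‖D.bullet (D.bulletInv x) y‖) :=
          mul_le_mul_of_nonneg_left (hL x hx y hy) hsc
      _ ≤ Real.sqrt d * C₁ * (LL * eucNorm (D.bullet (D.bulletInv x) y)) :=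
          mul_le_mul_of_nonneg_left
            (mul_le_mul_of_nonneg_left (pi_norm_le_eucNorm _) hLL0) hsc
      _ ≤ Real.sqrt d * C₁ * ((1 + LL) * eucNorm (D.bullet (D.bulletInv x) y)) :=
          mul_le_mul_of_nonneg_left
            (mul_le_mul_of_nonneg_right (by linarith) (eucNorm_nonneg _)) hsc
      _ = Real.sqrt d * C₁ * (1 + LL) * eucNorm (D.bullet (D.bulletInv x) y) := by ring
end
end

section
/- Let G = (ℝ^d, ·) be a group with polynomial multiplication and inversion and identity 0, and let (δ_t)_{t>0} with δ_t(u) = (t^{1/β₁}u₁,…,t^{1/β_d}u_d), where β₁,…,β_d ∈ (0,2), be an approximate group dilation structure for G with limit law ∙ and limit inverse x∙⁻¹. Let β ≥ max_i β_i, set β₋ = min_i β_i and β₊ = max_i β_i, and let ‖·‖ : ℝ^d → [0,∞) be a continuous function satisfying ‖δ_t(u)‖ = t^{1/β}‖u‖ for all t > 0 and u, and c·max_{1≤i≤d}|u_i|^{β_i/β} ≤ ‖u‖ ≤ C·max_{1≤i≤d}|u_i|^{β_i/β} for some constants 0 < c ≤ C and all u ∈ ℝ^d. Then for every compact set K ⊆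 ℝ^d there is a constant C_K such that for all x, y ∈ K and all t ≥ 1: ‖δ_{1/t}(δ_t(x)⁻¹ · δ_t(y))‖ ≤ C_K ‖y − x‖^{β₋/β₊} and ‖δ_{1/t}(δ_t(x)⁻¹ · δ_t(y))‖ ≤ C_K ‖x∙⁻¹ ∙ y‖^{β₋/β₊}. -/
open Filter Topology MeasureTheory

noncomputable section

open scoped Classical
open MvPolynomial


/-- Finite sums of `c k * t ^ γ k` that converge as `t → ∞` have vanishing fibers at
positive exponents. -/
lemma aux_A : ∀ (n : ℕ) {ι : Type} (s : Finset ι) (γ c : ι → ℝ) (ℓ : ℝ),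
    ((s.image γ).filter (fun g => 0 < g)).card ≤ n →
    Tendsto (fun t : ℝ => ∑ k ∈ s, c k * t ^ γ k) atTop (𝓝 ℓ) →
    ∀ r : ℝ, 0 < r → ∑ k ∈ s.filter (fun k => γ k = r), c k = 0 := by
  intro n
  induction n with
  | zero =>
    intro ι s γ c ℓ hcard _ r hr
    have hE : ((s.image γ).filter (fun g => 0 < g)) = ∅ := by
      simpa using Finset.card_eq_zero.mp (Nat.le_zero.mp hcard)
    have : s.filter (fun k => γ k = r) = ∅ := by
      apply Finset.filter_eq_empty_iff.mpr
      intro k hk hkr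
      have : γ k ∈ (s.image γ).filter (fun g => 0 < g) :=
        Finset.mem_filter.mpr ⟨Finset.mem_image_of_mem γ hk, hkr ▸ hr⟩
      simp [hE] at this
    simp [this]
  | succ n ih =>
    intro ι s γ c ℓ hcard htd r hr
    set E := (s.image γ).filter (fun g => 0 < g) with hE
    by_cases hEe : E = ∅
    · have : s.filter (fun k => γ k = r) = ∅ := by
        apply Finset.filter_eq_empty_iff.mpr
        intro k hk hkr
        have : γ k ∈ E := Finset.mem_filter.mpr ⟨Finset.mem_image_of_mem γ hk, hkr ▸ hr⟩
        simp [hEe] at this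
      simp [this]
    · have hEne : E.Nonempty := Finset.nonempty_iff_ne_empty.mpr hEe
      set g0 := E.max' hEne with hg0
      have hg0mem : g0 ∈ E := E.max'_mem hEne
      have hg0pos : 0 < g0 := (Finset.mem_filter.mp hg0mem).2
      have hle : ∀ k ∈ s, γ k ≤ g0 := by
        intro k hk
        rcases le_or_gt (γ k) 0 with h | h
        · exact h.trans hg0pos.le
        · exact E.le_max' _ (Finset.mem_filter.mpr ⟨Finset.mem_image_of_mem γ hk, h⟩)
      -- the fiber at the top exponent vanishes
      have h1 : Tendsto (fun t : ℝ => (∑ k ∈ s, c k * t ^ γ k) * t ^ (-g0)) atTop (𝓝 (ℓ * 0)) :=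
        htd.mul (tendsto_rpow_neg_atTop hg0pos)
      have h2 : ∀ᶠ t : ℝ in atTop,
          (∑ k ∈ s, c k * t ^ γ k) * t ^ (-g0) = ∑ k ∈ s, c k * t ^ (γ k - g0) := by
        filter_upwards [eventually_gt_atTop (0:ℝ)] with t ht
        rw [Finset.sum_mul]
        refine Finset.sum_congr rfl fun k _ => ?_
        rw [mul_assoc, ← Real.rpow_add ht, sub_eq_add_neg]
      have h3 : Tendsto (fun t : ℝ => ∑ k ∈ s, c k * t ^ (γ k - g0)) atTop (𝓝 (ℓ * 0)) :=
        h1.congr' h2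
      have h4 : Tendsto (fun t : ℝ => ∑ k ∈ s, c k * t ^ (γ k - g0)) atTop
          (𝓝 (∑ k ∈ s, if γ k = g0 then c k else 0)) := by
        apply tendsto_finset_sum
        intro k hk
        by_cases hkg : γ k = g0
        · simp only [hkg, sub_self, if_pos]
          simpa [Real.rpow_zero] using
            (tendsto_const_nhds (α := ℝ) (x := c k)).congr' (by
              filter_upwards [eventually_ge_atTop (0:ℝ)] with t _
              rw [Real.rpow_zero, mul_one])
        · simp only [if_neg hkg]
          have hneg : 0 < g0 - γ k := sub_pos.mpr (lt_of_le_of_ne (hle k hk) hkg)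
          have : Tendsto (fun t : ℝ => t ^ (γ k - g0)) atTop (𝓝 0) := by
            have := tendsto_rpow_neg_atTop hneg
            simpa [neg_sub] using this
          simpa using (tendsto_const_nhds (x := c k)).mul this
      have hfib0 : ∑ k ∈ s.filter (fun k => γ k = g0), c k = 0 := by
        have := tendsto_nhds_unique h4 h3
        rw [Finset.sum_filter]
        simpa using this
      -- drop the top fiber
      set s' := s.filter (fun k => ¬ γ k = g0) with hs'
      have hsplit : ∀ t : ℝ, (∑ k ∈ s', c k * t ^ γ k) = ∑ k ∈ s, c k * t ^ γ k := by
        intro t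
        have := Finset.sum_filter_add_sum_filter_not s (fun k => γ k = g0)
          (fun k => c k * t ^ γ k)
        have hfib : ∑ k ∈ s.filter (fun k => γ k = g0), c k * t ^ γ k = 0 := by
          have : ∑ k ∈ s.filter (fun k => γ k = g0), c k * t ^ γ k
              = (∑ k ∈ s.filter (fun k => γ k = g0), c k) * t ^ g0 := by
            rw [Finset.sum_mul]
            refine Finset.sum_congr rfl fun k hk => ?_
            rw [(Finset.mem_filter.mp hk).2]
          rw [this, hfib0, zero_mul]
        linarith [this]
      have htd' : Tendsto (fun t : ℝ => ∑ k ∈ s', c k * t ^ γ k) atTop (𝓝 ℓ) := by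
        simpa [funext hsplit] using htd
      have hcard' : ((s'.image γ).filter (fun g => 0 < g)).card ≤ n := by
        have hsub : (s'.image γ).filter (fun g => 0 < g) ⊆ E.erase g0 := by
          intro g hg
          rcases Finset.mem_filter.mp hg with ⟨hgim, hgpos⟩
          rcases Finset.mem_image.mp hgim with ⟨k, hk, hkg⟩
          rcases Finset.mem_filter.mp hk with ⟨hks, hkne⟩
          subst hkg
          refine Finset.mem_erase.mpr ⟨fun h => hkne h, ?_⟩
          exact Finset.mem_filter.mpr ⟨Finset.mem_image_of_mem γ hks, hgpos⟩
        calc ((s'.image γ).filter (fun g => 0 < g)).card ≤ (E.erase g0).card :=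
              Finset.card_le_card hsub
          _ ≤ E.card - 1 := le_of_eq (Finset.card_erase_of_mem hg0mem)
          _ ≤ n := by omega
      by_cases hrg : r = g0
      · exact hrg ▸ hfib0
      · have := ih s' γ c ℓ hcard' htd' r hr
        have hfeq : s.filter (fun k => γ k = r) = s'.filter (fun k => γ k = r) := by
          rw [hs', Finset.filter_filter]
          apply Finset.filter_congr
          intro k _
          constructor
          · intro h; exact ⟨h ▸ hrg, h⟩
          · intro h; exact h.2
        rw [hfeq]
        exact this

/-- If a finite sum of `c k * t ^ γ k` vanishes for all `t > 0`, then every fiber sum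
vanishes. -/
lemma aux_A' {ι : Type} (s : Finset ι) (γ c : ι → ℝ)
    (h : ∀ t : ℝ, 0 < t → ∑ k ∈ s, c k * t ^ γ k = 0) :
    ∀ r : ℝ, ∑ k ∈ s.filter (fun k => γ k = r), c k = 0 := by
  have htd : Tendsto (fun t : ℝ => ∑ k ∈ s, c k * t ^ γ k) atTop (𝓝 0) := by
    apply Tendsto.congr' _ (tendsto_const_nhds (x := (0:ℝ)))
    filter_upwards [eventually_gt_atTop (0:ℝ)] with t ht
    exact (h t ht).symm
  have hpos : ∀ r : ℝ, 0 < r → ∑ k ∈ s.filter (fun k => γ k = r), c k = 0 :=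
    aux_A _ s γ c 0 le_rfl htd
  have hneg : ∀ r : ℝ, r < 0 → ∑ k ∈ s.filter (fun k => γ k = r), c k = 0 := by
    intro r hr
    have htd' : Tendsto (fun t : ℝ => ∑ k ∈ s, c k * t ^ (-γ k)) atTop (𝓝 0) := by
      apply Tendsto.congr' _ (tendsto_const_nhds (x := (0:ℝ)))
      filter_upwards [eventually_gt_atTop (0:ℝ)] with t ht
      have h' := h t⁻¹ (inv_pos.mpr ht)
      rw [← h']
      refine (Finset.sum_congr rfl fun k _ => ?_).symm
      rw [Real.inv_rpow ht.le, ← Real.rpow_neg ht.le]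
    have := aux_A _ s (fun k => -γ k) c 0 le_rfl htd' (-r) (by linarith)
    simpa [neg_inj] using this
  intro r
  rcases lt_trichotomy r 0 with h0 | h0 | h0
  · exact hneg r h0
  · subst h0
    have htot : ∑ k ∈ s, c k = 0 := by
      have := h 1 one_pos
      simpa using this
    have hsplit := Finset.sum_filter_add_sum_filter_not s (fun k => γ k = 0) c
    have hnz : ∑ k ∈ s.filter (fun k => ¬ γ k = 0), c k = 0 := by
      have hfib := Finset.sum_fiberwise_eq_sum_filter
        (s.filter (fun k => ¬ γ k = 0)) ((s.image γ).filter (fun g => ¬ g = 0)) γ c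
      have hL : ∑ j ∈ (s.image γ).filter (fun g => ¬ g = 0),
          ∑ k ∈ (s.filter (fun k => ¬ γ k = 0)).filter (fun k => γ k = j), c k = 0 := by
        refine Finset.sum_eq_zero fun j hj => ?_
        have hj0 : ¬ j = 0 := (Finset.mem_filter.mp hj).2
        have heq : (s.filter (fun k => ¬ γ k = 0)).filter (fun k => γ k = j)
            = s.filter (fun k => γ k = j) := by
          rw [Finset.filter_filter]
          apply Finset.filter_congr
          intro k _
          constructor
          · exact fun hh => hh.2
          · exact fun hh => ⟨fun h0 => hj0 (by rw [← hh]; exact h0), hh⟩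
        rw [heq]
        rcases lt_trichotomy j 0 with hj' | hj' | hj'
        · exact hneg j hj'
        · exact absurd hj' hj0
        · exact hpos j hj'
      have hR : (s.filter (fun k => ¬ γ k = 0)).filter
            (fun k => γ k ∈ (s.image γ).filter (fun g => ¬ g = 0))
          = s.filter (fun k => ¬ γ k = 0) := by
        apply Finset.filter_true_of_mem
        intro k hk
        rcases Finset.mem_filter.mp hk with ⟨hks, hkn⟩
        exact Finset.mem_filter.mpr ⟨Finset.mem_image_of_mem γ hks, hkn⟩
      rw [hR] at hfib
      rw [← hfib, hL]
    linarith
  · exact hpos r h0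

lemma rpow_finset_sum {α : Type*} (s : Finset α) (f : α → ℝ) {t : ℝ} (ht : 0 < t) :
    ∏ v ∈ s, t ^ f v = t ^ (∑ v ∈ s, f v) := by
  classical
  induction s using Finset.induction_on with
  | empty => simp
  | insert x s' hx ih =>
                    rw [Finset.prod_insert hx, Finset.sum_insert hx, ih, ← Real.rpow_add ht]

/-- Expansion of a scaled polynomial evaluation as a finite "Laurent" sum in `t`. -/
lemma scaled_eval_expansion {σ : Type} [Fintype σ] (p : MvPolynomial σ ℝ)
    (w : σ → ℝ) (e : ℝ) :
    ∃ (s : Finset ℝ) (q : ℝ → MvPolynomial σ ℝ),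
      ∀ t : ℝ, 0 < t → ∀ z : σ → ℝ,
        t ^ (-e) * MvPolynomial.eval (fun v => t ^ w v * z v) p
          = ∑ g ∈ s, MvPolynomial.eval z (q g) * t ^ g := by
  classical
  set wt : (σ →₀ ℕ) → ℝ := fun m => (∑ v ∈ m.support, w v * (m v : ℝ)) - e with hwt
  refine ⟨p.support.image wt,
    fun g => ∑ m ∈ p.support.filter (fun m => wt m = g),
      MvPolynomial.monomial m (MvPolynomial.coeff m p), fun t ht z => ?_⟩
  have key : ∀ m : σ →₀ ℕ,
      (MvPolynomial.coeff m p * ∏ v ∈ m.support, (t ^ w v * z v) ^ m v) * t ^ (-e)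
        = (MvPolynomial.coeff m p * ∏ v ∈ m.support, z v ^ m v) * t ^ wt m := by
    intro m
    have hprod : ∏ v ∈ m.support, (t ^ w v * z v) ^ m v
        = (∏ v ∈ m.support, t ^ (w v * (m v : ℝ))) * ∏ v ∈ m.support, z v ^ m v := by
      rw [← Finset.prod_mul_distrib]
      refine Finset.prod_congr rfl fun v _ => ?_
      rw [mul_pow]
      congr 1
      rw [← Real.rpow_natCast (t ^ w v) (m v), ← Real.rpow_mul ht.le]
    rw [hprod, rpow_finset_sum _ _ ht, hwt]
    simp only []
    rw [Real.rpow_sub ht, Real.rpow_neg ht.le e]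
    ring
  calc t ^ (-e) * MvPolynomial.eval (fun v => t ^ w v * z v) p
      = ∑ m ∈ p.support, (MvPolynomial.coeff m p * ∏ v ∈ m.support, z v ^ m v) * t ^ wt m := by
        rw [MvPolynomial.eval_eq, Finset.mul_sum]
        refine Finset.sum_congr rfl fun m hm => ?_
        rw [mul_comm (t ^ (-e)) _, key m]
    _ = ∑ g ∈ p.support.image wt,
        MvPolynomial.eval z (∑ m ∈ p.support.filter (fun m => wt m = g),
          MvPolynomial.monomial m (MvPolynomial.coeff m p)) * t ^ g := by
        refine (Finset.sum_image' _ fun m hm => ?_).symm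
        rw [map_sum, Finset.sum_mul]
        refine Finset.sum_congr rfl fun m' hm' => ?_
        have hw : wt m' = wt m := (Finset.mem_filter.mp hm').2
        rw [MvPolynomial.eval_monomial, hw]
        congr 1

/-- If moreover the scaled evaluation converges for every `z` as `t → ∞`, the expansion
can be taken with nonpositive exponents only. -/
lemma scaled_eval_expansion_nonpos {σ : Type} [Fintype σ] (p : MvPolynomial σ ℝ)
    (w : σ → ℝ) (e : ℝ)
    (hconv : ∀ z : σ → ℝ, ∃ ℓ : ℝ, Tendsto
      (fun t : ℝ => t ^ (-e) * MvPolynomial.eval (fun v => t ^ w v * z v) p) atTop (𝓝 ℓ)) :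
    ∃ (s : Finset ℝ) (q : ℝ → MvPolynomial σ ℝ), (∀ g ∈ s, g ≤ 0) ∧
      ∀ t : ℝ, 0 < t → ∀ z : σ → ℝ,
        t ^ (-e) * MvPolynomial.eval (fun v => t ^ w v * z v) p
          = ∑ g ∈ s, MvPolynomial.eval z (q g) * t ^ g := by
  classical
  obtain ⟨s, q, hq⟩ := scaled_eval_expansion p w e
  have hvanish : ∀ g ∈ s, 0 < g → ∀ z, MvPolynomial.eval z (q g) = 0 := by
    intro g hg hgpos z
    obtain ⟨ℓ, hℓ⟩ := hconv z
    have htd : Tendsto (fun t : ℝ => ∑ g' ∈ s, MvPolynomial.eval z (q g') * t ^ g')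
        atTop (𝓝 ℓ) := by
      refine hℓ.congr' ?_
      filter_upwards [eventually_gt_atTop (0:ℝ)] with t ht
      exact hq t ht z
    have := aux_A ((s.image id).filter (fun g => 0 < g)).card s id
      (fun g' => MvPolynomial.eval z (q g')) ℓ le_rfl htd g hgpos
    have heq : s.filter (fun g' => id g' = g) = {g} := by
      simp only [id]
      rw [Finset.filter_eq' s g, if_pos hg]
    rw [heq, Finset.sum_singleton] at this
    exact this
  refine ⟨s.filter (fun g => g ≤ 0), q, fun g hg => (Finset.mem_filter.mp hg).2,
    fun t ht z => ?_⟩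
  rw [hq t ht z,
    ← Finset.sum_filter_add_sum_filter_not s (fun g => g ≤ 0)
      (fun g => MvPolynomial.eval z (q g) * t ^ g)]
  have : ∑ g ∈ s.filter (fun g => ¬ g ≤ 0),
      MvPolynomial.eval z (q g) * t ^ g = 0 := by
    refine Finset.sum_eq_zero fun g hg => ?_
    rcases Finset.mem_filter.mp hg with ⟨hgs, hgp⟩
    rw [hvanish g hgs (lt_of_not_ge hgp) z, zero_mul]
  rw [this, add_zero]

/-- Limit of a nonpositive-exponent expansion along any family tending to `atTop`,
allowing converging coefficients. -/
lemma tendsto_sum_rpow_s3 {α : Type*} {l : Filter α} (s : Finset ℝ) (hs : ∀ g ∈ s, g ≤ 0)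
    (τ : α → ℝ) (hτ : Tendsto τ l atTop) (c : ℝ → α → ℝ) (c0 : ℝ → ℝ)
    (hc : ∀ g ∈ s, Tendsto (fun x => c g x) l (𝓝 (c0 g))) :
    Tendsto (fun x => ∑ g ∈ s, c g x * τ x ^ g) l
      (𝓝 (∑ g ∈ s.filter (fun g => g = 0), c0 g)) := by
  classical
  rw [Finset.sum_filter]
  apply tendsto_finset_sum
  intro g hg
  by_cases hg0 : g = 0
  · subst hg0
    simp only [if_pos rfl, Real.rpow_zero]
    simpa using (hc 0 hg).mul (tendsto_const_nhds (x := (1:ℝ)))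
  · simp only [if_neg hg0]
    have hneg : 0 < -g := by
      have := hs g hg
      rcases this.lt_or_eq with h | h
      · linarith
      · exact absurd h hg0
    have h1 : Tendsto (fun x => τ x ^ g) l (𝓝 0) := by
      have := (tendsto_rpow_neg_atTop hneg).comp hτ
      simpa [neg_neg, Function.comp_def] using this
    simpa using (hc g hg).mul h1

lemma contDiff_mvpoly_eval {σ : Type} [Fintype σ] (q : MvPolynomial σ ℝ) :
    ContDiff ℝ 1 (fun z : σ → ℝ => MvPolynomial.eval z q) := by
  induction q using MvPolynomial.induction_on with
  | C a => simpa using contDiff_const (c := a)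
  | add p q hp hq => simpa [map_add] using hp.add hq
  | mul_X p n hp =>
    have hproj : ContDiff ℝ 1 (fun z : σ → ℝ => z n) :=
      (ContinuousLinearMap.proj n : (σ → ℝ) →L[ℝ] ℝ).contDiff
    simpa [map_mul] using hp.mul hproj

/-- Mean value bound on a closed ball for a `C¹` function. -/
lemma exists_lip_bound {F : Type*} [NormedAddCommGroup F] [NormedSpace ℝ F]
    [FiniteDimensional ℝ F] (f : F → ℝ) (hf : ContDiff ℝ 1 f) (R : ℝ) :
    ∃ M : ℝ, 0 ≤ M ∧ ∀ p ∈ Metric.closedBall (0 : F) R, ∀ p' ∈ Metric.closedBall (0 : F) R,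
      |f p - f p'| ≤ M * ‖p - p'‖ := by
  have hcomp : IsCompact (Metric.closedBall (0 : F) R) := isCompact_closedBall 0 R
  have hcont : ContinuousOn (fun x => fderiv ℝ f x) (Metric.closedBall (0 : F) R) :=
    (hf.continuous_fderiv one_ne_zero).continuousOn
  obtain ⟨M, hM⟩ := hcomp.exists_bound_of_continuousOn hcont
  refine ⟨max M 0, le_max_right _ _, fun p hp p' hp' => ?_⟩
  have := Convex.norm_image_sub_le_of_norm_fderiv_le
    (f := f) (C := max M 0)
    (fun x _ => (hf.differentiable one_ne_zero).differentiableAt)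
    (fun x hx => (hM x hx).trans (le_max_left _ _))
    (convex_closedBall (0 : F) R) hp' hp
  simpa [Real.norm_eq_abs] using this

/-- The key elementary estimate. -/
lemma key_estimate {d : ℕ} [NeZero d] (β : Fin d → ℝ) (b βm βp c C : ℝ)
    (hβpos : ∀ i, 0 < β i) (hble : ∀ i, β i ≤ b)
    (hβm : IsLeast (Set.range β) βm) (hβp : IsGreatest (Set.range β) βp)
    (N : (Fin d → ℝ) → ℝ) (hNnn : ∀ u, 0 ≤ N u) (hc : 0 < c) (hcC : c ≤ C)
    (hcomp : ∀ u, c * (⨆ i, |u i| ^ (β i / b)) ≤ N u ∧ N u ≤ C * (⨆ i, |u i| ^ (β i / b)))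
    (A R' : ℝ) (hA : 0 ≤ A) (hR' : 1 ≤ R') :
    ∃ CK : ℝ, 0 ≤ CK ∧ ∀ v w : Fin d → ℝ,
      (∀ i, |v i| ≤ A * ‖w‖) → ‖w‖ ≤ R' → N v ≤ CK * N w ^ (βm / βp) := by
  haveI : Nonempty (Fin d) := ⟨⟨0, Nat.pos_of_ne_zero (NeZero.ne d)⟩⟩
  obtain ⟨i₀, hi₀⟩ := hβm.1
  have hb : 0 < b := lt_of_lt_of_le (hβpos i₀) (hble i₀)
  have hβmpos : 0 < βm := hi₀ ▸ hβpos i₀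
  obtain ⟨ip, hip⟩ := hβp.1
  have hβppos : 0 < βp := hip ▸ hβpos ip
  have hβmle : ∀ i, βm ≤ β i := fun i => hβm.2 ⟨i, rfl⟩
  have hβple : ∀ i, β i ≤ βp := fun i => hβp.2 ⟨i, rfl⟩
  set θ := βm / βp with hθ
  have hθpos : 0 < θ := div_pos hβmpos hβppos
  have hCpos : 0 < C := lt_of_lt_of_le hc hcC
  -- the mini rpow lemma
  have mini : ∀ r R q Q : ℝ, 0 ≤ r → r ≤ R → 1 ≤ R → 0 ≤ q → q ≤ Q → r ^ q ≤ R ^ Q :=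
    fun r R q Q hr hrR hR hq hqQ =>
      (Real.rpow_le_rpow hr hrR hq).trans (Real.rpow_le_rpow_of_exponent_le hR hqQ)
  set maxA := max 1 A ^ (βp / b) with hmaxA
  set maxR := R' ^ (βp / b) with hmaxR
  have hmaxApos : 0 < maxA := Real.rpow_pos_of_pos (lt_of_lt_of_le one_pos (le_max_left 1 A)) _
  have hmaxRpos : 0 < maxR := Real.rpow_pos_of_pos (lt_of_lt_of_le one_pos hR') _
  have hcθpos : 0 < c ^ θ := Real.rpow_pos_of_pos hc _
  refine ⟨C * maxA * maxR / c ^ θ, by positivity, fun v w hvw hwR => ?_⟩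
  have hwnn : (0:ℝ) ≤ ‖w‖ := norm_nonneg w
  rcases eq_or_lt_of_le hwnn with hw0 | hwpos
  · -- w has norm zero, hence v = 0
    have hv0 : v = 0 := by
      funext i
      have := hvw i
      rw [← hw0, mul_zero] at this
      have := abs_nonpos_iff.mp this
      simpa using this
    have hN0 : N (0 : Fin d → ℝ) = 0 := by
      have h := (hcomp 0).2
      have : (⨆ i : Fin d, |(0 : Fin d → ℝ) i| ^ (β i / b)) = 0 := by
        have : ∀ i : Fin d, |(0 : Fin d → ℝ) i| ^ (β i / b) = 0 := fun i => by
          simp [Real.zero_rpow (ne_of_gt (div_pos (hβpos i) hb))]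
        simp only [this, ciSup_const]
      rw [this, mul_zero] at h
      exact le_antisymm h (hNnn 0)
    rw [hv0, hN0]
    exact mul_nonneg (by positivity) (Real.rpow_nonneg (hNnn w) _)
  · -- main case
    set r := ‖w‖ with hr
    have hrpos : 0 < r := hwpos
    -- pick the coordinate achieving the sup norm
    obtain ⟨j₀, hj₀⟩ := Finite.exists_max (fun j => |w j|)
    have hrj : r ≤ |w j₀| := by
      rw [hr]
      exact (pi_norm_le_iff_of_nonneg (abs_nonneg _)).mpr fun i => by
        simpa [Real.norm_eq_abs] using hj₀ i
    set E := (β j₀ / b) * θ with hEdef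
    have hEpos : 0 < E := mul_pos (div_pos (hβpos j₀) hb) hθpos
    -- lower bound on N w
    have hNw : c * r ^ (β j₀ / b) ≤ N w := by
      refine le_trans ?_ (hcomp w).1
      have h1 : r ^ (β j₀ / b) ≤ |w j₀| ^ (β j₀ / b) :=
        Real.rpow_le_rpow hrpos.le hrj (div_nonneg (hβpos j₀).le hb.le)
      have h2 : |w j₀| ^ (β j₀ / b) ≤ ⨆ i, |w i| ^ (β i / b) :=
        le_ciSup (f := fun i => |w i| ^ (β i / b))
          (Set.Finite.bddAbove (Set.finite_range _)) j₀
      exact mul_le_mul_of_nonneg_left (h1.trans h2) hc.le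
    have hNwθ : c ^ θ * r ^ E ≤ N w ^ θ := by
      have h1 : (c * r ^ (β j₀ / b)) ^ θ ≤ N w ^ θ :=
        Real.rpow_le_rpow (by positivity) hNw hθpos.le
      calc c ^ θ * r ^ E = (c * r ^ (β j₀ / b)) ^ θ := by
            rw [Real.mul_rpow hc.le (by positivity), hEdef, Real.rpow_mul hrpos.le]
        _ ≤ N w ^ θ := h1
    -- upper bound on N v
    have hNv : N v ≤ C * (maxA * maxR * r ^ E) := by
      refine le_trans (hcomp v).2 ?_
      have hub : ∀ i, |v i| ^ (β i / b) ≤ maxA * maxR * r ^ E := by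
        intro i
        have hqi : (0:ℝ) ≤ β i / b := div_nonneg (hβpos i).le hb.le
        have h1 : |v i| ^ (β i / b) ≤ (A * r) ^ (β i / b) :=
          Real.rpow_le_rpow (abs_nonneg _) (hvw i) hqi
        have h2 : (A * r) ^ (β i / b) = A ^ (β i / b) * r ^ (β i / b) :=
          Real.mul_rpow hA hrpos.le
        have h3 : A ^ (β i / b) ≤ maxA :=
          mini A (max 1 A) (β i / b) (βp / b) hA (le_max_right 1 A) (le_max_left 1 A)
            hqi ((div_le_div_iff_of_pos_right hb).mpr (hβple i))
        have h4 : r ^ (β i / b) = r ^ E * r ^ (β i / b - E) := by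
          rw [← Real.rpow_add hrpos]
          ring_nf
        have h5 : r ^ (β i / b - E) ≤ maxR := by
          refine mini r R' _ (βp / b) hrpos.le hwR hR' ?_ ?_
          · rw [hEdef, hθ, sub_nonneg]
            rw [div_mul_div_comm, div_le_div_iff₀ (by positivity) hb]
            nlinarith [mul_le_mul (hβple j₀) (hβmle i) hβmpos.le hβppos.le, hb.le]
          · have : β i / b - E ≤ β i / b := by
              have : 0 ≤ E := hEpos.le
              linarith
            exact this.trans ((div_le_div_iff_of_pos_right hb).mpr (hβple i))
        calc |v i| ^ (β i / b) ≤ A ^ (β i / b) * r ^ (β i / b) := h2 ▸ h1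
          _ = A ^ (β i / b) * (r ^ E * r ^ (β i / b - E)) := by rw [h4]
          _ ≤ maxA * (r ^ E * maxR) := by
              have hrE : (0:ℝ) ≤ r ^ E := (Real.rpow_pos_of_pos hrpos E).le
              have := mul_le_mul h3 (mul_le_mul_of_nonneg_left h5 hrE)
                (by positivity) (hmaxApos.le)
              exact this
          _ = maxA * maxR * r ^ E := by ring
      exact mul_le_mul_of_nonneg_left (ciSup_le hub) hCpos.le
    calc N v ≤ C * (maxA * maxR * r ^ E) := hNv
      _ = (C * maxA * maxR / c ^ θ) * (c ^ θ * r ^ E) := by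
          field_simp
      _ ≤ (C * maxA * maxR / c ^ θ) * N w ^ θ :=
          mul_le_mul_of_nonneg_left hNwθ (by positivity)

theorem stmt_3 (d : ℕ) (G : PolyGroup d) (β : Fin d → ℝ)
    (hβ : ∀ i, 0 < β i ∧ β i < 2)
    (D : ApproxDil d G) (hDa : ∀ i, D.a i = (β i)⁻¹)
    (b : ℝ) (hble : ∀ i, β i ≤ b)
    (βm βp : ℝ) (hβm : IsLeast (Set.range β) βm) (hβp : IsGreatest (Set.range β) βp)
    (N : (Fin d → ℝ) → ℝ) (hNcont : Continuous N) (hNnn : ∀ u, 0 ≤ N u)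
    (hNscale : ∀ t : ℝ, 0 < t → ∀ u, N (dil D.a t u) = t ^ (1 / b) * N u)
    (c C : ℝ) (hc : 0 < c) (hcC : c ≤ C)
    (hcomp : ∀ u, c * (⨆ i, |u i| ^ (β i / b)) ≤ N u ∧ N u ≤ C * (⨆ i, |u i| ^ (β i / b)))
    (K : Set (Fin d → ℝ)) (hK : IsCompact K) :
    ∃ CK : ℝ, ∀ x ∈ K, ∀ y ∈ K, ∀ t : ℝ, 1 ≤ t →
      N (dil D.a t⁻¹ (G.mul (G.inv (dil D.a t x)) (dil D.a t y))) ≤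
        CK * N (y - x) ^ (βm / βp) ∧
      N (dil D.a t⁻¹ (G.mul (G.inv (dil D.a t x)) (dil D.a t y))) ≤
        CK * N (D.bullet (D.bulletInv x) y) ^ (βm / βp) := by
  classical
  obtain ⟨i₀, hi₀⟩ := hβm.1
  haveI : Nonempty (Fin d) := ⟨i₀⟩
  haveI : NeZero d := ⟨(Fin.pos i₀).ne'⟩
  set a : Fin d → ℝ := D.a with ha
  have hapos : ∀ i, 0 < a i := D.a_pos
  -- basic dilation facts
  have hdilinv : ∀ t : ℝ, 0 < t → ∀ (u : Fin d → ℝ) (i : Fin d),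
      dil a t⁻¹ u i = t ^ (-(a i)) * u i := by
    intro t ht u i
    show (t⁻¹) ^ a i * u i = _
    rw [Real.inv_rpow ht.le, ← Real.rpow_neg ht.le]
  have dil_cancel₁ : ∀ t : ℝ, 0 < t → ∀ u : Fin d → ℝ, dil a t (dil a t⁻¹ u) = u := by
    intro t ht u
    funext i
    show t ^ a i * (t⁻¹ ^ a i * u i) = u i
    rw [Real.inv_rpow ht.le, ← mul_assoc,
      mul_inv_cancel₀ (Real.rpow_pos_of_pos ht (a i)).ne', one_mul]
  have dil_cancel₂ : ∀ t : ℝ, 0 < t → ∀ u : Fin d → ℝ, dil a t⁻¹ (dil a t u) = u := by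
    intro t ht u
    funext i
    show t⁻¹ ^ a i * (t ^ a i * u i) = u i
    rw [Real.inv_rpow ht.le, ← mul_assoc,
      inv_mul_cancel₀ (Real.rpow_pos_of_pos ht (a i)).ne', one_mul]
  have dil_zero : ∀ t : ℝ, dil a t (0 : Fin d → ℝ) = 0 := by
    intro t; funext i; show t ^ a i * 0 = 0; rw [mul_zero]
  choose pmul hpmul using G.poly_mul
  choose pinv hpinv using G.poly_inv
  set w2 : (Fin d ⊕ Fin d) → ℝ := Sum.elim a a with hw2
  have helim : ∀ (t : ℝ) (x y : Fin d → ℝ),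
      (fun v => t ^ w2 v * Sum.elim x y v) = Sum.elim (dil a t x) (dil a t y) := by
    intro t x y; funext v; cases v <;> rfl
  have hzelim : ∀ z : (Fin d ⊕ Fin d) → ℝ,
      z = Sum.elim (fun j => z (Sum.inl j)) (fun j => z (Sum.inr j)) := by
    intro z; funext v; cases v <;> rfl
  -- mul expansion
  have hconvmul : ∀ i, ∀ z : (Fin d ⊕ Fin d) → ℝ, ∃ ℓ : ℝ, Tendsto
      (fun t : ℝ => t ^ (-(a i)) * eval (fun v => t ^ w2 v * z v) (pmul i)) atTop (𝓝 ℓ) := by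
    intro i z
    set x := fun j => z (Sum.inl j)
    set y := fun j => z (Sum.inr j)
    refine ⟨D.bullet x y i, ?_⟩
    have h0 : Tendsto (fun t : ℝ => dil a t⁻¹ (G.mul (dil a t x) (dil a t y)) i) atTop
        (𝓝 (D.bullet x y i)) := ((continuous_apply i).tendsto _).comp (D.tendsto_mul x y)
    refine h0.congr' ?_
    filter_upwards [eventually_gt_atTop (0:ℝ)] with t ht
    rw [hdilinv t ht, hpmul i, hzelim z, helim]
  choose smul qmul hsmul hqmul using fun i =>
    scaled_eval_expansion_nonpos (pmul i) w2 (a i) (hconvmul i)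
  -- evaluation of scaled products through the mul expansion
  have hmul_eval : ∀ t : ℝ, 0 < t → ∀ (u v : Fin d → ℝ) (i : Fin d),
      dil a t⁻¹ (G.mul (dil a t u) (dil a t v)) i
        = ∑ g ∈ smul i, eval (Sum.elim u v) (qmul i g) * t ^ g := by
    intro t ht u v i
    rw [hdilinv t ht, hpmul i, ← helim t u v]
    exact hqmul i t ht (Sum.elim u v)
  set B : (Fin d → ℝ) → (Fin d → ℝ) → Fin d → ℝ := fun u v i =>
    ∑ g ∈ (smul i).filter (fun g => g = 0), eval (Sum.elim u v) (qmul i g) with hB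
  have hBbullet : ∀ u v i, D.bullet u v i = B u v i := by
    intro u v i
    have h0 : Tendsto (fun t : ℝ => dil a t⁻¹ (G.mul (dil a t u) (dil a t v)) i) atTop
        (𝓝 (D.bullet u v i)) := ((continuous_apply i).tendsto _).comp (D.tendsto_mul u v)
    have h1 : Tendsto (fun t : ℝ => ∑ g ∈ smul i, eval (Sum.elim u v) (qmul i g) * t ^ g)
        atTop (𝓝 (B u v i)) :=
      tendsto_sum_rpow_s3 (smul i) (hsmul i) id tendsto_id _ _
        (fun g _ => tendsto_const_nhds)
    refine tendsto_nhds_unique (h0.congr' ?_) h1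
    filter_upwards [eventually_gt_atTop (0:ℝ)] with t ht
    exact hmul_eval t ht u v i
  -- the composed polynomial for x ↦ (inv x) * y
  have hRex : ∀ i, ∃ R : MvPolynomial (Fin d ⊕ Fin d) ℝ, ∀ u v : Fin d → ℝ,
      G.mul (G.inv u) v i = eval (Sum.elim u v) R := by
    intro i
    set hfun : (Fin d ⊕ Fin d) → MvPolynomial (Fin d ⊕ Fin d) ℝ :=
      Sum.elim (fun j => rename Sum.inl (pinv j)) (fun j => X (Sum.inr j)) with hhfun
    refine ⟨bind₁ hfun (pmul i), fun u v => ?_⟩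
    have h1 : eval (Sum.elim u v) (bind₁ hfun (pmul i))
        = eval (fun s => eval (Sum.elim u v) (hfun s)) (pmul i) :=
      eval₂Hom_bind₁ (RingHom.id ℝ) (Sum.elim u v) hfun (pmul i)
    have h2 : (fun s => eval (Sum.elim u v) (hfun s)) = Sum.elim (G.inv u) v := by
      funext s
      cases s with
      | inl j =>
        show eval (Sum.elim u v) (rename Sum.inl (pinv j)) = G.inv u j
        rw [eval_rename]
        exact (hpinv j u).symm
      | inr j => simp [hhfun]
    rw [hpmul i, h1, h2]
  choose Rp hRp using hRex
  -- Φ coordinates through the composed polynomial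
  have hΦ_eval : ∀ t : ℝ, 0 < t → ∀ (x y : Fin d → ℝ) (i : Fin d),
      dil a t⁻¹ (G.mul (G.inv (dil a t x)) (dil a t y)) i
        = t ^ (-(a i)) * eval (fun v => t ^ w2 v * Sum.elim x y v) (Rp i) := by
    intro t ht x y i
    rw [hdilinv t ht, hRp i, ← helim t x y]
  -- convergence of Φ coordinates
  have hΦconv : ∀ (x y : Fin d → ℝ) (i : Fin d),
      Tendsto (fun t : ℝ => dil a t⁻¹ (G.mul (G.inv (dil a t x)) (dil a t y)) i) atTop
        (𝓝 (B (D.bulletInv x) y i)) := by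
    intro x y i
    have hz : Tendsto (fun t : ℝ => Sum.elim (dil a t⁻¹ (G.inv (dil a t x))) y) atTop
        (𝓝 (Sum.elim (D.bulletInv x) y)) := by
      rw [tendsto_pi_nhds]
      rintro (j | j)
      · exact ((continuous_apply j).tendsto _).comp (D.tendsto_inv x)
      · exact tendsto_const_nhds
    have h1 : Tendsto (fun t : ℝ =>
        ∑ g ∈ smul i, eval (Sum.elim (dil a t⁻¹ (G.inv (dil a t x))) y) (qmul i g) * t ^ g)
        atTop (𝓝 (B (D.bulletInv x) y i)) :=
      tendsto_sum_rpow_s3 (smul i) (hsmul i) id tendsto_id _ _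
        (fun g _ => ((contDiff_mvpoly_eval (qmul i g)).continuous.tendsto _).comp hz)
    refine h1.congr' ?_
    filter_upwards [eventually_gt_atTop (0:ℝ)] with t ht
    rw [← hmul_eval t ht _ y i, dil_cancel₁ t ht]
  -- expansion of Φ itself
  have hconvR : ∀ i, ∀ z : (Fin d ⊕ Fin d) → ℝ, ∃ ℓ : ℝ, Tendsto
      (fun t : ℝ => t ^ (-(a i)) * eval (fun v => t ^ w2 v * z v) (Rp i)) atTop (𝓝 ℓ) := by
    intro i z
    set x := fun j => z (Sum.inl j)
    set y := fun j => z (Sum.inr j)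
    refine ⟨B (D.bulletInv x) y i, ?_⟩
    refine (hΦconv x y i).congr' ?_
    filter_upwards [eventually_gt_atTop (0:ℝ)] with t ht
    rw [hΦ_eval t ht, hzelim z]
  choose sR qR hsR1 hsR2 using fun i =>
    scaled_eval_expansion_nonpos (Rp i) w2 (a i) (hconvR i)
  have hΦsum : ∀ t : ℝ, 0 < t → ∀ (x y : Fin d → ℝ) (i : Fin d),
      dil a t⁻¹ (G.mul (G.inv (dil a t x)) (dil a t y)) i
        = ∑ g ∈ sR i, eval (Sum.elim x y) (qR i g) * t ^ g := by
    intro t ht x y i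
    rw [hΦ_eval t ht]
    exact hsR2 i t ht (Sum.elim x y)
  set Λ : (Fin d → ℝ) → (Fin d → ℝ) → Fin d → ℝ := fun x y i =>
    ∑ g ∈ (sR i).filter (fun g => g = 0), eval (Sum.elim x y) (qR i g) with hΛ
  have hΛconv : ∀ (x y : Fin d → ℝ) (i : Fin d),
      Tendsto (fun t : ℝ => dil a t⁻¹ (G.mul (G.inv (dil a t x)) (dil a t y)) i) atTop
        (𝓝 (Λ x y i)) := by
    intro x y i
    have h1 : Tendsto (fun t : ℝ => ∑ g ∈ sR i, eval (Sum.elim x y) (qR i g) * t ^ g)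
        atTop (𝓝 (Λ x y i)) :=
      tendsto_sum_rpow_s3 (sR i) (hsR1 i) id tendsto_id _ _ (fun g _ => tendsto_const_nhds)
    refine h1.congr' ?_
    filter_upwards [eventually_gt_atTop (0:ℝ)] with t ht
    exact (hΦsum t ht x y i).symm
  have hΛbullet : ∀ x y : Fin d → ℝ, D.bullet (D.bulletInv x) y = Λ x y := by
    intro x y
    funext i
    rw [hBbullet]
    exact tendsto_nhds_unique (hΦconv x y i) (hΛconv x y i)
  -- diagonal vanishing
  have hdiag : ∀ (x : Fin d → ℝ) (i : Fin d), ∀ g ∈ sR i,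
      eval (Sum.elim x x) (qR i g) = 0 := by
    intro x i g hg
    have hzero : ∀ t : ℝ, 0 < t →
        ∑ g' ∈ sR i, eval (Sum.elim x x) (qR i g') * t ^ g' = 0 := by
      intro t ht
      rw [← hΦsum t ht x x i, G.inv_mul']
      show t⁻¹ ^ a i * 0 = 0
      rw [mul_zero]
    have := aux_A' (sR i) id (fun g' => eval (Sum.elim x x) (qR i g')) hzero g
    have heq : (sR i).filter (fun g' => id g' = g) = {g} := by
      simp only [id]
      rw [Finset.filter_eq' (sR i) g, if_pos hg]
    rw [heq, Finset.sum_singleton] at this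
    exact this
  -- B x 0 = x
  have hBzero : ∀ (x : Fin d → ℝ) (i : Fin d), B x 0 i = x i := by
    intro x i
    rw [← hBbullet]
    have h0 : Tendsto (fun t : ℝ => dil a t⁻¹ (G.mul (dil a t x) (dil a t 0)) i) atTop
        (𝓝 (D.bullet x 0 i)) := ((continuous_apply i).tendsto _).comp (D.tendsto_mul x 0)
    refine tendsto_nhds_unique (h0.congr' ?_) tendsto_const_nhds
    filter_upwards [eventually_gt_atTop (0:ℝ)] with t ht
    rw [dil_zero t, G.mul_zero', dil_cancel₂ t ht]
  -- y = B x (Λ x y)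
  have hright : ∀ (x y : Fin d → ℝ) (i : Fin d), y i = B x (Λ x y) i := by
    intro x y i
    have hΛv : Tendsto (fun t : ℝ => dil a t⁻¹ (G.mul (G.inv (dil a t x)) (dil a t y)))
        atTop (𝓝 (Λ x y)) := by
      rw [tendsto_pi_nhds]; exact fun j => hΛconv x y j
    have hz2 : Tendsto (fun t : ℝ =>
        Sum.elim x (dil a t⁻¹ (G.mul (G.inv (dil a t x)) (dil a t y)))) atTop
        (𝓝 (Sum.elim x (Λ x y))) := by
      rw [tendsto_pi_nhds]
      rintro (j | j)
      · exact tendsto_const_nhds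
      · exact ((continuous_apply j).tendsto _).comp hΛv
    have htd : Tendsto (fun t : ℝ => ∑ g ∈ smul i,
        eval (Sum.elim x (dil a t⁻¹ (G.mul (G.inv (dil a t x)) (dil a t y)))) (qmul i g) * t ^ g)
        atTop (𝓝 (B x (Λ x y) i)) :=
      tendsto_sum_rpow_s3 (smul i) (hsmul i) id tendsto_id _ _
        (fun g _ => ((contDiff_mvpoly_eval (qmul i g)).continuous.tendsto _).comp hz2)
    refine tendsto_nhds_unique (Tendsto.congr' ?_ (tendsto_const_nhds (x := y i))) htd
    filter_upwards [eventually_gt_atTop (0:ℝ)] with t ht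
    rw [← hmul_eval t ht x _ i, dil_cancel₁ t ht, ← G.mul_assoc', G.mul_inv', G.zero_mul',
      dil_cancel₂ t ht]
  -- geometric constants
  obtain ⟨R₀, hR₀⟩ := hK.isBounded.subset_closedBall 0
  have hR₀K : ∀ x ∈ K, ‖x‖ ≤ R₀ := fun x hx => by
    simpa using mem_closedBall_zero_iff.mp (hR₀ hx)
  have hR₀nn : ∀ x ∈ K, (0:ℝ) ≤ R₀ := fun x hx => (norm_nonneg x).trans (hR₀K x hx)
  set F := (Fin d → ℝ) × (Fin d → ℝ)
  have hpair : ContDiff ℝ 1 (fun p : F => Sum.elim p.1 p.2) := by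
    rw [contDiff_pi]
    rintro (j | j)
    · exact (ContinuousLinearMap.proj j : (Fin d → ℝ) →L[ℝ] ℝ).contDiff.comp contDiff_fst
    · exact (ContinuousLinearMap.proj j : (Fin d → ℝ) →L[ℝ] ℝ).contDiff.comp contDiff_snd
  -- bound for Λ on K × K
  have hΛcont : Continuous (fun p : F => Λ p.1 p.2) := by
    apply continuous_pi
    intro i
    apply continuous_finset_sum
    intro g _
    exact (contDiff_mvpoly_eval (qR i g)).continuous.comp hpair.continuous
  obtain ⟨R₁, hR₁⟩ := (hK.prod hK).exists_bound_of_continuousOn hΛcont.continuousOn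
  set R₀' := max R₀ 0 with hR₀'
  set RB := max R₀' (max R₁ 0) with hRBdef
  have hRBnn : (0:ℝ) ≤ RB := le_trans (le_max_right R₀ 0) (le_max_left _ _)
  have hmemK : ∀ x ∈ K, ‖x‖ ≤ RB := fun x hx =>
    ((hR₀K x hx).trans (le_max_left R₀ 0)).trans (le_max_left _ _)
  have hmemΛ : ∀ x ∈ K, ∀ y ∈ K, ‖Λ x y‖ ≤ RB := by
    intro x hx y hy
    exact le_trans (hR₁ (x, y) (Set.mk_mem_prod hx hy))
      (le_trans (le_max_left R₁ 0) (le_max_right _ _))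
  have hball : ∀ u v : Fin d → ℝ, ‖u‖ ≤ RB → ‖v‖ ≤ RB →
      (u, v) ∈ Metric.closedBall (0 : F) RB := by
    intro u v hu hv
    rw [Metric.mem_closedBall, dist_zero_right, Prod.norm_def]
    exact max_le hu hv
  have hsubnorm : ∀ u u' v v' : Fin d → ℝ, u = u' → ‖((u, v) : F) - (u', v')‖ = ‖v - v'‖ := by
    intro u u' v v' huu
    subst huu
    have : ((u, v) : F) - (u, v') = ((0 : Fin d → ℝ), v - v') := by
      rw [Prod.mk_sub_mk, sub_self]
    rw [this, Prod.norm_def]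
    simp [max_eq_right (norm_nonneg (v - v'))]
  -- Lipschitz constants for the qR polynomials
  have lipR : ∀ (i : Fin d) (g : ℝ), ∃ M, 0 ≤ M ∧ ∀ p ∈ Metric.closedBall (0:F) RB,
      ∀ p' ∈ Metric.closedBall (0:F) RB,
      |eval (Sum.elim p.1 p.2) (qR i g) - eval (Sum.elim p'.1 p'.2) (qR i g)|
        ≤ M * ‖p - p'‖ :=
    fun i g => exists_lip_bound _ ((contDiff_mvpoly_eval (qR i g)).comp hpair) RB
  choose MR hMRnn hMR using lipR
  set M : ℝ := ∑ i, ∑ g ∈ sR i, MR i g with hMdef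
  have hMnn : 0 ≤ M := Finset.sum_nonneg fun i _ => Finset.sum_nonneg fun g _ => hMRnn i g
  -- coordinatewise bound on Φ
  have hcoord : ∀ x ∈ K, ∀ y ∈ K, ∀ t : ℝ, 1 ≤ t → ∀ i : Fin d,
      |dil a t⁻¹ (G.mul (G.inv (dil a t x)) (dil a t y)) i| ≤ M * ‖y - x‖ := by
    intro x hx y hy t ht i
    have ht0 : (0:ℝ) < t := lt_of_lt_of_le one_pos ht
    rw [hΦsum t ht0 x y i]
    calc |∑ g ∈ sR i, eval (Sum.elim x y) (qR i g) * t ^ g|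
        ≤ ∑ g ∈ sR i, |eval (Sum.elim x y) (qR i g) * t ^ g| :=
          Finset.abs_sum_le_sum_abs _ _
      _ ≤ ∑ g ∈ sR i, MR i g * ‖y - x‖ := by
          refine Finset.sum_le_sum fun g hg => ?_
          rw [abs_mul]
          have h1 : |t ^ g| ≤ 1 := by
            rw [abs_of_nonneg (Real.rpow_nonneg ht0.le g)]
            exact Real.rpow_le_one_of_one_le_of_nonpos ht (hsR1 i g hg)
          have h2 : |eval (Sum.elim x y) (qR i g)| ≤ MR i g * ‖y - x‖ := by
            have hd := hdiag x i g hg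
            have h3 := hMR i g (x, y) (hball x y (hmemK x hx) (hmemK y hy))
              (x, x) (hball x x (hmemK x hx) (hmemK x hx))
            rw [hsubnorm x x y x rfl] at h3
            simpa [hd] using h3
          calc |eval (Sum.elim x y) (qR i g)| * |t ^ g|
              ≤ (MR i g * ‖y - x‖) * 1 :=
                mul_le_mul h2 h1 (abs_nonneg _)
                  (mul_nonneg (hMRnn i g) (norm_nonneg _))
            _ = MR i g * ‖y - x‖ := mul_one _
      _ ≤ M * ‖y - x‖ := by
          rw [← Finset.sum_mul]
          refine mul_le_mul_of_nonneg_right ?_ (norm_nonneg _)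
          exact Finset.single_le_sum (f := fun i => ∑ g ∈ sR i, MR i g)
            (fun i _ => Finset.sum_nonneg fun g _ => hMRnn i g) (Finset.mem_univ i)
  -- Lipschitz bound for B in the second argument
  have hBcd : ∀ i : Fin d, ContDiff ℝ 1 (fun p : F => B p.1 p.2 i) := by
    intro i
    exact ContDiff.sum fun g _ => (contDiff_mvpoly_eval (qmul i g)).comp hpair
  have lipB : ∀ i : Fin d, ∃ M2, 0 ≤ M2 ∧ ∀ p ∈ Metric.closedBall (0:F) RB,
      ∀ p' ∈ Metric.closedBall (0:F) RB,
      |B p.1 p.2 i - B p'.1 p'.2 i| ≤ M2 * ‖p - p'‖ :=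
    fun i => exists_lip_bound _ (hBcd i) RB
  choose M2 hM2nn hM2 using lipB
  set M₂ : ℝ := ∑ i, M2 i with hM₂def
  have hM₂nn : 0 ≤ M₂ := Finset.sum_nonneg fun i _ => hM2nn i
  have hyx : ∀ x ∈ K, ∀ y ∈ K, ‖y - x‖ ≤ M₂ * ‖Λ x y‖ := by
    intro x hx y hy
    have hnn : 0 ≤ M₂ * ‖Λ x y‖ := mul_nonneg hM₂nn (norm_nonneg _)
    rw [pi_norm_le_iff_of_nonneg hnn]
    intro i
    rw [Real.norm_eq_abs, Pi.sub_apply]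
    have h1 : y i - x i = B x (Λ x y) i - B x 0 i := by
      rw [hBzero x i, ← hright x y i]
    rw [h1]
    have h2 := hM2 i (x, Λ x y) (hball x _ (hmemK x hx) (hmemΛ x hx y hy))
      (x, 0) (hball x 0 (hmemK x hx) (by rw [norm_zero]; exact hRBnn))
    rw [hsubnorm x x (Λ x y) 0 rfl, sub_zero] at h2
    calc |B x (Λ x y) i - B x 0 i| ≤ M2 i * ‖Λ x y‖ := h2
      _ ≤ M₂ * ‖Λ x y‖ :=
        mul_le_mul_of_nonneg_right
          (Finset.single_le_sum (f := fun i => M2 i) (fun i _ => hM2nn i)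
            (Finset.mem_univ i)) (norm_nonneg _)
  -- conclude via the key estimate
  obtain ⟨CK₁, hCK₁nn, hCK₁⟩ := key_estimate β b βm βp c C (fun i => (hβ i).1) hble hβm hβp
    N hNnn hc hcC hcomp M (max 1 (R₀' + R₀')) hMnn (le_max_left _ _)
  obtain ⟨CK₂, hCK₂nn, hCK₂⟩ := key_estimate β b βm βp c C (fun i => (hβ i).1) hble hβm hβp
    N hNnn hc hcC hcomp (M * M₂) (max 1 RB) (mul_nonneg hMnn hM₂nn) (le_max_left _ _)
  refine ⟨max CK₁ CK₂, fun x hx y hy t ht => ?_⟩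
  have hnn1 : (0:ℝ) ≤ N (y - x) ^ (βm / βp) := Real.rpow_nonneg (hNnn _) _
  have hnn2 : (0:ℝ) ≤ N (D.bullet (D.bulletInv x) y) ^ (βm / βp) :=
    Real.rpow_nonneg (hNnn _) _
  constructor
  · have h1 : N (dil a t⁻¹ (G.mul (G.inv (dil a t x)) (dil a t y)))
        ≤ CK₁ * N (y - x) ^ (βm / βp) := by
      apply hCK₁
      · exact fun i => hcoord x hx y hy t ht i
      · calc ‖y - x‖ ≤ ‖y‖ + ‖x‖ := norm_sub_le _ _
          _ ≤ R₀' + R₀' := add_le_add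
              ((hR₀K y hy).trans (le_max_left R₀ 0))
              ((hR₀K x hx).trans (le_max_left R₀ 0))
          _ ≤ max 1 (R₀' + R₀') := le_max_right _ _
    exact h1.trans (mul_le_mul_of_nonneg_right (le_max_left _ _) hnn1)
  · have h2 : N (dil a t⁻¹ (G.mul (G.inv (dil a t x)) (dil a t y)))
        ≤ CK₂ * N (D.bullet (D.bulletInv x) y) ^ (βm / βp) := by
      rw [hΛbullet x y]
      apply hCK₂
      · intro i
        calc |dil a t⁻¹ (G.mul (G.inv (dil a t x)) (dil a t y)) i| ≤ M * ‖y - x‖ :=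
              hcoord x hx y hy t ht i
          _ ≤ M * (M₂ * ‖Λ x y‖) := mul_le_mul_of_nonneg_left (hyx x hx y hy) hMnn
          _ = M * M₂ * ‖Λ x y‖ := by ring
      · exact (hmemΛ x hx y hy).trans (le_max_right _ _)
    exact h2.trans (mul_le_mul_of_nonneg_right (le_max_right _ _) hnn2)
end
end

section
/- Let G = (ℝ^d, ·) be a group with polynomial multiplication and inversion and identity 0, and let (φ_t)_{t>0} be a straight approximate group dilation structure for G with limit law ∙ (so that (ℝ^d, ∙) is a group with identity 0). Let H be a subgroup of G and define H∙ := { x ∈ ℝ^d : there exists a sequence (x_k)_{k≥1} in H with φ_{1/k}(x_k) → x as k → ∞ }. Then H∙ is a subgroup of (ℝ^d, ∙). -/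
open Filter Topology MeasureTheory

noncomputable section

/-- The set of limit points `x = lim_k φ_{1/k}(x_k)` with `x_k ∈ H`. -/
def limitSubgroup {d : ℕ} (a : Fin d → ℝ) (H : Set (Fin d → ℝ)) : Set (Fin d → ℝ) :=
  {x | ∃ u : ℕ → (Fin d → ℝ), (∀ k, u k ∈ H) ∧
    Tendsto (fun k : ℕ => dil a ((k : ℝ))⁻¹ (u k)) atTop (𝓝 x)}

lemma my_rpow_sum {t : ℝ} (ht : 0 < t) {ι : Type*} (s : Finset ι) (f : ι → ℝ) :
    t ^ (∑ i ∈ s, f i) = ∏ i ∈ s, t ^ f i := by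
  classical
  induction s using Finset.cons_induction with
  | empty => simp
  | cons i s hi ih => rw [Finset.sum_cons, Finset.prod_cons, Real.rpow_add ht, ih]

lemma vanish (E : Finset ℝ) (C : ℝ → ℝ) (hE : ∀ v ∈ E, 0 < v) (M : ℝ)
    (h : Tendsto (fun t : ℝ => ∑ v ∈ E, C v * t ^ v) atTop (𝓝 M)) :
    ∀ v ∈ E, C v = 0 := by
  classical
  induction E using Finset.strongInduction with
  | _ E ih =>
    rcases E.eq_empty_or_nonempty with rfl | hne
    · simp
    set v0 := E.max' hne with hv0
    have hv0mem : v0 ∈ E := E.max'_mem hne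
    have hv0pos : 0 < v0 := hE v0 hv0mem
    -- S(t)/t^v0 → 0
    have h1 : Tendsto (fun t : ℝ => (∑ v ∈ E, C v * t ^ v) / t ^ v0) atTop (𝓝 0) :=
      h.div_atTop (tendsto_rpow_atTop hv0pos)
    -- S(t)/t^v0 = ∑ C v * t^(v - v0) eventually
    have h2 : ∀ᶠ t : ℝ in atTop, (∑ v ∈ E, C v * t ^ v) / t ^ v0
        = ∑ v ∈ E, C v * t ^ (v - v0) := by
      filter_upwards [eventually_gt_atTop (0:ℝ)] with t ht
      rw [Finset.sum_div]
      refine Finset.sum_congr rfl fun v hv => ?_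
      rw [mul_div_assoc, ← Real.rpow_sub ht]
    -- ∑ C v * t^(v - v0) → C v0
    have h3 : Tendsto (fun t : ℝ => ∑ v ∈ E, C v * t ^ (v - v0)) atTop (𝓝 (C v0)) := by
      have : (C v0) = ∑ v ∈ E, (if v = v0 then C v0 else 0) := by
        rw [Finset.sum_ite_eq' E v0 (fun _ => C v0)]
        simp [hv0mem]
      rw [this]
      refine tendsto_finset_sum _ fun v hv => ?_
      by_cases hvv : v = v0
      · subst hvv
        simp only [if_pos rfl, sub_self]
        simpa using tendsto_const_nhds.congr' (by
          filter_upwards [eventually_gt_atTop (0:ℝ)] with t ht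
          rw [Real.rpow_zero, mul_one])
      · simp only [if_neg hvv]
        have hlt : v - v0 < 0 := by
          have := Finset.le_max' E v hv
          have : v < v0 := lt_of_le_of_ne this hvv
          linarith
        have : Tendsto (fun t : ℝ => t ^ (v - v0)) atTop (𝓝 0) := by
          have := tendsto_rpow_neg_atTop (show (0:ℝ) < -(v - v0) by linarith)
          simpa using this
        simpa using (tendsto_const_nhds (x := C v)).mul this
    have hC0 : C v0 = 0 := by
      have := tendsto_nhds_unique (h1.congr' h2) h3
      exact this.symm
    intro v hv
    by_cases hvv : v = v0
    · exact hvv ▸ hC0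
    · refine ih (E.erase v0) (Finset.erase_ssubset hv0mem)
        (fun w hw => hE w (Finset.mem_of_mem_erase hw)) ?_ v (Finset.mem_erase.2 ⟨hvv, hv⟩)
      have : ∀ t : ℝ, ∑ w ∈ E.erase v0, C w * t ^ w = ∑ w ∈ E, C w * t ^ w := by
        intro t
        rw [← Finset.add_sum_erase E _ hv0mem, hC0, zero_mul, zero_add]
      exact h.congr fun t => (this t).symm

lemma key {σ : Type*} (p : MvPolynomial σ ℝ) (w : σ → ℝ) (b : ℝ)
    (Φlim : (σ → ℝ) → ℝ)
    (hΦ : ∀ z : σ → ℝ, Tendsto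
      (fun t : ℝ => (t⁻¹) ^ b * MvPolynomial.eval (fun j => t ^ w j * z j) p)
      atTop (𝓝 (Φlim z)))
    (z : σ → ℝ) (zk : ℕ → σ → ℝ) (hzk : Tendsto zk atTop (𝓝 z)) :
    Tendsto (fun k : ℕ =>
      (((k:ℝ))⁻¹) ^ b * MvPolynomial.eval (fun j => (k:ℝ) ^ w j * zk k j) p)
      atTop (𝓝 (Φlim z)) := by
  classical
  set S : Finset (σ →₀ ℕ) := p.support with hS
  set e : (σ →₀ ℕ) → ℝ := fun α => (∑ j ∈ α.support, w j * (α j : ℝ)) - b with he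
  set c : (σ →₀ ℕ) → (σ → ℝ) → ℝ :=
    fun α z' => MvPolynomial.coeff α p * ∏ j ∈ α.support, z' j ^ α j with hc
  -- Step A: expansion for t > 0
  have expand : ∀ t : ℝ, 0 < t → ∀ z' : σ → ℝ,
      (t⁻¹) ^ b * MvPolynomial.eval (fun j => t ^ w j * z' j) p
        = ∑ α ∈ S, c α z' * t ^ e α := by
    intro t ht z'
    rw [MvPolynomial.eval_eq, Finset.mul_sum]
    refine Finset.sum_congr rfl fun α hα => ?_
    have hp : ∏ j ∈ α.support, (t ^ w j * z' j) ^ α j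
        = t ^ (∑ j ∈ α.support, w j * (α j : ℝ)) * ∏ j ∈ α.support, z' j ^ α j := by
      rw [my_rpow_sum ht, ← Finset.prod_mul_distrib]
      refine Finset.prod_congr rfl fun j hj => ?_
      rw [mul_pow, Real.rpow_mul ht.le, Real.rpow_natCast]
    rw [hp]
    rw [Real.inv_rpow ht.le, ← Real.rpow_neg ht.le]
    rw [show e α = -b + (∑ j ∈ α.support, w j * (α j : ℝ)) by simp [he]; ring]
    rw [Real.rpow_add ht]
    ring
  -- Step B: tendsto of the sum form, for any z'
  have hsum : ∀ z' : σ → ℝ,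
      Tendsto (fun t : ℝ => ∑ α ∈ S, c α z' * t ^ e α) atTop (𝓝 (Φlim z')) := by
    intro z'
    refine (hΦ z').congr' ?_
    filter_upwards [eventually_gt_atTop (0:ℝ)] with t ht
    exact expand t ht z'
  -- split S
  set Sn : Finset (σ →₀ ℕ) := S.filter (fun α => e α ≤ 0) with hSn
  set Sp : Finset (σ →₀ ℕ) := S.filter (fun α => ¬ e α ≤ 0) with hSp
  -- Step C: positive part vanishes at every z'
  have pos_zero : ∀ z' : σ → ℝ, ∀ t : ℝ, ∑ α ∈ Sp, c α z' * t ^ e α = 0 := by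
    intro z'
    -- tendsto of positive part
    have hneg : Tendsto (fun t : ℝ => ∑ α ∈ Sn, c α z' * t ^ e α) atTop
        (𝓝 (∑ α ∈ Sn, (if e α = 0 then c α z' else 0))) := by
      refine tendsto_finset_sum _ fun α hα => ?_
      rcases eq_or_lt_of_le (Finset.mem_filter.1 hα).2 with h0 | h0
      · rw [if_pos h0]
        simpa [h0] using (tendsto_const_nhds (x := c α z'))
      · rw [if_neg (by linarith)]
        have : Tendsto (fun t : ℝ => t ^ e α) atTop (𝓝 0) := by
          have := tendsto_rpow_neg_atTop (show (0:ℝ) < -(e α) by linarith)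
          simpa using this
        simpa using (tendsto_const_nhds (x := c α z')).mul this
    have hsplit : ∀ t : ℝ, ∑ α ∈ S, c α z' * t ^ e α
        = ∑ α ∈ Sn, c α z' * t ^ e α + ∑ α ∈ Sp, c α z' * t ^ e α := by
      intro t
      rw [hSn, hSp, Finset.sum_filter_add_sum_filter_not]
    have hpos : Tendsto (fun t : ℝ => ∑ α ∈ Sp, c α z' * t ^ e α) atTop
        (𝓝 (Φlim z' - ∑ α ∈ Sn, (if e α = 0 then c α z' else 0))) := by
      have := (hsum z').sub hneg
      refine this.congr fun t => ?_
      rw [hsplit t]; ring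
    -- regroup by exponent values
    set E : Finset ℝ := Sp.image e with hE
    set C : ℝ → ℝ := fun v => ∑ α ∈ Sp.filter (fun α => e α = v), c α z' with hC
    have regroup : ∀ t : ℝ, ∑ α ∈ Sp, c α z' * t ^ e α = ∑ v ∈ E, C v * t ^ v := by
      intro t
      rw [← Finset.sum_fiberwise_of_maps_to (fun α hα => Finset.mem_image_of_mem e hα)
        (fun α => c α z' * t ^ e α)]
      refine Finset.sum_congr rfl fun v hv => ?_
      rw [hC, Finset.sum_mul]
      refine Finset.sum_congr rfl fun α hα => ?_
      rw [(Finset.mem_filter.1 hα).2]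
    have hCzero : ∀ v ∈ E, C v = 0 := by
      refine vanish E C (fun v hv => ?_) _ (hpos.congr regroup)
      obtain ⟨α, hα, rfl⟩ := Finset.mem_image.1 hv
      have := (Finset.mem_filter.1 hα).2
      push_neg at this
      exact this
    intro t
    rw [regroup t]
    exact Finset.sum_eq_zero fun v hv => by rw [hCzero v hv, zero_mul]
  -- limit identification
  have hlim : ∀ z' : σ → ℝ, Φlim z' = ∑ α ∈ Sn, (if e α = 0 then c α z' else 0) := by
    intro z'
    have hneg : Tendsto (fun t : ℝ => ∑ α ∈ S, c α z' * t ^ e α) atTop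
        (𝓝 (∑ α ∈ Sn, (if e α = 0 then c α z' else 0))) := by
      have h1 : Tendsto (fun t : ℝ => ∑ α ∈ Sn, c α z' * t ^ e α) atTop
          (𝓝 (∑ α ∈ Sn, (if e α = 0 then c α z' else 0))) := by
        refine tendsto_finset_sum _ fun α hα => ?_
        rcases eq_or_lt_of_le (Finset.mem_filter.1 hα).2 with h0 | h0
        · rw [if_pos h0]
          simpa [h0] using (tendsto_const_nhds (x := c α z'))
        · rw [if_neg (by linarith)]
          have : Tendsto (fun t : ℝ => t ^ e α) atTop (𝓝 0) := by
            have := tendsto_rpow_neg_atTop (show (0:ℝ) < -(e α) by linarith)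
            simpa using this
          simpa using (tendsto_const_nhds (x := c α z')).mul this
      refine h1.congr fun t => ?_
      rw [← Finset.sum_filter_add_sum_filter_not S (fun α => e α ≤ 0)
        (fun α => c α z' * t ^ e α), ← hSn, ← hSp, pos_zero z' t, add_zero]
    exact tendsto_nhds_unique (hsum z') hneg
  -- Step D: sequence convergence
  have hcont : ∀ α : σ →₀ ℕ, Continuous (fun z' : σ → ℝ => c α z') := by
    intro α
    exact continuous_const.mul (continuous_finset_prod _ fun j _ => (continuous_apply j).pow _)
  have hseq : Tendsto (fun k : ℕ => ∑ α ∈ Sn, c α (zk k) * (k:ℝ) ^ e α) atTop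
      (𝓝 (∑ α ∈ Sn, (if e α = 0 then c α z else 0))) := by
    refine tendsto_finset_sum _ fun α hα => ?_
    have hck : Tendsto (fun k : ℕ => c α (zk k)) atTop (𝓝 (c α z)) :=
      ((hcont α).tendsto z).comp hzk
    rcases eq_or_lt_of_le (Finset.mem_filter.1 hα).2 with h0 | h0
    · rw [if_pos h0]
      have : ∀ k : ℕ, c α (zk k) * (k:ℝ) ^ e α = c α (zk k) := by
        intro k; rw [h0, Real.rpow_zero, mul_one]
      simpa [this] using hck
    · rw [if_neg (by linarith)]
      have h2 : Tendsto (fun k : ℕ => ((k:ℝ)) ^ e α) atTop (𝓝 0) := by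
        have := tendsto_rpow_neg_atTop (show (0:ℝ) < -(e α) by linarith)
        have := (this.comp (tendsto_natCast_atTop_atTop (R := ℝ)))
        simpa [Function.comp_def] using this
      simpa using hck.mul h2
  rw [hlim z]
  refine hseq.congr' ?_
  filter_upwards [eventually_ge_atTop 1] with k hk
  have hkpos : (0:ℝ) < (k:ℝ) := by exact_mod_cast Nat.lt_of_lt_of_le Nat.zero_lt_one hk
  rw [expand (k:ℝ) hkpos (zk k),
    ← Finset.sum_filter_add_sum_filter_not S (fun α => e α ≤ 0)
      (fun α => c α (zk k) * (k:ℝ) ^ e α), ← hSn, ← hSp, pos_zero (zk k) (k:ℝ), add_zero]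

lemma dil_cancel {t : ℝ} (ht : 0 < t) (aj uj : ℝ) : t ^ aj * (t⁻¹ ^ aj * uj) = uj := by
  rw [Real.inv_rpow ht.le, ← mul_assoc,
    mul_inv_cancel₀ (ne_of_gt (Real.rpow_pos_of_pos ht _)), one_mul]


theorem stmt_4 (d : ℕ) (G : PolyGroup d) (D : ApproxDil d G)
    (H : Set (Fin d → ℝ)) (hH0 : (0 : Fin d → ℝ) ∈ H)
    (hHmul : ∀ x ∈ H, ∀ y ∈ H, G.mul x y ∈ H) (hHinv : ∀ x ∈ H, G.inv x ∈ H) :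
    (0 : Fin d → ℝ) ∈ limitSubgroup D.a H ∧
    (∀ x ∈ limitSubgroup D.a H, ∀ y ∈ limitSubgroup D.a H,
      D.bullet x y ∈ limitSubgroup D.a H) ∧
    (∀ x ∈ limitSubgroup D.a H, D.bulletInv x ∈ limitSubgroup D.a H) := by
  refine ⟨?_, ?_, ?_⟩
  · refine ⟨fun _ => 0, fun _ => hH0, ?_⟩
    have h : (fun k : ℕ => dil D.a ((k:ℝ))⁻¹ (0 : Fin d → ℝ)) = fun _ => (0 : Fin d → ℝ) := by
      funext k i; simp [dil]
    rw [h]; exact tendsto_const_nhds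
  · rintro x ⟨u, huH, hu⟩ y ⟨v, hvH, hv⟩
    refine ⟨fun k => G.mul (u k) (v k), fun k => hHmul _ (huH k) _ (hvH k), ?_⟩
    rw [tendsto_pi_nhds]
    intro i
    obtain ⟨p, hp⟩ := G.poly_mul i
    set W : (Fin d ⊕ Fin d) → ℝ := Sum.elim D.a D.a with hW
    set Zk : ℕ → (Fin d ⊕ Fin d) → ℝ :=
      fun k => Sum.elim (dil D.a ((k:ℝ))⁻¹ (u k)) (dil D.a ((k:ℝ))⁻¹ (v k)) with hZk
    have hΦ : ∀ z : (Fin d ⊕ Fin d) → ℝ, Tendsto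
        (fun t : ℝ => (t⁻¹) ^ (D.a i) * MvPolynomial.eval (fun j => t ^ W j * z j) p)
        atTop (𝓝 (D.bullet (fun m => z (.inl m)) (fun m => z (.inr m)) i)) := by
      intro z
      have h := ((continuous_apply i).tendsto _).comp
        (D.tendsto_mul (fun m => z (.inl m)) (fun m => z (.inr m)))
      refine h.congr fun t => ?_
      show dil D.a t⁻¹ (G.mul _ _) i = _
      rw [dil, hp]
      have harg : (Sum.elim (dil D.a t fun m => z (Sum.inl m)) (dil D.a t fun m => z (Sum.inr m)))
          = fun j => t ^ W j * z j := by
        funext j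
        cases j with
        | inl j' => rfl
        | inr j' => rfl
      rw [harg]
    have hzk : Tendsto Zk atTop (𝓝 (Sum.elim x y)) := by
      rw [tendsto_pi_nhds]
      intro j
      cases j with
      | inl j' => exact (tendsto_pi_nhds.1 hu) j'
      | inr j' => exact (tendsto_pi_nhds.1 hv) j'
    have hk := key p W (D.a i) _ hΦ (Sum.elim x y) Zk hzk
    have hbe : (D.bullet (fun m => Sum.elim x y (.inl m)) (fun m => Sum.elim x y (.inr m)) i)
        = D.bullet x y i := rfl
    rw [hbe] at hk
    refine hk.congr' ?_
    filter_upwards [eventually_ge_atTop 1] with k hk1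
    have hkpos : (0:ℝ) < (k:ℝ) := by exact_mod_cast Nat.lt_of_lt_of_le Nat.zero_lt_one hk1
    have harg : (fun j => (k:ℝ) ^ W j * Zk k j) = Sum.elim (u k) (v k) := by
      funext j
      cases j with
      | inl j' => exact dil_cancel hkpos (D.a j') (u k j')
      | inr j' => exact dil_cancel hkpos (D.a j') (v k j')
    rw [harg, ← hp]
    rfl
  · rintro x ⟨u, huH, hu⟩
    refine ⟨fun k => G.inv (u k), fun k => hHinv _ (huH k), ?_⟩
    rw [tendsto_pi_nhds]
    intro i
    obtain ⟨p, hp⟩ := G.poly_inv i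
    have hΦ : ∀ z : Fin d → ℝ, Tendsto
        (fun t : ℝ => (t⁻¹) ^ (D.a i) * MvPolynomial.eval (fun j => t ^ D.a j * z j) p)
        atTop (𝓝 (D.bulletInv z i)) := by
      intro z
      have h := ((continuous_apply i).tendsto _).comp (D.tendsto_inv z)
      refine h.congr fun t => ?_
      show dil D.a t⁻¹ (G.inv _) i = _
      rw [dil, hp]
      rfl
    have hzk : Tendsto (fun k : ℕ => dil D.a ((k:ℝ))⁻¹ (u k)) atTop (𝓝 x) := hu
    have hk := key p D.a (D.a i) _ hΦ x _ hzk
    refine hk.congr' ?_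
    filter_upwards [eventually_ge_atTop 1] with k hk1
    have hkpos : (0:ℝ) < (k:ℝ) := by exact_mod_cast Nat.lt_of_lt_of_le Nat.zero_lt_one hk1
    have harg : (fun j => (k:ℝ) ^ D.a j * dil D.a ((k:ℝ))⁻¹ (u k) j) = u k := by
      funext j
      exact dil_cancel hkpos (D.a j) (u k j)
    rw [harg, ← hp]
    rfl
end
end

section
/- Let G = (ℝ^d, ·) be a group with polynomial multiplication and inversion and identity 0, whose left translations preserve Lebesgue measure, and let (δ_t)_{t>0} with δ_t(u) = (t^{1/β₁}u₁,…,t^{1/β_d}u_d), β_i ∈ (0,2), be an approximate group dilation structure for G with limit law ∙; assume that every left ∙-translation y ↦ x∙y also preserves Lebesgue measure. Let β ≥ max_i β_i and let ‖·‖ : ℝ^d → [0,∞) be a continuous function with ‖x∙y‖ ≤ ‖x‖ + ‖y‖, ‖x∙⁻¹‖ = ‖x‖, ‖x‖ = 0 if and only if x = 0, and ‖δ_t(u)‖ = t^{1/β}‖u‖ for all t > 0. Let Γ be a discrete subgroup of G possessing a compact fundamental domain U (the translates γ·U, γ ∈ Γ, cover ℝ^d and any two distinct translates intersect in a Lebesgue-null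 set), and set c(Γ,G) := Leb(U). For t > 0 put Γ_t := δ_{1/t}(Γ) and, for a finite set A ⊆ ℝ^d, m_t(A) := c(Γ,G)·t^{-(1/β₁+⋯+1/β_d)}·#A. Then for every x ∈ ℝ^d and every r ≥ 0, letting B(r) := {z ∈ ℝ^d : ‖z‖ < r} and B∙(x,r) := x∙B(r), one has lim_{t→∞} m_t(B∙(x,r) ∩ Γ_t) = Leb(B∙(x,r)). -/
open Filter Topology MeasureTheory
open scoped ENNReal
noncomputable section
noncomputable section

lemma poly_core {ι : Type*} [Fintype ι] [DecidableEq ι]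
    (p : MvPolynomial ι ℝ) (w : ι → ℝ) (c : ℝ) (flim : (ι → ℝ) → ℝ)
    (hconv : ∀ v : ι → ℝ,
      Tendsto (fun t : ℝ => t ^ (-c) * MvPolynomial.eval (fun j => t ^ w j * v j) p)
        atTop (𝓝 (flim v))) :
    Continuous flim ∧
      ∀ K : Set (ι → ℝ), IsCompact K → ∀ ε > 0, ∀ᶠ t : ℝ in atTop,
        ∀ v ∈ K, |t ^ (-c) * MvPolynomial.eval (fun j => t ^ w j * v j) p - flim v| ≤ ε := by
  classical
  set S := p.support with hS
  set M : (ι →₀ ℕ) → (ι → ℝ) → ℝ := fun m v => ∏ j, v j ^ m j with hM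
  set E : (ι →₀ ℕ) → ℝ := fun m => (∑ j, w j * m j) - c with hE
  set g : ℝ → (↥S → ℝ) := fun t m => p.coeff m.1 * t ^ E m.1 with hg
  set T : (↥S → ℝ) →ₗ[ℝ] ((ι → ℝ) → ℝ) :=
    { toFun := fun gg v => ∑ m : ↥S, gg m * M m.1 v
      map_add' := by
        intro g₁ g₂; funext v; simp [add_mul, Finset.sum_add_distrib]
      map_smul' := by
        intro r gg; funext v; simp [Finset.mul_sum, mul_assoc] } with hT
  have key : ∀ t : ℝ, 0 < t → ∀ v : ι → ℝ,
      t ^ (-c) * MvPolynomial.eval (fun j => t ^ w j * v j) p = T (g t) v := by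
    intro t ht v
    have h1 : MvPolynomial.eval (fun j => t ^ w j * v j) p
        = ∑ m ∈ S, p.coeff m * (t ^ (∑ j, w j * m j) * M m v) := by
      rw [MvPolynomial.eval_eq]
      refine Finset.sum_congr rfl fun m hm => ?_
      congr 1
      have h2 : ∏ j ∈ m.support, (t ^ w j * v j) ^ m j
          = ∏ j, (t ^ w j * v j) ^ m j := by
        refine Finset.prod_subset (Finset.subset_univ _) fun j _ hj => ?_
        simp [Finsupp.notMem_support_iff.1 hj]
      rw [h2]
      have h3 : ∀ j : ι, (t ^ w j * v j) ^ m j = t ^ (w j * m j) * v j ^ m j := by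
        intro j
        rw [mul_pow, ← Real.rpow_natCast (t ^ w j) (m j), ← Real.rpow_mul ht.le]
      simp_rw [h3]
      rw [Finset.prod_mul_distrib, ← Real.rpow_sum_of_pos ht]
    rw [h1, Finset.mul_sum]
    have h4 : T (g t) v = ∑ m : ↥S, (p.coeff m.1 * t ^ E m.1) * M m.1 v := rfl
    rw [h4, ← Finset.sum_attach S (fun m => t ^ (-c) * (p.coeff m * (t ^ (∑ j, w j * m j) * M m v)))]
    refine Finset.sum_congr rfl fun m _ => ?_
    have h5 : t ^ E m.1 = t ^ (-c) * t ^ (∑ j, w j * ((m.1) j : ℝ)) := by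
      simp only [hE]
      rw [sub_eq_add_neg, add_comm, Real.rpow_add ht]
    rw [h5]; ring
  have hTconv : Tendsto (fun t => T (g t)) atTop (𝓝 flim) := by
    rw [tendsto_pi_nhds]
    intro v
    refine (hconv v).congr' ?_
    filter_upwards [eventually_gt_atTop (0:ℝ)] with t ht
    exact key t ht v
  have hinj : Function.Injective T := by
    rw [← LinearMap.ker_eq_bot, LinearMap.ker_eq_bot']
    intro gg hgg
    set q : MvPolynomial ι ℝ := ∑ m : ↥S, MvPolynomial.monomial m.1 (gg m) with hq
    have hqe : ∀ v, MvPolynomial.eval v q = T gg v := by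
      intro v
      rw [hq, map_sum]
      refine Finset.sum_congr rfl fun m _ => ?_
      rw [MvPolynomial.eval_monomial]
      congr 1
      exact Finsupp.prod_fintype _ _ (fun j => pow_zero (v j))
    have hq0 : q = 0 := by
      apply MvPolynomial.funext
      intro v
      rw [hqe v, hgg]
      simp
    funext m
    have : gg m = q.coeff m.1 := by
      rw [hq, MvPolynomial.coeff_sum]
      rw [Fintype.sum_eq_single m]
      · simp [MvPolynomial.coeff_monomial]
      · intro m' hm'
        rw [MvPolynomial.coeff_monomial, if_neg]
        intro h; exact hm' (Subtype.ext h)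
    rw [this, hq0]; simp
  have hfin : FiniteDimensional ℝ (↥(LinearMap.range T)) := inferInstance
  have hclosed : IsClosed (LinearMap.range T : Set ((ι → ℝ) → ℝ)) :=
    Submodule.closed_of_finiteDimensional _
  have hmem : flim ∈ LinearMap.range T := by
    refine hclosed.mem_of_tendsto hTconv ?_
    exact Eventually.of_forall fun t => LinearMap.mem_range_self T (g t)
  obtain ⟨glim, hglim⟩ := hmem
  -- convergence of coefficients
  set e := LinearEquiv.ofInjective T hinj with he
  have hcont : Continuous (e.symm : ↥(LinearMap.range T) → (↥S → ℝ)) :=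
    LinearMap.continuous_of_finiteDimensional (e.symm : ↥(LinearMap.range T) →ₗ[ℝ] (↥S → ℝ))
  have hgconv : Tendsto g atTop (𝓝 glim) := by
    have h1 : Tendsto (fun t => (⟨T (g t), LinearMap.mem_range_self T (g t)⟩ :
        ↥(LinearMap.range T))) atTop (𝓝 ⟨flim, ⟨glim, hglim⟩⟩) :=
      tendsto_subtype_rng.2 hTconv
    have h2 := (hcont.tendsto _).comp h1
    have h3 : ∀ t, e.symm ⟨T (g t), LinearMap.mem_range_self T (g t)⟩ = g t := by
      intro t
      have : (⟨T (g t), LinearMap.mem_range_self T (g t)⟩ : ↥(LinearMap.range T)) = e (g t) := by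
        apply Subtype.ext; rfl
      rw [this, LinearEquiv.symm_apply_apply]
    have h4 : e.symm ⟨flim, ⟨glim, hglim⟩⟩ = glim := by
      have : (⟨flim, ⟨glim, hglim⟩⟩ : ↥(LinearMap.range T)) = e glim := by
        apply Subtype.ext; simp [he, LinearEquiv.ofInjective_apply, hglim]
      rw [this, LinearEquiv.symm_apply_apply]
    rw [← h4]
    exact h2.congr h3
  have hflim_eq : flim = T glim := hglim.symm
  constructor
  · rw [hflim_eq]
    have : Continuous fun v => ∑ m : ↥S, glim m * M m.1 v := by
      apply continuous_finset_sum
      intro m _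
      exact continuous_const.mul (continuous_finset_prod _ fun j _ => (continuous_apply j).pow _)
    exact this
  · intro K hK ε hε
    -- bounds on monomials over K
    have hCm : ∀ m : ↥S, ∃ C : ℝ, 0 ≤ C ∧ ∀ v ∈ K, |M m.1 v| ≤ C := by
      intro m
      have hcm : ContinuousOn (M m.1) K :=
        (continuous_finset_prod _ fun j _ => (continuous_apply j).pow _).continuousOn
      obtain ⟨C, hC⟩ := hK.exists_bound_of_continuousOn hcm
      exact ⟨max C 0, le_max_right _ _, fun v hv => (hC v hv).trans (le_max_left _ _)⟩
    choose C hC0 hCb using hCm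
    set Cs : ℝ := (∑ m : ↥S, C m) + 1 with hCs
    have hsum_nn : 0 ≤ ∑ m : ↥S, C m := Finset.sum_nonneg fun m _ => hC0 m
    have hCs_pos : 0 < Cs := by rw [hCs]; linarith
    have hcoef : ∀ᶠ t : ℝ in atTop, ∀ m : ↥S, |g t m - glim m| ≤ ε / Cs := by
      rw [eventually_all]
      intro m
      have h6 := Metric.tendsto_nhds.1 (tendsto_pi_nhds.1 hgconv m) (ε / Cs)
        (by positivity)
      filter_upwards [h6] with t ht'
      rw [Real.dist_eq] at ht'
      exact ht'.le
    filter_upwards [hcoef, eventually_gt_atTop (0:ℝ)] with t hct ht v hv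
    rw [key t ht v, hflim_eq]
    have h7 : T (g t) v - T glim v = ∑ m : ↥S, (g t m - glim m) * M m.1 v := by
      show (∑ m : ↥S, g t m * M m.1 v) - (∑ m : ↥S, glim m * M m.1 v) = _
      rw [← Finset.sum_sub_distrib]
      exact Finset.sum_congr rfl fun m _ => (sub_mul _ _ _).symm
    rw [h7]
    calc |∑ m : ↥S, (g t m - glim m) * M m.1 v|
        ≤ ∑ m : ↥S, |(g t m - glim m) * M m.1 v| := Finset.abs_sum_le_sum_abs _ _
      _ ≤ ∑ m : ↥S, (ε / Cs) * C m := by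
          refine Finset.sum_le_sum fun m _ => ?_
          rw [abs_mul]
          exact mul_le_mul (hct m) (hCb m v hv) (abs_nonneg _) (by positivity)
      _ = (ε / Cs) * ∑ m : ↥S, C m := by rw [Finset.mul_sum]
      _ ≤ (ε / Cs) * Cs := by
          refine mul_le_mul_of_nonneg_left ?_ (by positivity)
          rw [hCs]; linarith
      _ = ε := div_mul_cancel₀ ε hCs_pos.ne'

lemma inv_pack {d : ℕ} (G : PolyGroup d) (D : ApproxDil d G) :
    Continuous D.bulletInv ∧ ∀ K : Set (Fin d → ℝ), IsCompact K → ∀ ε > 0,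
      ∀ᶠ t : ℝ in atTop, ∀ z ∈ K,
        dist (dil D.a t⁻¹ (G.inv (dil D.a t z))) (D.bulletInv z) ≤ ε := by
  classical
  have coord : ∀ i : Fin d, Continuous (fun v => D.bulletInv v i) ∧
      ∀ K : Set (Fin d → ℝ), IsCompact K → ∀ ε > 0, ∀ᶠ t : ℝ in atTop, ∀ v ∈ K,
        |dil D.a t⁻¹ (G.inv (dil D.a t v)) i - D.bulletInv v i| ≤ ε := by
    intro i
    obtain ⟨p, hp⟩ := G.poly_inv i
    have key : ∀ t : ℝ, 0 < t → ∀ v : Fin d → ℝ,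
        t ^ (-(D.a i)) * MvPolynomial.eval (fun j => t ^ D.a j * v j) p
          = dil D.a t⁻¹ (G.inv (dil D.a t v)) i := by
      intro t ht v
      have h1 : (fun j => t ^ D.a j * v j) = dil D.a t v := rfl
      rw [h1, ← hp]
      show _ = (t⁻¹) ^ D.a i * (G.inv (dil D.a t v) i)
      rw [Real.inv_rpow ht.le, ← Real.rpow_neg ht.le, hp]
    have hconv : ∀ v : Fin d → ℝ, Tendsto
        (fun t : ℝ => t ^ (-(D.a i)) * MvPolynomial.eval (fun j => t ^ D.a j * v j) p)
        atTop (𝓝 (D.bulletInv v i)) := by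
      intro v
      have h2 := tendsto_pi_nhds.1 (D.tendsto_inv v) i
      refine h2.congr' ?_
      filter_upwards [eventually_gt_atTop (0:ℝ)] with t ht
      exact (key t ht v).symm
    obtain ⟨hcont, hunif⟩ := poly_core p D.a (D.a i) (fun v => D.bulletInv v i) hconv
    refine ⟨hcont, fun K hK ε hε => ?_⟩
    filter_upwards [hunif K hK ε hε, eventually_gt_atTop (0:ℝ)] with t h1 ht v hv
    rw [← key t ht v]
    exact h1 v hv
  constructor
  · exact continuous_pi fun i => (coord i).1
  · intro K hK ε hε
    have h := eventually_all.2 fun i => (coord i).2 K hK ε hε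
    filter_upwards [h] with t h z hz
    rw [dist_pi_le_iff hε.le]
    intro i
    rw [Real.dist_eq]
    exact h i z hz

lemma mul_pack {d : ℕ} (G : PolyGroup d) (D : ApproxDil d G) :
    Continuous (fun q : (Fin d → ℝ) × (Fin d → ℝ) => D.bullet q.1 q.2) ∧
      ∀ K : Set ((Fin d → ℝ) × (Fin d → ℝ)), IsCompact K → ∀ ε > 0,
      ∀ᶠ t : ℝ in atTop, ∀ q ∈ K,
        dist (dil D.a t⁻¹ (G.mul (dil D.a t q.1) (dil D.a t q.2))) (D.bullet q.1 q.2) ≤ ε := by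
  classical
  set ee : ((Fin d → ℝ) × (Fin d → ℝ)) → ((Fin d ⊕ Fin d) → ℝ) :=
    fun q => Sum.elim q.1 q.2 with hee
  have hee_cont : Continuous ee := by
    apply continuous_pi
    intro j
    cases j with
    | inl i => exact (continuous_apply i).comp continuous_fst
    | inr i => exact (continuous_apply i).comp continuous_snd
  set w : (Fin d ⊕ Fin d) → ℝ := Sum.elim D.a D.a with hw
  have coord : ∀ i : Fin d,
      Continuous (fun q : (Fin d → ℝ) × (Fin d → ℝ) => D.bullet q.1 q.2 i) ∧
      ∀ K : Set ((Fin d → ℝ) × (Fin d → ℝ)), IsCompact K → ∀ ε > 0,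
        ∀ᶠ t : ℝ in atTop, ∀ q ∈ K,
          |dil D.a t⁻¹ (G.mul (dil D.a t q.1) (dil D.a t q.2)) i - D.bullet q.1 q.2 i| ≤ ε := by
    intro i
    obtain ⟨p, hp⟩ := G.poly_mul i
    have key : ∀ t : ℝ, 0 < t → ∀ v : (Fin d ⊕ Fin d) → ℝ,
        t ^ (-(D.a i)) * MvPolynomial.eval (fun j => t ^ w j * v j) p
          = dil D.a t⁻¹ (G.mul (dil D.a t (v ∘ Sum.inl)) (dil D.a t (v ∘ Sum.inr))) i := by
      intro t ht v
      have h1 : (fun j => t ^ w j * v j)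
          = Sum.elim (dil D.a t (v ∘ Sum.inl)) (dil D.a t (v ∘ Sum.inr)) := by
        funext j; cases j <;> rfl
      rw [h1, ← hp]
      show _ = (t⁻¹) ^ D.a i * _
      rw [Real.inv_rpow ht.le, ← Real.rpow_neg ht.le, hp]
    have hconv : ∀ v : (Fin d ⊕ Fin d) → ℝ, Tendsto
        (fun t : ℝ => t ^ (-(D.a i)) * MvPolynomial.eval (fun j => t ^ w j * v j) p)
        atTop (𝓝 (D.bullet (v ∘ Sum.inl) (v ∘ Sum.inr) i)) := by
      intro v
      have h2 := tendsto_pi_nhds.1 (D.tendsto_mul (v ∘ Sum.inl) (v ∘ Sum.inr)) i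
      refine h2.congr' ?_
      filter_upwards [eventually_gt_atTop (0:ℝ)] with t ht
      exact (key t ht v).symm
    obtain ⟨hcont, hunif⟩ :=
      poly_core p w (D.a i) (fun v => D.bullet (v ∘ Sum.inl) (v ∘ Sum.inr) i) hconv
    constructor
    · have : (fun q : (Fin d → ℝ) × (Fin d → ℝ) => D.bullet q.1 q.2 i)
        = (fun v => D.bullet (v ∘ Sum.inl) (v ∘ Sum.inr) i) ∘ ee := rfl
      rw [this]
      exact hcont.comp hee_cont
    · intro K hK ε hε
      filter_upwards [hunif (ee '' K) (hK.image hee_cont) ε hε, eventually_gt_atTop (0:ℝ)]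
        with t h1 ht q hq
      have h2 := h1 (ee q) ⟨q, hq, rfl⟩
      rw [key t ht (ee q)] at h2
      exact h2
  constructor
  · exact continuous_pi fun i => (coord i).1
  · intro K hK ε hε
    have h := eventually_all.2 fun i => (coord i).2 K hK ε hε
    filter_upwards [h] with t h q hq
    rw [dist_pi_le_iff hε.le]
    intro i
    rw [Real.dist_eq]
    exact h i q hq
namespace dil
variable {d : ℕ} {a : Fin d → ℝ}

lemma zero_arg (t : ℝ) : dil a t 0 = 0 := by
  funext i; simp [dil]

lemma dil_dil {t : ℝ} (ht : 0 < t) (u : Fin d → ℝ) : dil a t (dil a t⁻¹ u) = u := by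
  funext i
  simp only [dil, ← mul_assoc, Real.inv_rpow ht.le, mul_inv_cancel₀ (Real.rpow_pos_of_pos ht _).ne',
    one_mul]

lemma dil_dil' {t : ℝ} (ht : 0 < t) (u : Fin d → ℝ) : dil a t⁻¹ (dil a t u) = u := by
  funext i
  simp only [dil, ← mul_assoc, Real.inv_rpow ht.le, inv_mul_cancel₀ (Real.rpow_pos_of_pos ht _).ne',
    one_mul]

lemma cont (t : ℝ) : Continuous (dil a t) :=
  continuous_pi fun i => continuous_const.mul (continuous_apply i)

lemma inj {t : ℝ} (ht : 0 < t) : Function.Injective (dil a t) := by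
  intro u v huv
  have := congrArg (dil a t⁻¹) huv
  rwa [dil_dil' ht, dil_dil' ht] at this

lemma vol_image {t : ℝ} (ht : 0 < t) (A : Set (Fin d → ℝ)) :
    volume (dil a t '' A) = ENNReal.ofReal (t ^ (∑ i, a i)) * volume A := by
  have h1 : dil a t = ⇑(Matrix.toLin' (Matrix.diagonal fun i => t ^ a i)) := by
    funext u i
    rw [Matrix.toLin'_apply, Matrix.mulVec_diagonal]
    rfl
  rw [h1, Measure.addHaar_image_linearMap]
  congr 2
  rw [LinearMap.det_toLin', Matrix.det_diagonal]
  rw [abs_of_nonneg (Finset.prod_nonneg fun i _ => (Real.rpow_pos_of_pos ht _).le)]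
  rw [← Real.rpow_sum_of_pos ht]

lemma norm_le {t : ℝ} (ht : 0 < t) (C : ℝ) (hC : ∀ i, t ^ a i ≤ C) (hC0 : 0 ≤ C)
    (u : Fin d → ℝ) : ‖dil a t u‖ ≤ C * ‖u‖ := by
  rw [pi_norm_le_iff_of_nonneg (by positivity)]
  intro i
  have h1 : ‖dil a t u i‖ = t ^ a i * ‖u i‖ := by
    simp [dil, abs_mul, abs_of_nonneg (Real.rpow_pos_of_pos ht (a i)).le, Real.norm_eq_abs]
  rw [h1]
  exact mul_le_mul (hC i) (norm_le_pi_norm u i) (norm_nonneg _) hC0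

end dil

lemma tendsto_Phi {d : ℕ} (G : PolyGroup d) (D : ApproxDil d G)
    {z w : ℝ → (Fin d → ℝ)} {zl wl : Fin d → ℝ}
    (hz : Tendsto z atTop (𝓝 zl)) (hw : Tendsto w atTop (𝓝 wl)) :
    Tendsto (fun t : ℝ => dil D.a t⁻¹ (G.mul (dil D.a t (z t)) (dil D.a t (w t)))) atTop
      (𝓝 (D.bullet zl wl)) := by
  obtain ⟨hBcont, hBunif⟩ := mul_pack G D
  rw [Metric.tendsto_nhds]
  intro ε hε
  obtain ⟨δ, hδ, hδh⟩ := Metric.continuousAt_iff.1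
    (hBcont.continuousAt : ContinuousAt _ ((zl, wl) : (Fin d → ℝ) × (Fin d → ℝ))) (ε/2)
    (by linarith)
  have hK : IsCompact ((Metric.closedBall zl 1) ×ˢ (Metric.closedBall wl 1)) :=
    (isCompact_closedBall _ _).prod (isCompact_closedBall _ _)
  have hq : Tendsto (fun t => (z t, w t)) atTop (𝓝 (zl, wl)) := hz.prodMk_nhds hw
  filter_upwards [hBunif _ hK (ε/4) (by linarith),
    Metric.tendsto_nhds.1 hq (min δ 1) (lt_min hδ one_pos)] with t h1 h2
  have h2' := h2
  rw [Prod.dist_eq] at h2'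
  have hd1 : dist (z t) zl < min δ 1 := lt_of_le_of_lt (le_max_left _ _) h2'
  have hd2 : dist (w t) wl < min δ 1 := lt_of_le_of_lt (le_max_right _ _) h2'
  have hmem : (z t, w t) ∈ (Metric.closedBall zl 1) ×ˢ (Metric.closedBall wl 1) := by
    rw [Set.mem_prod, Metric.mem_closedBall, Metric.mem_closedBall]
    exact ⟨(hd1.le.trans (min_le_right _ _)), (hd2.le.trans (min_le_right _ _))⟩
  have h3 : dist ((z t, w t)) ((zl, wl)) < δ := lt_of_lt_of_le h2 (min_le_left _ _)
  have h4 := hδh h3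
  have h5 := h1 (z t, w t) hmem
  calc dist (dil D.a t⁻¹ (G.mul (dil D.a t (z t)) (dil D.a t (w t)))) (D.bullet zl wl)
      ≤ dist (dil D.a t⁻¹ (G.mul (dil D.a t (z t)) (dil D.a t (w t))))
          (D.bullet (z t) (w t)) + dist (D.bullet (z t) (w t)) (D.bullet zl wl) :=
        dist_triangle _ _ _
    _ < ε := by
        have : dist (D.bullet (z t) (w t)) (D.bullet zl wl) < ε/2 := h4
        linarith

lemma bullet_zero_left {d : ℕ} (G : PolyGroup d) (D : ApproxDil d G) (y : Fin d → ℝ) :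
    D.bullet 0 y = y := by
  refine tendsto_nhds_unique (D.tendsto_mul 0 y) ?_
  refine Tendsto.congr' ?_ (tendsto_const_nhds : Tendsto (fun _ : ℝ => y) atTop (𝓝 y))
  filter_upwards [eventually_gt_atTop (0:ℝ)] with t ht
  rw [dil.zero_arg, G.zero_mul', dil.dil_dil' ht]

lemma bullet_zero_right {d : ℕ} (G : PolyGroup d) (D : ApproxDil d G) (y : Fin d → ℝ) :
    D.bullet y 0 = y := by
  refine tendsto_nhds_unique (D.tendsto_mul y 0) ?_
  refine Tendsto.congr' ?_ (tendsto_const_nhds : Tendsto (fun _ : ℝ => y) atTop (𝓝 y))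
  filter_upwards [eventually_gt_atTop (0:ℝ)] with t ht
  rw [dil.zero_arg, G.mul_zero', dil.dil_dil' ht]

lemma bullet_inv_right {d : ℕ} (G : PolyGroup d) (D : ApproxDil d G) (z : Fin d → ℝ) :
    D.bullet z (D.bulletInv z) = 0 := by
  refine tendsto_nhds_unique
    (tendsto_Phi G D (tendsto_const_nhds : Tendsto (fun _ : ℝ => z) atTop (𝓝 z))
      (D.tendsto_inv z)) ?_
  refine Tendsto.congr' ?_ (tendsto_const_nhds : Tendsto (fun _ : ℝ => (0 : Fin d → ℝ)) atTop _)
  filter_upwards [eventually_gt_atTop (0:ℝ)] with t ht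
  rw [dil.dil_dil ht, G.mul_inv', dil.zero_arg]

lemma bullet_inv_left {d : ℕ} (G : PolyGroup d) (D : ApproxDil d G) (z : Fin d → ℝ) :
    D.bullet (D.bulletInv z) z = 0 := by
  refine tendsto_nhds_unique
    (tendsto_Phi G D (D.tendsto_inv z)
      (tendsto_const_nhds : Tendsto (fun _ : ℝ => z) atTop (𝓝 z))) ?_
  refine Tendsto.congr' ?_ (tendsto_const_nhds : Tendsto (fun _ : ℝ => (0 : Fin d → ℝ)) atTop _)
  filter_upwards [eventually_gt_atTop (0:ℝ)] with t ht
  rw [dil.dil_dil ht, G.inv_mul', dil.zero_arg]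

lemma bullet_assoc {d : ℕ} (G : PolyGroup d) (D : ApproxDil d G) (x y z : Fin d → ℝ) :
    D.bullet (D.bullet x y) z = D.bullet x (D.bullet y z) := by
  have t1 : Tendsto (fun t : ℝ => dil D.a t⁻¹ (G.mul (G.mul (dil D.a t x) (dil D.a t y))
      (dil D.a t z))) atTop (𝓝 (D.bullet (D.bullet x y) z)) := by
    refine Tendsto.congr' ?_ (tendsto_Phi G D (D.tendsto_mul x y)
      (tendsto_const_nhds : Tendsto (fun _ : ℝ => z) atTop (𝓝 z)))
    filter_upwards [eventually_gt_atTop (0:ℝ)] with t ht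
    rw [dil.dil_dil ht]
  have t2 : Tendsto (fun t : ℝ => dil D.a t⁻¹ (G.mul (G.mul (dil D.a t x) (dil D.a t y))
      (dil D.a t z))) atTop (𝓝 (D.bullet x (D.bullet y z))) := by
    refine Tendsto.congr' ?_ (tendsto_Phi G D
      (tendsto_const_nhds : Tendsto (fun _ : ℝ => x) atTop (𝓝 x)) (D.tendsto_mul y z))
    filter_upwards [eventually_gt_atTop (0:ℝ)] with t ht
    rw [dil.dil_dil ht, G.mul_assoc']
  exact tendsto_nhds_unique t1 t2

lemma sublevel_compact {d : ℕ} (a : Fin d → ℝ) (ha : ∀ i, 0 < a i) (hd : 0 < d)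
    (b : ℝ) (hb : 0 < b) (N : (Fin d → ℝ) → ℝ) (hNcont : Continuous N)
    (hNnn : ∀ u, 0 ≤ N u) (hN0 : ∀ u, N u = 0 ↔ u = 0)
    (hNscale : ∀ t : ℝ, 0 < t → ∀ u, N (dil a t u) = t ^ (1 / b) * N u)
    (R : ℝ) : IsCompact {u : Fin d → ℝ | N u ≤ R} := by
  haveI : Nonempty (Fin d) := ⟨⟨0, hd⟩⟩
  have hclosed : IsClosed {u : Fin d → ℝ | N u ≤ R} := isClosed_Iic.preimage hNcont
  haveI hnt : Nontrivial (Fin d → ℝ) := ⟨0, (fun _ => 1), by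
    intro h; have := congrFun h ⟨0, hd⟩; norm_num at this⟩
  have hsph : (Metric.sphere (0 : Fin d → ℝ) 1).Nonempty :=
    NormedSpace.sphere_nonempty.2 zero_le_one
  obtain ⟨v₀, hv₀s, hv₀m⟩ :=
    (isCompact_sphere (0 : Fin d → ℝ) 1).exists_isMinOn hsph hNcont.continuousOn
  have hv₀ne : v₀ ≠ 0 := by
    intro h
    rw [h, mem_sphere_zero_iff_norm, norm_zero] at hv₀s
    norm_num at hv₀s
  set m := N v₀ with hm
  have hm0 : 0 < m := lt_of_le_of_ne (hNnn v₀) (fun h => hv₀ne ((hN0 v₀).1 h.symm))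
  set R' := max R 1 with hR'
  have hR'p : (0:ℝ) < R' := lt_of_lt_of_le one_pos (le_max_right _ _)
  set amin := Finset.univ.inf' Finset.univ_nonempty a with hamin
  set amax := Finset.univ.sup' Finset.univ_nonempty a with hamax
  have haminp : 0 < amin := (Finset.lt_inf'_iff _).2 fun i _ => ha i
  set B := max ((R'/m) ^ b) 1 with hB
  have hB1 : (1:ℝ) ≤ B := le_max_right _ _
  have hBp : (0:ℝ) < B := lt_of_lt_of_le one_pos hB1
  set C := B ^ amax with hC
  have hC0 : (0:ℝ) ≤ C := (Real.rpow_pos_of_pos hBp _).le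
  refine IsCompact.of_isClosed_subset (isCompact_closedBall 0 C) hclosed ?_
  intro u hu
  rw [Metric.mem_closedBall, dist_zero_right]
  by_cases hu0 : u = 0
  · rw [hu0, norm_zero]; exact hC0
  obtain ⟨j, hj⟩ : ∃ j, u j ≠ 0 := by
    by_contra hc; push_neg at hc; exact hu0 (funext hc)
  have hNu : N u ≤ R' := le_trans hu (le_max_left _ _)
  set τ₀ := min 1 ((‖u‖+1)⁻¹ ^ amin⁻¹) with hτ₀
  set τ₁ := max 1 ((|u j|⁻¹) ^ (a j)⁻¹) with hτ₁
  have hτ₀p : 0 < τ₀ := lt_min one_pos (Real.rpow_pos_of_pos (by positivity) _)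
  have hτ₀1 : τ₀ ≤ 1 := min_le_left _ _
  have hτ₁1 : 1 ≤ τ₁ := le_max_left _ _
  have hcont' : ContinuousOn (fun τ => ‖dil a τ u‖) (Set.Icc τ₀ τ₁) := by
    apply ContinuousOn.norm
    rw [continuousOn_pi]
    intro i
    apply ContinuousOn.mul ?_ continuousOn_const
    intro τ hτ
    exact (Real.continuousAt_rpow_const τ (a i)
      (Or.inl (ne_of_gt (lt_of_lt_of_le hτ₀p hτ.1)))).continuousWithinAt
  have hend0 : ‖dil a τ₀ u‖ ≤ 1 := by
    have hb1 : ∀ i, τ₀ ^ a i ≤ τ₀ ^ amin := fun i =>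
      Real.rpow_le_rpow_of_exponent_ge hτ₀p hτ₀1 (Finset.inf'_le a (Finset.mem_univ i))
    have h1 := dil.norm_le hτ₀p (τ₀ ^ amin) hb1 (Real.rpow_pos_of_pos hτ₀p _).le u
    refine le_trans h1 ?_
    have h2 : τ₀ ^ amin ≤ (‖u‖+1)⁻¹ := by
      have h3 : τ₀ ≤ (‖u‖+1)⁻¹ ^ amin⁻¹ := min_le_right _ _
      calc τ₀ ^ amin ≤ ((‖u‖+1)⁻¹ ^ amin⁻¹) ^ amin :=
            Real.rpow_le_rpow hτ₀p.le h3 haminp.le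
        _ = (‖u‖+1)⁻¹ := by
            rw [← Real.rpow_mul (by positivity), inv_mul_cancel₀ haminp.ne', Real.rpow_one]
    calc τ₀ ^ amin * ‖u‖ ≤ (‖u‖+1)⁻¹ * ‖u‖ :=
          mul_le_mul_of_nonneg_right h2 (norm_nonneg _)
      _ ≤ 1 := by
          rw [inv_mul_le_iff₀ (by positivity : (0:ℝ) < ‖u‖ + 1), mul_one]
          linarith [norm_nonneg u]
  have hend1 : 1 ≤ ‖dil a τ₁ u‖ := by
    have hτ₁p : (0:ℝ) < τ₁ := lt_of_lt_of_le one_pos hτ₁1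
    have h4 : |dil a τ₁ u j| ≤ ‖dil a τ₁ u‖ := by
      have := norm_le_pi_norm (dil a τ₁ u) j
      simpa [Real.norm_eq_abs] using this
    refine le_trans ?_ h4
    have h5 : dil a τ₁ u j = τ₁ ^ a j * u j := rfl
    rw [h5, abs_mul, abs_of_nonneg (Real.rpow_pos_of_pos hτ₁p _).le]
    have hju : 0 < |u j| := abs_pos.2 hj
    have h6 : (|u j|⁻¹) ^ (a j)⁻¹ ≤ τ₁ := le_max_right _ _
    have h7 : |u j|⁻¹ ≤ τ₁ ^ a j := by
      calc |u j|⁻¹ = ((|u j|⁻¹) ^ (a j)⁻¹) ^ a j := by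
            rw [← Real.rpow_mul (by positivity), inv_mul_cancel₀ (ha j).ne', Real.rpow_one]
        _ ≤ τ₁ ^ a j := Real.rpow_le_rpow (by positivity) h6 (ha j).le
    have h8 := mul_le_mul_of_nonneg_right h7 hju.le
    rwa [inv_mul_cancel₀ hju.ne'] at h8
  obtain ⟨τ, hτI, hτ⟩ := intermediate_value_Icc (le_trans hτ₀1 hτ₁1) hcont' ⟨hend0, hend1⟩
  have hτp : 0 < τ := lt_of_lt_of_le hτ₀p hτI.1
  set v := dil a τ u with hv
  have hvnorm : ‖v‖ = 1 := hτ
  have huv : u = dil a τ⁻¹ v := (dil.dil_dil' hτp u).symm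
  have hvm : m ≤ N v := hv₀m (mem_sphere_zero_iff_norm.2 hvnorm)
  have hscale : N u = (τ⁻¹) ^ (1/b) * N v := by
    rw [huv]; exact hNscale τ⁻¹ (inv_pos.2 hτp) v
  have h8 : (τ⁻¹) ^ (1/b) * m ≤ R' := by
    refine le_trans ?_ (hscale ▸ hNu)
    exact mul_le_mul_of_nonneg_left hvm (Real.rpow_pos_of_pos (inv_pos.2 hτp) _).le
  have h9 : (τ⁻¹) ^ (1/b) ≤ R'/m := by rw [le_div_iff₀ hm0]; exact h8
  have h10 : τ⁻¹ ≤ (R'/m) ^ b := by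
    calc τ⁻¹ = ((τ⁻¹) ^ (1/b)) ^ b := by
          rw [← Real.rpow_mul (inv_pos.2 hτp).le, one_div, inv_mul_cancel₀ hb.ne',
            Real.rpow_one]
      _ ≤ (R'/m) ^ b :=
          Real.rpow_le_rpow (Real.rpow_pos_of_pos (inv_pos.2 hτp) _).le h9 hb.le
  have h11 : τ⁻¹ ≤ B := le_trans h10 (le_max_left _ _)
  have h12 : ∀ i, (τ⁻¹) ^ a i ≤ C := by
    intro i
    calc (τ⁻¹) ^ a i ≤ B ^ a i := Real.rpow_le_rpow (inv_pos.2 hτp).le h11 (ha i).le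
      _ ≤ B ^ amax := Real.rpow_le_rpow_of_exponent_le hB1 (Finset.le_sup' a (Finset.mem_univ i))
  have h13 := dil.norm_le (inv_pos.2 hτp) C h12 hC0 v
  rw [huv]
  refine le_trans h13 ?_
  rw [hvnorm, mul_one]

lemma vol_ball_scale {d : ℕ} (a : Fin d → ℝ) (ha : ∀ i, 0 < a i)
    (b : ℝ) (hb : 0 < b) (N : (Fin d → ℝ) → ℝ)
    (hNscale : ∀ t : ℝ, 0 < t → ∀ u, N (dil a t u) = t ^ (1 / b) * N u)
    (s s' : ℝ) (hs : 0 < s) (hs' : 0 < s') :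
    volume {u : Fin d → ℝ | N u < s'}
      = ENNReal.ofReal ((s'/s) ^ (b * ∑ i, a i)) * volume {u : Fin d → ℝ | N u < s} := by
  set τ := (s'/s) ^ b with hτdef
  have hssp : (0:ℝ) < s'/s := by positivity
  have hτp : 0 < τ := Real.rpow_pos_of_pos hssp _
  have hτ1b : τ ^ (1/b) = s'/s := by
    rw [hτdef, ← Real.rpow_mul hssp.le, mul_one_div, div_self hb.ne', Real.rpow_one]
  have him : dil a τ '' {u : Fin d → ℝ | N u < s} = {u : Fin d → ℝ | N u < s'} := by
    ext u'
    constructor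
    · rintro ⟨u, hu, rfl⟩
      simp only [Set.mem_setOf_eq] at hu ⊢
      rw [hNscale τ hτp u, hτ1b]
      calc (s'/s) * N u < (s'/s) * s := mul_lt_mul_of_pos_left hu hssp
        _ = s' := div_mul_cancel₀ s' hs.ne'
    · intro hu'
      refine ⟨dil a τ⁻¹ u', ?_, dil.dil_dil hτp u'⟩
      simp only [Set.mem_setOf_eq] at hu' ⊢
      have hroot : (τ⁻¹) ^ (1/b) = (s'/s)⁻¹ := by rw [Real.inv_rpow hτp.le, hτ1b]
      rw [hNscale τ⁻¹ (inv_pos.2 hτp) u', hroot]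
      calc (s'/s)⁻¹ * N u' < (s'/s)⁻¹ * s' := mul_lt_mul_of_pos_left hu' (by positivity)
        _ = s := by field_simp
  rw [← him, dil.vol_image hτp]
  congr 2
  rw [hτdef, ← Real.rpow_mul hssp.le]

lemma smallW {d : ℕ} (a : Fin d → ℝ) (ha : ∀ i, 0 < a i) (hd : 0 < d)
    (U : Set (Fin d → ℝ)) (hU : IsCompact U) (ρ : ℝ) (hρ : 0 < ρ) :
    ∀ᶠ t : ℝ in atTop, ∀ u ∈ U, ‖dil a t⁻¹ u‖ ≤ ρ := by
  haveI : Nonempty (Fin d) := ⟨⟨0, hd⟩⟩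
  obtain ⟨CU, hCU⟩ := hU.exists_bound_of_continuousOn continuousOn_id
  set CU' := max CU 0 with hCU'
  have hCU'0 : (0:ℝ) ≤ CU' := le_max_right _ _
  set amin := Finset.univ.inf' Finset.univ_nonempty a with hamin
  have haminp : 0 < amin := (Finset.lt_inf'_iff _).2 fun i _ => ha i
  filter_upwards [eventually_ge_atTop (max 1 (((CU'+1)/ρ) ^ amin⁻¹))] with t ht
  have ht1 : (1:ℝ) ≤ t := le_trans (le_max_left _ _) ht
  have htp : 0 < t := lt_of_lt_of_le one_pos ht1
  have ht2 : ((CU'+1)/ρ) ^ amin⁻¹ ≤ t := le_trans (le_max_right _ _) ht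
  have h3 : (CU'+1)/ρ ≤ t ^ amin := by
    calc (CU'+1)/ρ = (((CU'+1)/ρ) ^ amin⁻¹) ^ amin := by
          rw [← Real.rpow_mul (by positivity), inv_mul_cancel₀ haminp.ne', Real.rpow_one]
      _ ≤ t ^ amin := Real.rpow_le_rpow (by positivity) ht2 haminp.le
  intro u hu
  have hC : ∀ i, (t⁻¹) ^ a i ≤ (t ^ amin)⁻¹ := by
    intro i
    rw [Real.inv_rpow htp.le, ← Real.rpow_neg htp.le, ← Real.rpow_neg htp.le]
    exact Real.rpow_le_rpow_of_exponent_le ht1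
      (neg_le_neg (Finset.inf'_le a (Finset.mem_univ i)))
  have h4 := dil.norm_le (inv_pos.2 htp) _ hC
    (inv_nonneg.2 (Real.rpow_pos_of_pos htp _).le) u
  refine le_trans h4 ?_
  have h5 : (t ^ amin)⁻¹ ≤ ρ/(CU'+1) := by
    have := inv_anti₀ (by positivity : (0:ℝ) < (CU'+1)/ρ) h3
    rwa [inv_div] at this
  have h6 : ‖u‖ ≤ CU' + 1 := by
    have := hCU u hu
    simp only [id] at this
    calc ‖u‖ ≤ CU := this
      _ ≤ CU' := le_max_left _ _
      _ ≤ CU' + 1 := by linarith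
  calc (t ^ amin)⁻¹ * ‖u‖ ≤ (ρ/(CU'+1)) * (CU'+1) :=
        mul_le_mul h5 h6 (norm_nonneg _) (by positivity)
    _ = ρ := div_mul_cancel₀ _ (by positivity)

lemma smallW2 {d : ℕ} (G : PolyGroup d) (D : ApproxDil d G) (hd : 0 < d)
    (U : Set (Fin d → ℝ)) (hU : IsCompact U) (hinv0 : D.bulletInv 0 = 0)
    (ρ : ℝ) (hρ : 0 < ρ) :
    ∀ᶠ t : ℝ in atTop, ∀ u ∈ U, ‖dil D.a t⁻¹ (G.inv u)‖ ≤ ρ := by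
  obtain ⟨hIcont, hIunif⟩ := inv_pack G D
  obtain ⟨ρ₂, hρ₂, hρ₂h⟩ := Metric.continuousAt_iff.1
    (hIcont.continuousAt : ContinuousAt _ (0 : Fin d → ℝ)) (ρ/2) (by linarith)
  set ρ₃ := min (ρ₂/2) 1 with hρ₃
  filter_upwards [hIunif (Metric.closedBall 0 1) (isCompact_closedBall _ _) (ρ/2) (by linarith),
    smallW D.a D.a_pos hd U hU ρ₃ (by positivity), eventually_gt_atTop (0:ℝ)] with t h1 h2 ht u hu
  set w := dil D.a t⁻¹ u with hwdef
  have hw1 : ‖w‖ ≤ 1 := le_trans (h2 u hu) (min_le_right _ _)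
  have hw2 : dist w 0 < ρ₂ := by
    rw [dist_zero_right]
    exact lt_of_le_of_lt (le_trans (h2 u hu) (min_le_left _ _)) (by linarith)
  have h3 := hρ₂h hw2
  rw [hinv0] at h3
  have h4 := h1 w (by rwa [Metric.mem_closedBall, dist_zero_right])
  have h5 : dil D.a t⁻¹ (G.inv u) = dil D.a t⁻¹ (G.inv (dil D.a t w)) := by
    rw [hwdef, dil.dil_dil ht]
  rw [h5]
  calc ‖dil D.a t⁻¹ (G.inv (dil D.a t w))‖
      = dist (dil D.a t⁻¹ (G.inv (dil D.a t w))) 0 := (dist_zero_right _).symm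
    _ ≤ dist (dil D.a t⁻¹ (G.inv (dil D.a t w))) (D.bulletInv w) + dist (D.bulletInv w) 0 :=
        dist_triangle _ _ _
    _ ≤ ρ/2 + ρ/2 := add_le_add h4 h3.le
    _ = ρ := add_halves ρ

lemma keylemma {d : ℕ} (G : PolyGroup d) (D : ApproxDil d G) (N : (Fin d → ℝ) → ℝ)
    (hNcont : Continuous N) (hN0 : N (0 : Fin d → ℝ) = 0)
    (hNtri : ∀ p q, N (D.bullet p q) ≤ N p + N q)
    (x xi : Fin d → ℝ)
    (hxz : ∀ z, D.bullet x (D.bullet xi z) = z)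
    (s ε : ℝ) (hε : 0 < ε)
    (hKxs : IsCompact ((fun z => D.bullet x z) '' {u : Fin d → ℝ | N u ≤ s})) :
    ∃ ρ > 0, ∀ᶠ t : ℝ in atTop, ∀ z w : Fin d → ℝ, N (D.bullet xi z) < s → ‖w‖ ≤ ρ →
      N (D.bullet xi (dil D.a t⁻¹ (G.mul (dil D.a t z) (dil D.a t w)))) < s + ε := by
  obtain ⟨hBcont, hBunif⟩ := mul_pack G D
  have hassoc := bullet_assoc G D
  set Kx := (fun z => D.bullet x z) '' {u : Fin d → ℝ | N u ≤ s} with hKxdef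
  set K := Kx ×ˢ Metric.closedBall (0 : Fin d → ℝ) 1 with hKdef
  have hKc : IsCompact K := hKxs.prod (isCompact_closedBall _ _)
  set Kb := (fun q : (Fin d → ℝ) × (Fin d → ℝ) => D.bullet q.1 q.2) '' K with hKbdef
  have hKbc : IsCompact Kb := hKc.image hBcont
  set K₂ := Metric.cthickening 1 Kb with hK₂def
  have hK₂c : IsCompact K₂ := hKbc.cthickening
  set ψ := fun y => N (D.bullet xi y) with hψdef
  have hψc : Continuous ψ :=
    hNcont.comp (hBcont.comp (continuous_const.prodMk continuous_id))
  obtain ⟨η, hη, hηh⟩ := Metric.uniformContinuousOn_iff.1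
    (hK₂c.uniformContinuousOn_of_continuous hψc.continuousOn) (ε/2) (by linarith)
  obtain ⟨ρ₁, hρ₁, hρ₁h⟩ := Metric.continuousAt_iff.1
    (hNcont.continuousAt : ContinuousAt N 0) (ε/4) (by linarith)
  refine ⟨min (ρ₁/2) 1, by positivity, ?_⟩
  filter_upwards [hBunif K hKc (min (η/2) (1/2)) (by positivity)] with t h1 z w hz hw
  have hzK : z ∈ Kx := ⟨D.bullet xi z, hz.le, hxz z⟩
  have hwK : w ∈ Metric.closedBall (0 : Fin d → ℝ) 1 := by
    rw [Metric.mem_closedBall, dist_zero_right]; exact le_trans hw (min_le_right _ _)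
  have hqK : (z, w) ∈ K := Set.mem_prod.2 ⟨hzK, hwK⟩
  have h2 := h1 (z, w) hqK
  have hy' : D.bullet z w ∈ Kb := ⟨(z, w), hqK, rfl⟩
  have hyK₂ : dil D.a t⁻¹ (G.mul (dil D.a t z) (dil D.a t w)) ∈ K₂ :=
    Metric.mem_cthickening_of_dist_le _ (D.bullet z w) 1 Kb hy'
      (le_trans h2 (le_trans (min_le_right _ _) (by norm_num)))
  have hy'K₂ : D.bullet z w ∈ K₂ := Metric.self_subset_cthickening _ hy'
  have h3 := hηh _ hyK₂ (D.bullet z w) hy'K₂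
    (lt_of_le_of_lt h2 (lt_of_le_of_lt (min_le_left _ _) (by linarith)))
  rw [Real.dist_eq] at h3
  have h4 : ψ (dil D.a t⁻¹ (G.mul (dil D.a t z) (dil D.a t w))) < ψ (D.bullet z w) + ε/2 := by
    have := (abs_lt.1 h3).2
    linarith
  have h5 : ψ (D.bullet z w) ≤ N (D.bullet xi z) + N w := by
    show N (D.bullet xi (D.bullet z w)) ≤ _
    rw [← hassoc xi z w]
    exact hNtri _ _
  have h6 : N w < ε/4 := by
    have hwd : dist w 0 < ρ₁ := by
      rw [dist_zero_right]
      exact lt_of_le_of_lt (le_trans hw (min_le_left _ _)) (by linarith)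
    have := hρ₁h hwd
    rw [Real.dist_eq, hN0, sub_zero] at this
    exact lt_of_le_of_lt (le_abs_self _) this
  show ψ _ < s + ε
  calc ψ (dil D.a t⁻¹ (G.mul (dil D.a t z) (dil D.a t w))) < ψ (D.bullet z w) + ε/2 := h4
    _ ≤ (N (D.bullet xi z) + N w) + ε/2 := by linarith
    _ < s + ε := by linarith

theorem stmt_5 (d : ℕ) (G : PolyGroup d)
    (hHaar : ∀ x, MeasurePreserving (fun y => G.mul x y) volume volume)
    (β : Fin d → ℝ) (hβ : ∀ i, 0 < β i ∧ β i < 2)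
    (D : ApproxDil d G) (hDa : ∀ i, D.a i = (β i)⁻¹)
    (hHaarB : ∀ x, MeasurePreserving (fun y => D.bullet x y) volume volume)
    (b : ℝ) (hble : ∀ i, β i ≤ b)
    (N : (Fin d → ℝ) → ℝ) (hNcont : Continuous N) (hNnn : ∀ u, 0 ≤ N u)
    (hNtri : ∀ x y, N (D.bullet x y) ≤ N x + N y)
    (hNinv : ∀ x, N (D.bulletInv x) = N x)
    (hN0 : ∀ x, N x = 0 ↔ x = 0)
    (hNscale : ∀ t : ℝ, 0 < t → ∀ u, N (dil D.a t u) = t ^ (1 / b) * N u)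
    (Γ : Set (Fin d → ℝ)) (hΓ0 : (0 : Fin d → ℝ) ∈ Γ)
    (hΓmul : ∀ x ∈ Γ, ∀ y ∈ Γ, G.mul x y ∈ Γ) (hΓinv : ∀ x ∈ Γ, G.inv x ∈ Γ)
    (hΓdisc : ∀ K : Set (Fin d → ℝ), IsCompact K → (Γ ∩ K).Finite)
    (U : Set (Fin d → ℝ)) (hUcomp : IsCompact U)
    (hUcover : ⋃ γ ∈ Γ, (fun y => G.mul γ y) '' U = Set.univ)
    (hUdisj : ∀ γ ∈ Γ, ∀ γ' ∈ Γ, γ ≠ γ' →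
      volume (((fun y => G.mul γ y) '' U) ∩ ((fun y => G.mul γ' y) '' U)) = 0)
    (x : Fin d → ℝ) (r : ℝ) (hr : 0 ≤ r) :
    Tendsto (fun t : ℝ =>
        (volume U).toReal * t ^ (-(∑ i, (β i)⁻¹)) *
          (({y | N (D.bullet (D.bulletInv x) y) < r} ∩ (dil D.a t⁻¹ '' Γ)).ncard : ℝ))
      atTop (𝓝 ((volume {y | N (D.bullet (D.bulletInv x) y) < r}).toReal)) := by
  classical
  obtain ⟨hBcont, hBunif⟩ := mul_pack G D
  set S : ℝ → Set (Fin d → ℝ) := fun s => {y | N (D.bullet (D.bulletInv x) y) < s} with hSdef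
  show Tendsto (fun t : ℝ => (volume U).toReal * t ^ (-(∑ i, (β i)⁻¹)) *
      ((S r ∩ (dil D.a t⁻¹ '' Γ)).ncard : ℝ)) atTop (𝓝 ((volume (S r)).toReal))
  have hN00 : N 0 = 0 := (hN0 0).2 rfl
  -- deal with d = 0 separately
  rcases Nat.eq_zero_or_pos d with hd0 | hd
  · subst hd0
    have hfeq : ∀ f g : Fin 0 → ℝ, f = g := fun f g => funext fun i => i.elim0
    have hpow : ∀ t : ℝ, t ^ (-(∑ i : Fin 0, (β i)⁻¹)) = 1 := by
      intro t
      simp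
    rcases eq_or_lt_of_le hr with hr0 | hrpos
    · have hSempty : S r = ∅ := by
        rw [Set.eq_empty_iff_forall_notMem]
        intro y hy
        have h1 : N (D.bullet (D.bulletInv x) y) < r := hy
        have h2 := hNnn (D.bullet (D.bulletInv x) y)
        rw [← hr0] at h1
        linarith
      rw [hSempty]
      simp only [Set.empty_inter, Set.ncard_empty, Nat.cast_zero, mul_zero, measure_empty,
        ENNReal.toReal_zero]
      exact tendsto_const_nhds
    · have hSuniv : S r = Set.univ := by
        ext y
        simp only [hSdef, Set.mem_setOf_eq, Set.mem_univ, iff_true]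
        rw [hfeq (D.bullet (D.bulletInv x) y) 0, hN00]
        exact hrpos
      have huniv_v : volume (Set.univ : Set (Fin 0 → ℝ)) = 1 := by
        rw [MeasureTheory.volume_pi, MeasureTheory.Measure.pi_univ]; simp
      have hU_univ : U = Set.univ := by
        have h0 : (0 : Fin 0 → ℝ) ∈ ⋃ γ ∈ Γ, (fun y => G.mul γ y) '' U := by
          rw [hUcover]; trivial
        simp only [Set.mem_iUnion] at h0
        obtain ⟨γ, _, u, hu, _⟩ := h0
        ext y
        simp only [Set.mem_univ, iff_true]
        exact hfeq u y ▸ hu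
      have hΓim : ∀ t : ℝ, dil D.a t⁻¹ '' Γ = Set.univ := by
        intro t
        ext y
        simp only [Set.mem_univ, iff_true]
        exact ⟨0, hΓ0, hfeq _ _⟩
      rw [hSuniv, huniv_v, ENNReal.toReal_one]
      have hfun : ∀ t : ℝ, (volume U).toReal * t ^ (-(∑ i : Fin 0, (β i)⁻¹)) *
          ((Set.univ ∩ (dil D.a t⁻¹ '' Γ)).ncard : ℝ) = 1 := by
        intro t
        rw [Set.univ_inter, hΓim, Set.ncard_univ, Nat.card_unique, hU_univ, huniv_v, hpow]
        norm_num
      refine Tendsto.congr (fun t => (hfun t).symm) ?_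
      exact tendsto_const_nhds
  -- main case d ≥ 1
  have hb : 0 < b := lt_of_lt_of_le (hβ ⟨0, hd⟩).1 (hble ⟨0, hd⟩)
  have hsumeq : (∑ i, (β i)⁻¹) = ∑ i, D.a i := Finset.sum_congr rfl fun i _ => (hDa i).symm
  set L : ℝ := ∑ i, D.a i with hL
  have hLpos : 0 < L := Finset.sum_pos (fun i _ => D.a_pos i) ⟨⟨0, hd⟩, Finset.mem_univ _⟩
  -- group laws
  have hxz : ∀ z, D.bullet x (D.bullet (D.bulletInv x) z) = z := by
    intro z
    rw [← bullet_assoc G D, bullet_inv_right G D, bullet_zero_left G D]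
  have hinv0 : D.bulletInv 0 = 0 := by
    have h1 := hNinv 0
    rw [hN00] at h1
    exact (hN0 _).1 h1
  -- compact sublevels
  have hsub : ∀ R : ℝ, IsCompact {u : Fin d → ℝ | N u ≤ R} :=
    sublevel_compact D.a D.a_pos hd b hb N hNcont hNnn hN0 hNscale
  have hbxcont : Continuous (fun z => D.bullet x z) :=
    hBcont.comp (continuous_const.prodMk continuous_id)
  have hKx : ∀ s : ℝ, IsCompact ((fun z => D.bullet x z) '' {u : Fin d → ℝ | N u ≤ s}) :=
    fun s => (hsub s).image hbxcont
  have hSsub : ∀ s : ℝ, S s ⊆ (fun z => D.bullet x z) '' {u : Fin d → ℝ | N u ≤ s} := by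
    intro s z hz
    have hz' : N (D.bullet (D.bulletInv x) z) < s := hz
    exact ⟨D.bullet (D.bulletInv x) z, le_of_lt hz', hxz z⟩
  have hScont : Continuous fun y => N (D.bullet (D.bulletInv x) y) :=
    hNcont.comp (hBcont.comp (continuous_const.prodMk continuous_id))
  have hSopen : ∀ s : ℝ, IsOpen (S s) := fun s => isOpen_Iio.preimage hScont
  have hSfin : ∀ s : ℝ, volume (S s) ≠ ⊤ := fun s =>
    (lt_of_le_of_lt (measure_mono (hSsub s)) (hKx s).measure_lt_top).ne
  have hSvol : ∀ s : ℝ, volume (S s) = volume {u : Fin d → ℝ | N u < s} := by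
    intro s
    have h1 : S s = (fun y => D.bullet (D.bulletInv x) y) ⁻¹' {u : Fin d → ℝ | N u < s} := rfl
    rw [h1]
    exact (hHaarB (D.bulletInv x)).measure_preimage
      (isOpen_Iio.preimage hNcont).measurableSet.nullMeasurableSet
  rcases eq_or_lt_of_le hr with hr0 | hrpos
  · -- r = 0
    have hSempty : S r = ∅ := by
      rw [Set.eq_empty_iff_forall_notMem]
      intro y hy
      have h1 : N (D.bullet (D.bulletInv x) y) < r := hy
      have h2 := hNnn (D.bullet (D.bulletInv x) y)
      rw [← hr0] at h1
      linarith
    rw [hSempty]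
    simp only [Set.empty_inter, Set.ncard_empty, Nat.cast_zero, mul_zero, measure_empty,
      ENNReal.toReal_zero]
    exact tendsto_const_nhds
  -- r > 0
  set Vr : ℝ := (volume (S r)).toReal with hVrdef
  have hscaleV : ∀ s : ℝ, 0 < s →
      volume (S s) = ENNReal.ofReal ((s/r) ^ (b*L)) * volume (S r) := by
    intro s hs
    rw [hSvol s, hSvol r]
    exact vol_ball_scale D.a D.a_pos b hb N hNscale r s hrpos hs
  have hVtoReal : ∀ s : ℝ, 0 < s → (volume (S s)).toReal = ((s/r) ^ (b*L)) * Vr := by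
    intro s hs
    rw [hscaleV s hs, ENNReal.toReal_mul, ENNReal.toReal_ofReal (by positivity)]
  have hVchoice : ∀ δ : ℝ, 0 < δ → ∃ ε : ℝ, 0 < ε ∧ ε < r ∧
      (volume (S (r+ε))).toReal ≤ Vr + δ ∧ Vr - δ ≤ (volume (S (r-ε))).toReal := by
    intro δ hδ
    set φ : ℝ → ℝ := fun s => ((s/r) ^ (b*L)) * Vr with hφdef
    have hφr : φ r = Vr := by
      simp only [hφdef]
      rw [div_self hrpos.ne', Real.one_rpow, one_mul]
    have hφ : ContinuousAt φ r := by
      apply ContinuousAt.mul ?_ continuousAt_const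
      have h1 : ContinuousAt (fun s : ℝ => s / r) r := continuousAt_id.div continuousAt_const hrpos.ne'
      exact h1.rpow_const (Or.inl (by rw [div_self hrpos.ne']; norm_num))
    obtain ⟨η, hη, hηh⟩ := Metric.continuousAt_iff.1 hφ δ hδ
    set ε := min (η/2) (r/2) with hεdef
    have hεpos : 0 < ε := by positivity
    have hεr : ε < r := lt_of_le_of_lt (min_le_right _ _) (by linarith)
    have hup : (volume (S (r+ε))).toReal ≤ Vr + δ := by
      rw [hVtoReal (r+ε) (by linarith)]
      have h3 : dist (r+ε) r < η := by
        rw [Real.dist_eq, add_sub_cancel_left, abs_of_pos hεpos]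
        exact lt_of_le_of_lt (min_le_left _ _) (by linarith)
      have h4 := hηh h3
      rw [Real.dist_eq, hφr] at h4
      have h5 := (abs_lt.1 h4).2
      have h6 : φ (r+ε) = ((r+ε)/r) ^ (b*L) * Vr := rfl
      linarith [h6 ▸ h5]
    have hlo : Vr - δ ≤ (volume (S (r-ε))).toReal := by
      rw [hVtoReal (r-ε) (by linarith)]
      have h3 : dist (r-ε) r < η := by
        rw [Real.dist_eq, sub_sub_cancel_left, abs_neg, abs_of_pos hεpos]
        exact lt_of_le_of_lt (min_le_left _ _) (by linarith)
      have h4 := hηh h3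
      rw [Real.dist_eq, hφr] at h4
      have h5 := (abs_lt.1 h4).1
      have h6 : φ (r-ε) = ((r-ε)/r) ^ (b*L) * Vr := rfl
      linarith [h6 ▸ h5]
    exact ⟨ε, hεpos, hεr, hup, hlo⟩
  -- counting sets
  set F : ℝ → Set (Fin d → ℝ) := fun t => Γ ∩ (dil D.a t '' S r) with hFdef
  have hFfin : ∀ t : ℝ, 0 < t → (F t).Finite := by
    intro t ht
    refine Set.Finite.subset
      (hΓdisc (dil D.a t '' ((fun z => D.bullet x z) '' {u : Fin d → ℝ | N u ≤ r}))
        ((hKx r).image (dil.cont t))) ?_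
    exact Set.inter_subset_inter_right Γ (Set.image_mono (hSsub r))
  have hcard : ∀ t : ℝ, 0 < t →
      (S r ∩ (dil D.a t⁻¹ '' Γ)).ncard = (F t).ncard := by
    intro t ht
    have him : S r ∩ (dil D.a t⁻¹ '' Γ) = dil D.a t⁻¹ '' (F t) := by
      ext z
      constructor
      · rintro ⟨hz, γ, hγ, rfl⟩
        exact ⟨γ, ⟨hγ, ⟨dil D.a t⁻¹ γ, hz, dil.dil_dil ht γ⟩⟩, rfl⟩
      · rintro ⟨γ, ⟨hγ, ⟨z', hz', hz'eq⟩⟩, rfl⟩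
        have h1 : dil D.a t⁻¹ γ = z' := by rw [← hz'eq, dil.dil_dil' ht]
        exact ⟨h1 ▸ hz', γ, hγ, rfl⟩
    rw [him, Set.ncard_image_of_injective _ (dil.inj (inv_pos.2 ht))]
  have hmulcont : ∀ γ : Fin d → ℝ, Continuous (fun y => G.mul γ y) := by
    intro γ
    apply continuous_pi
    intro i
    obtain ⟨p, hp⟩ := G.poly_mul i
    have h1 : (fun y => G.mul γ y i) = fun y => MvPolynomial.eval (Sum.elim γ y) p :=
      funext fun y => hp γ y
    rw [h1]
    have h2 : Continuous fun y : Fin d → ℝ => Sum.elim γ y := by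
      apply continuous_pi
      intro j
      cases j with
      | inl i' => exact continuous_const
      | inr i' => exact continuous_apply i'
    exact (MvPolynomial.continuous_eval p).comp h2
  have hUmeas : MeasurableSet U := hUcomp.isClosed.measurableSet
  have htrans_vol : ∀ γ ∈ Γ, volume ((fun y => G.mul γ y) '' U) = volume U := by
    intro γ hγ
    have him : (fun y => G.mul γ y) '' U = (fun y => G.mul (G.inv γ) y) ⁻¹' U := by
      ext y
      simp only [Set.mem_image, Set.mem_preimage]
      constructor
      · rintro ⟨u, hu, rfl⟩
        rwa [← G.mul_assoc', G.inv_mul', G.zero_mul']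
      · intro h
        exact ⟨G.mul (G.inv γ) y, h, by rw [← G.mul_assoc', G.mul_inv', G.zero_mul']⟩
    rw [him]
    exact (hHaar (G.inv γ)).measure_preimage hUmeas.nullMeasurableSet
  have hUvol_fin : volume U ≠ ⊤ := hUcomp.measure_lt_top.ne
  -- the two sandwich claims
  have claim1 : ∀ ε : ℝ, 0 < ε → ∀ᶠ t : ℝ in atTop,
      ((F t).ncard : ℝ≥0∞) * volume U ≤ ENNReal.ofReal (t ^ L) * volume (S (r + ε)) := by
    intro ε hε
    obtain ⟨ρ, hρ, hkey⟩ := keylemma G D N hNcont hN00 hNtri x (D.bulletInv x) hxz r ε hε (hKx r)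
    filter_upwards [hkey, smallW D.a D.a_pos hd U hUcomp ρ hρ, eventually_gt_atTop (0:ℝ)]
      with t hk hsw ht
    have hsubU : (⋃ γ ∈ (hFfin t ht).toFinset, (fun y => G.mul γ y) '' U)
        ⊆ dil D.a t '' (S (r + ε)) := by
      intro p hp
      simp only [Set.mem_iUnion] at hp
      obtain ⟨γ, hγF, u, hu, rfl⟩ := hp
      rw [Set.Finite.mem_toFinset] at hγF
      obtain ⟨hγΓ, z, hzS, hzγ⟩ := hγF
      show G.mul γ u ∈ dil D.a t '' S (r + ε)
      have h1 : G.mul γ u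
          = dil D.a t (dil D.a t⁻¹ (G.mul (dil D.a t z) (dil D.a t (dil D.a t⁻¹ u)))) := by
        rw [dil.dil_dil ht, dil.dil_dil ht, hzγ]
      rw [h1]
      exact ⟨_, hk z (dil D.a t⁻¹ u) hzS (hsw u hu), rfl⟩
    have hdisjoint : (((hFfin t ht).toFinset : Finset _) : Set (Fin d → ℝ)).Pairwise
        (Function.onFun (AEDisjoint volume) (fun γ => (fun y => G.mul γ y) '' U)) := by
      intro γ hγ γ' hγ' hne
      rw [Finset.mem_coe, Set.Finite.mem_toFinset] at hγ hγ'
      exact hUdisj γ hγ.1 γ' hγ'.1 hne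
    have hnm : ∀ γ ∈ (hFfin t ht).toFinset,
        NullMeasurableSet ((fun y => G.mul γ y) '' U) volume := fun γ _ =>
      ((hUcomp.image (hmulcont γ)).isClosed.measurableSet).nullMeasurableSet
    have hvol_union : volume (⋃ γ ∈ (hFfin t ht).toFinset, (fun y => G.mul γ y) '' U)
        = ∑ γ ∈ (hFfin t ht).toFinset, volume ((fun y => G.mul γ y) '' U) :=
      measure_biUnion_finset₀ hdisjoint hnm
    have hsum : ∑ γ ∈ (hFfin t ht).toFinset, volume ((fun y => G.mul γ y) '' U)
        = ((F t).ncard : ℝ≥0∞) * volume U := by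
      rw [Finset.sum_congr rfl (fun γ hγ => htrans_vol γ (((hFfin t ht).mem_toFinset.1 hγ).1)),
        Finset.sum_const, nsmul_eq_mul, Set.ncard_eq_toFinset_card (F t) (hFfin t ht)]
    calc ((F t).ncard : ℝ≥0∞) * volume U
        = volume (⋃ γ ∈ (hFfin t ht).toFinset, (fun y => G.mul γ y) '' U) := by
          rw [hvol_union, hsum]
      _ ≤ volume (dil D.a t '' (S (r+ε))) := measure_mono hsubU
      _ = ENNReal.ofReal (t ^ L) * volume (S (r+ε)) := dil.vol_image ht _
  have claim2 : ∀ ε : ℝ, 0 < ε → ε < r → ∀ᶠ t : ℝ in atTop,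
      ENNReal.ofReal (t ^ L) * volume (S (r - ε)) ≤ ((F t).ncard : ℝ≥0∞) * volume U := by
    intro ε hε hεr
    obtain ⟨ρ, hρ, hkey⟩ :=
      keylemma G D N hNcont hN00 hNtri x (D.bulletInv x) hxz (r-ε) ε hε (hKx (r-ε))
    filter_upwards [hkey, smallW2 G D hd U hUcomp hinv0 ρ hρ, eventually_gt_atTop (0:ℝ)]
      with t hk hsw ht
    have hcover : dil D.a t '' (S (r-ε)) ⊆ ⋃ γ ∈ (hFfin t ht).toFinset,
        (fun y => G.mul γ y) '' U := by
      rintro p ⟨q, hq, rfl⟩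
      have hcov : dil D.a t q ∈ ⋃ γ ∈ Γ, (fun y => G.mul γ y) '' U := by
        rw [hUcover]; trivial
      simp only [Set.mem_iUnion] at hcov
      obtain ⟨γ, hγ, u, hu, hγu⟩ := hcov
      have hγeq : γ = G.mul (dil D.a t q) (G.inv u) := by
        rw [← hγu, G.mul_assoc', G.mul_inv', G.mul_zero']
      have h2 : γ = dil D.a t
          (dil D.a t⁻¹ (G.mul (dil D.a t q) (dil D.a t (dil D.a t⁻¹ (G.inv u))))) := by
        rw [dil.dil_dil ht, dil.dil_dil ht, ← hγeq]
      have h3 := hk q (dil D.a t⁻¹ (G.inv u)) hq (hsw u hu)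
      rw [sub_add_cancel] at h3
      have hγF : γ ∈ F t := ⟨hγ, _, h3, h2.symm⟩
      simp only [Set.mem_iUnion]
      exact ⟨γ, (hFfin t ht).mem_toFinset.2 hγF, u, hu, hγu⟩
    calc ENNReal.ofReal (t ^ L) * volume (S (r-ε))
        = volume (dil D.a t '' (S (r-ε))) := (dil.vol_image ht _).symm
      _ ≤ volume (⋃ γ ∈ (hFfin t ht).toFinset, (fun y => G.mul γ y) '' U) :=
          measure_mono hcover
      _ ≤ ∑ γ ∈ (hFfin t ht).toFinset, volume ((fun y => G.mul γ y) '' U) :=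
          measure_biUnion_finset_le _ _
      _ = ((F t).ncard : ℝ≥0∞) * volume U := by
          rw [Finset.sum_congr rfl
            (fun γ hγ => htrans_vol γ (((hFfin t ht).mem_toFinset.1 hγ).1)),
            Finset.sum_const, nsmul_eq_mul, Set.ncard_eq_toFinset_card (F t) (hFfin t ht)]
  -- final squeeze
  rw [Metric.tendsto_nhds]
  intro δ hδ
  obtain ⟨ε, hε, hεr, hup, hlo⟩ := hVchoice (δ/2) (by linarith)
  filter_upwards [claim1 ε hε, claim2 ε hε hεr, eventually_gt_atTop (0:ℝ)] with t h1 h2 ht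
  have htL : (0:ℝ) < t ^ L := Real.rpow_pos_of_pos ht _
  have hinvL : t ^ (-(∑ i, (β i)⁻¹)) = (t ^ L)⁻¹ := by
    rw [hsumeq, Real.rpow_neg ht.le]
  have h1' : ((F t).ncard : ℝ) * (volume U).toReal ≤ t ^ L * (volume (S (r+ε))).toReal := by
    have hfin1 : ((F t).ncard : ℝ≥0∞) * volume U ≠ ⊤ :=
      ENNReal.mul_ne_top (ENNReal.natCast_ne_top _) hUvol_fin
    have hfin2 : ENNReal.ofReal (t ^ L) * volume (S (r+ε)) ≠ ⊤ :=
      ENNReal.mul_ne_top ENNReal.ofReal_ne_top (hSfin _)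
    have h3 := (ENNReal.toReal_le_toReal hfin1 hfin2).2 h1
    rwa [ENNReal.toReal_mul, ENNReal.toReal_mul, ENNReal.toReal_natCast,
      ENNReal.toReal_ofReal htL.le] at h3
  have h2' : t ^ L * (volume (S (r-ε))).toReal ≤ ((F t).ncard : ℝ) * (volume U).toReal := by
    have hfin1 : ((F t).ncard : ℝ≥0∞) * volume U ≠ ⊤ :=
      ENNReal.mul_ne_top (ENNReal.natCast_ne_top _) hUvol_fin
    have hfin2 : ENNReal.ofReal (t ^ L) * volume (S (r-ε)) ≠ ⊤ :=
      ENNReal.mul_ne_top ENNReal.ofReal_ne_top (hSfin _)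
    have h3 := (ENNReal.toReal_le_toReal hfin2 hfin1).2 h2
    rwa [ENNReal.toReal_mul, ENNReal.toReal_mul, ENNReal.toReal_natCast,
      ENNReal.toReal_ofReal htL.le] at h3
  rw [hcard t ht, hinvL]
  have hm1 : (volume U).toReal * (t ^ L)⁻¹ * ((F t).ncard : ℝ)
      ≤ (volume (S (r+ε))).toReal := by
    rw [mul_comm ((volume U).toReal) ((t ^ L)⁻¹), mul_assoc, inv_mul_le_iff₀ htL,
      mul_comm ((volume U).toReal) _]
    exact h1'
  have hm2 : (volume (S (r-ε))).toReal
      ≤ (volume U).toReal * (t ^ L)⁻¹ * ((F t).ncard : ℝ) := by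
    rw [mul_comm ((volume U).toReal) ((t ^ L)⁻¹), mul_assoc, le_inv_mul_iff₀ htL,
      mul_comm ((volume U).toReal) _]
    exact h2'
  rw [Real.dist_eq, abs_lt]
  constructor
  · linarith
  · linarith
end
end
end
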